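/- arXiv:2406.15670 — 6 statements merged into one kernel-verified Lean document; each statement's English description precedes it below -/
import Mathlib

section
/- Let {χ_γ}_{γ∈Γ} be a localized frame in ℋ with constant G ≥ 1 and rate λ > 0, and let S be its frame operator. Then for every p ∈ ℕ there exist constants 0 < λ_p < λ and a_p > 0 such that |⟨χ_γ, S^{-p} χ_{γ'}⟩| ≤ a_p · exp(−λ_p · d(γ,γ')) for all γ, γ' ∈ Γ, where S^{-p} := (S^{-1})^p. -/
open Filter Topology

set_option maxHeartbeats 1600000 in
/-- If `{χ_γ}` is a localized frame with constant `G ≥ 1` and rate `λ > 0`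
on a countable metric space `Γ` with `m_ε < ∞` for all `ε > 0`, and `S` is its frame
operator, then for every `p ∈ ℕ` there are `0 < λ_p < λ` and `a_p > 0` such that
`|⟨χ_γ, S^{-p} χ_{γ'}⟩| ≤ a_p exp(-λ_p d(γ,γ'))` for all `γ, γ'`. -/
theorem stmt_0
    {H : Type*} [NormedAddCommGroup H] [InnerProductSpace ℂ H] [CompleteSpace H]
    [TopologicalSpace.SeparableSpace H]
    {Γ : Type*} [Countable Γ] [MetricSpace Γ]
    (hm : ∀ ε : ℝ, 0 < ε → ∃ C : ℝ, ∀ γ : Γ,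
      ∃ s : ℝ, s ≤ C ∧ HasSum (fun ξ : Γ => Real.exp (-ε * dist γ ξ)) s)
    (χ : Γ → H) (A B : ℝ) (hA : 0 < A) (hAB : A ≤ B)
    (hframe : ∀ ψ : H, ∃ s : ℝ,
      HasSum (fun γ : Γ => ‖(inner ℂ (χ γ) ψ : ℂ)‖ ^ 2) s ∧
        A * ‖ψ‖ ^ 2 ≤ s ∧ s ≤ B * ‖ψ‖ ^ 2)
    (S : H ≃L[ℂ] H)
    (hS : ∀ ψ : H, HasSum (fun γ : Γ => (inner ℂ (χ γ) ψ : ℂ) • χ γ) (S ψ))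
    (G lam : ℝ) (hG : 1 ≤ G) (hlam : 0 < lam)
    (hnorm : ∀ γ : Γ, ‖χ γ‖ = 1)
    (hloc : ∀ γ γ' : Γ, ‖(inner ℂ (χ γ) (χ γ') : ℂ)‖ ≤ G * Real.exp (-lam * dist γ γ')) :
    ∀ p : ℕ, 1 ≤ p → ∃ lamp ap : ℝ, 0 < lamp ∧ lamp < lam ∧ 0 < ap ∧
      ∀ γ γ' : Γ, ‖(inner ℂ (χ γ) (((S.symm : H →L[ℂ] H) ^ p) (χ γ')) : ℂ)‖
        ≤ ap * Real.exp (-lamp * dist γ γ') := by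
  intro p hp
  rcases isEmpty_or_nonempty Γ with hΓ | hΓ
  · exact ⟨lam / 2, 1, by linarith, by linarith, one_pos, fun γ _ => isEmptyElim γ⟩
  have hB : 0 < B := lt_of_lt_of_le hA hAB
  -- the summability constant at rate lam/2
  obtain ⟨m, hmspec⟩ := hm (lam / 2) (by linarith)
  choose sfun hsle hshas using hmspec
  have hm0 : 0 ≤ m := by
    obtain ⟨γ₀⟩ := hΓ
    have h1 : Real.exp (-(lam/2) * dist γ₀ γ₀) ≤ sfun γ₀ :=
      le_hasSum (hshas γ₀) γ₀ (fun ξ _ => (Real.exp_pos _).le)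
    have := Real.exp_pos (-(lam/2) * dist γ₀ γ₀)
    linarith [hsle γ₀]
  -- inner ℂ products of S-sums
  have hSip : ∀ φ ψ : H, HasSum
      (fun ξ : Γ => (inner ℂ (χ ξ) ψ : ℂ) * (inner ℂ φ (χ ξ) : ℂ)) (inner ℂ φ (S ψ) : ℂ) := by
    intro φ ψ
    have := (hS ψ).mapL (innerSL ℂ φ)
    simpa [inner_smul_right] using this
  -- the real quadratic form
  have hsq : ∀ ψ : H, HasSum (fun ξ : Γ => ‖(inner ℂ (χ ξ) ψ : ℂ)‖ ^ 2)
      ((inner ℂ ψ (S ψ) : ℂ).re) := by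
    intro ψ
    have h1 := (hSip ψ ψ).mapL Complex.reCLM
    have h2 : (fun ξ : Γ => Complex.reCLM ((inner ℂ (χ ξ) ψ : ℂ) * (inner ℂ ψ (χ ξ) : ℂ)))
        = fun ξ : Γ => ‖(inner ℂ (χ ξ) ψ : ℂ)‖ ^ 2 := by
      funext ξ
      have : (inner ℂ ψ (χ ξ) : ℂ) = starRingEnd ℂ (inner ℂ (χ ξ) ψ : ℂ) :=
        (inner_conj_symm _ _).symm
      rw [this, Complex.mul_conj]
      simp [Complex.normSq_eq_norm_sq, ← Complex.ofReal_pow]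
    rwa [h2] at h1
  have hlow : ∀ ψ : H, A * ‖ψ‖ ^ 2 ≤ (inner ℂ ψ (S ψ) : ℂ).re := by
    intro ψ
    obtain ⟨s, hs, h1, _⟩ := hframe ψ
    rwa [hs.unique (hsq ψ)] at h1
  -- upper bound for S
  have hSnorm : ∀ ψ : H, ‖S ψ‖ ≤ B * ‖ψ‖ := by
    intro ψ
    obtain ⟨s1, hs1, _, hs1b⟩ := hframe ψ
    obtain ⟨s2, hs2, _, hs2b⟩ := hframe (S ψ)
    have hre : HasSum (fun ξ : Γ =>
        Complex.reCLM ((inner ℂ (χ ξ) ψ : ℂ) * (inner ℂ (S ψ) (χ ξ) : ℂ)))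
        ((inner ℂ (S ψ) (S ψ) : ℂ).re) := (hSip (S ψ) ψ).mapL Complex.reCLM
    have hg : HasSum (fun ξ : Γ =>
        (B * ‖(inner ℂ (χ ξ) ψ : ℂ)‖ ^ 2 + ‖(inner ℂ (χ ξ) (S ψ) : ℂ)‖ ^ 2 / B) / 2)
        ((B * s1 + s2 / B) / 2) := ((hs1.mul_left B).add (hs2.div_const B)).div_const 2
    have hterm : ∀ ξ : Γ,
        Complex.reCLM ((inner ℂ (χ ξ) ψ : ℂ) * (inner ℂ (S ψ) (χ ξ) : ℂ))
          ≤ (B * ‖(inner ℂ (χ ξ) ψ : ℂ)‖ ^ 2 + ‖(inner ℂ (χ ξ) (S ψ) : ℂ)‖ ^ 2 / B) / 2 := by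
      intro ξ
      have h1 : Complex.reCLM ((inner ℂ (χ ξ) ψ : ℂ) * (inner ℂ (S ψ) (χ ξ) : ℂ))
          ≤ ‖(inner ℂ (χ ξ) ψ : ℂ)‖ * ‖(inner ℂ (χ ξ) (S ψ) : ℂ)‖ := by
        have h2 : Complex.reCLM ((inner ℂ (χ ξ) ψ : ℂ) * (inner ℂ (S ψ) (χ ξ) : ℂ))
            ≤ ‖(inner ℂ (χ ξ) ψ : ℂ) * (inner ℂ (S ψ) (χ ξ) : ℂ)‖ := by
          simpa using
            Complex.re_le_norm ((inner ℂ (χ ξ) ψ : ℂ) * (inner ℂ (S ψ) (χ ξ) : ℂ))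
        refine h2.trans ?_
        rw [norm_mul, norm_inner_symm (S ψ) (χ ξ)]
      refine h1.trans ?_
      set t := ‖(inner ℂ (χ ξ) ψ : ℂ)‖ with ht_def
      set v := ‖(inner ℂ (χ ξ) (S ψ) : ℂ)‖ with hv_def
      have hineq : (B * t ^ 2 + v ^ 2 / B) / 2 - t * v = (B * t - v) ^ 2 / (2 * B) := by
        field_simp
        ring
      have hge : (0:ℝ) ≤ (B * t - v) ^ 2 / (2 * B) :=
        div_nonneg (sq_nonneg _) (by positivity)
      linarith
    have key : ((inner ℂ (S ψ) (S ψ) : ℂ)).re ≤ (B * s1 + s2 / B) / 2 :=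
      hasSum_le hterm hre hg
    have hss : ((inner ℂ (S ψ) (S ψ) : ℂ)).re = ‖S ψ‖ ^ 2 := by
      simpa using (@inner_self_eq_norm_sq ℂ _ _ _ _ (S ψ))
    rw [hss] at key
    have h2 : s2 / B ≤ ‖S ψ‖ ^ 2 := by
      rw [div_le_iff₀ hB]
      nlinarith [hs2b]
    have h3 : ‖S ψ‖ ^ 2 ≤ (B * ‖ψ‖) ^ 2 := by
      nlinarith [key, h2, mul_le_mul_of_nonneg_left hs1b hB.le]
    exact le_of_pow_le_pow_left₀ two_ne_zero (by positivity) h3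
  have hSlow : ∀ ψ : H, A * ‖ψ‖ ≤ ‖S ψ‖ := by
    intro ψ
    rcases eq_or_ne ψ 0 with h | h
    · simp [h]
    have h1 := hlow ψ
    have h2 : ((inner ℂ ψ (S ψ) : ℂ)).re ≤ ‖(inner ℂ ψ (S ψ) : ℂ)‖ := by
      simpa using Complex.re_le_norm (inner ℂ ψ (S ψ) : ℂ)
    have h3 : ‖(inner ℂ ψ (S ψ) : ℂ)‖ ≤ ‖ψ‖ * ‖S ψ‖ := norm_inner_le_norm _ _
    have hψ : 0 < ‖ψ‖ := norm_pos_iff.mpr h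
    nlinarith
  have hSinv : ∀ x : H, ‖S.symm x‖ ≤ A⁻¹ * ‖x‖ := by
    intro x
    have := hSlow (S.symm x)
    rw [S.apply_symm_apply] at this
    rw [inv_mul_eq_div, le_div_iff₀ hA]
    linarith
  -- the operator T
  set c : ℝ := A / B ^ 2 with hc_def
  have hc : 0 < c := by positivity
  set T : H →L[ℂ] H := 1 - (c : ℂ) • (S : H →L[ℂ] H) with hT_def
  have hTapp : ∀ ψ : H, T ψ = ψ - (c : ℂ) • S ψ := by
    intro ψ; simp [hT_def]
  set rr : ℝ := Real.sqrt (1 - (A / B) ^ 2) with hrr_def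
  have hAB1 : (A / B) ^ 2 ≤ 1 := by
    have : A / B ≤ 1 := (div_le_one hB).mpr hAB
    nlinarith [div_nonneg hA.le hB.le]
  have hrr0 : 0 ≤ rr := Real.sqrt_nonneg _
  have hrrsq : rr ^ 2 = 1 - (A / B) ^ 2 := Real.sq_sqrt (by linarith)
  have hrr1 : rr < 1 := by nlinarith [div_pos hA hB]
  set r0 : ℝ := max rr 2⁻¹ with hr0_def
  have hr0pos : (0:ℝ) < r0 := lt_max_of_lt_right (by norm_num)
  have hr01 : r0 < 1 := max_lt hrr1 (by norm_num)
  have hT : ∀ ψ : H, ‖T ψ‖ ≤ r0 * ‖ψ‖ := by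
    intro ψ
    have hexp : ‖T ψ‖ ^ 2 = ‖ψ‖ ^ 2 - 2 * (c * (inner ℂ ψ (S ψ) : ℂ).re) + c ^ 2 * ‖S ψ‖ ^ 2 := by
      rw [hTapp, @norm_sub_sq ℂ, inner_smul_right, norm_smul]
      have h1 : RCLike.re ((c : ℂ) * (inner ℂ ψ (S ψ) : ℂ)) = c * (inner ℂ ψ (S ψ) : ℂ).re := by
        simp [Complex.mul_re]
      have h2 : ‖(c : ℂ)‖ = c := by
        rw [Complex.norm_real, Real.norm_eq_abs, abs_of_pos hc]
      rw [h1, h2]; ring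
    have h1 := hlow ψ
    have h2 := hSnorm ψ
    have h2' : ‖S ψ‖ ^ 2 ≤ B ^ 2 * ‖ψ‖ ^ 2 := by nlinarith [norm_nonneg (S ψ), norm_nonneg ψ]
    have hcB : c * B ^ 2 = A := by rw [hc_def]; field_simp
    have hAB2 : (A / B) ^ 2 * B ^ 2 = A ^ 2 := by field_simp
    have hsqle : ‖T ψ‖ ^ 2 ≤ (rr * ‖ψ‖) ^ 2 := by
      rw [hexp]
      have e1 : (rr * ‖ψ‖) ^ 2 = ‖ψ‖ ^ 2 - A * c * ‖ψ‖ ^ 2 := by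
        rw [mul_pow, hrrsq, hc_def]
        field_simp
      have e2 : c ^ 2 * ‖S ψ‖ ^ 2 ≤ A * c * ‖ψ‖ ^ 2 := by
        have h := mul_le_mul_of_nonneg_left h2' (sq_nonneg c)
        have he : c ^ 2 * (B ^ 2 * ‖ψ‖ ^ 2) = A * c * ‖ψ‖ ^ 2 := by
          rw [← hcB]; ring
        linarith
      have e3 : A * c * ‖ψ‖ ^ 2 ≤ c * (inner ℂ ψ (S ψ) : ℂ).re := by
        have h := mul_le_mul_of_nonneg_left h1 hc.le
        linarith
      linarith
    have : ‖T ψ‖ ≤ rr * ‖ψ‖ := by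
      have h0 : (0:ℝ) ≤ rr * ‖ψ‖ := mul_nonneg hrr0 (norm_nonneg ψ)
      nlinarith [norm_nonneg (T ψ)]
    exact this.trans (mul_le_mul_of_nonneg_right (le_max_left _ _) (norm_nonneg ψ))
  have hTop : ‖T‖ ≤ r0 := T.opNorm_le_bound hr0pos.le hT
  have hTlt : ‖T‖ < 1 := lt_of_le_of_lt hTop hr01
  have hTpow : ∀ (n : ℕ) (ψ : H), ‖(T ^ n) ψ‖ ≤ r0 ^ n * ‖ψ‖ := by
    intro n
    induction n with
    | zero => intro ψ; simp
    | succ n ih =>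
      intro ψ
      have h1 : (T ^ (n + 1)) ψ = (T ^ n) (T ψ) := by
        rw [pow_succ]; rfl
      rw [h1]
      calc ‖(T ^ n) (T ψ)‖ ≤ r0 ^ n * ‖T ψ‖ := ih (T ψ)
        _ ≤ r0 ^ n * (r0 * ‖ψ‖) :=
            mul_le_mul_of_nonneg_left (hT ψ) (pow_nonneg hr0pos.le n)
        _ = r0 ^ (n + 1) * ‖ψ‖ := by ring
  -- Neumann series
  have hsummable : Summable (fun n : ℕ => T ^ n) := summable_geometric_of_norm_lt_one hTlt
  set u : H →L[ℂ] H := ∑' n : ℕ, T ^ n with hu_def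
  have hgeo : u * (1 - T) = 1 := geom_series_mul_neg T hTlt
  have hux : ∀ x : H, HasSum (fun n : ℕ => (T ^ n) x) (u x) := by
    intro x
    have := hsummable.hasSum.mapL (ContinuousLinearMap.apply ℂ H x)
    simpa using this
  have hrep : ∀ x : H, S.symm x = (c : ℂ) • u x := by
    intro x
    have h1 : (u * (1 - T)) (S.symm x) = S.symm x := by rw [hgeo]; rfl
    have h2 : (1 - T) (S.symm x) = (c : ℂ) • x := by
      have : (1 - T) (S.symm x) = S.symm x - T (S.symm x) := rfl
      rw [this, hTapp]
      simp
    rw [ContinuousLinearMap.mul_apply, h2, map_smul] at h1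
    exact h1.symm
  -- constant K
  set K : ℝ := 1 + c * G * m with hK_def
  have hK1 : 1 ≤ K := by nlinarith [mul_nonneg (mul_nonneg hc.le (by linarith : (0:ℝ) ≤ G)) hm0]
  have hK0 : 0 < K := by linarith
  -- triangle estimate
  have tri : ∀ (η : ℝ), 0 < η → η ≤ lam / 2 → ∀ γ ξ γ' : Γ,
      Real.exp (-lam * dist γ ξ) * Real.exp (-η * dist ξ γ')
        ≤ Real.exp (-η * dist γ γ') * Real.exp (-(lam / 2) * dist γ ξ) := by
    intro η hη1 hη2 γ ξ γ'
    rw [← Real.exp_add, ← Real.exp_add, Real.exp_le_exp]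
    have h1 := dist_triangle γ ξ γ'
    have h2 := dist_nonneg (x := γ) (y := ξ)
    nlinarith
  -- Lemma A: coefficient decay propagates through powers of T
  have lemA : ∀ (ψ : H) (Cc η : ℝ) (γ' : Γ), 0 ≤ Cc → 0 < η → η ≤ lam / 2 →
      (∀ ξ : Γ, ‖(inner ℂ (χ ξ) ψ : ℂ)‖ ≤ Cc * Real.exp (-η * dist ξ γ')) →
      ∀ (n : ℕ) (γ : Γ), ‖(inner ℂ (χ γ) ((T ^ n) ψ) : ℂ)‖
        ≤ Cc * K ^ n * Real.exp (-η * dist γ γ') := by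
    intro ψ Cc η γ' hC hη1 hη2 hcoef n
    induction n with
    | zero => intro γ; simpa using hcoef γ
    | succ n ih =>
      intro γ
      have hφ : (T ^ (n + 1)) ψ = T ((T ^ n) ψ) := by
        rw [pow_succ']; rfl
      set φ : H := (T ^ n) ψ with hφ_def
      have hinner : (inner ℂ (χ γ) (T φ) : ℂ)
          = (inner ℂ (χ γ) φ : ℂ) - (c : ℂ) * (inner ℂ (χ γ) (S φ) : ℂ) := by
        rw [hTapp, inner_sub_right, inner_smul_right]
      have hbound : ∀ ξ : Γ, ‖(inner ℂ (χ ξ) φ : ℂ) * (inner ℂ (χ γ) (χ ξ) : ℂ)‖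
          ≤ (Cc * K ^ n * G * Real.exp (-η * dist γ γ')) * Real.exp (-(lam/2) * dist γ ξ) := by
        intro ξ
        rw [norm_mul]
        have h1 : ‖(inner ℂ (χ ξ) φ : ℂ)‖ * ‖(inner ℂ (χ γ) (χ ξ) : ℂ)‖
            ≤ (Cc * K ^ n * Real.exp (-η * dist ξ γ')) * (G * Real.exp (-lam * dist γ ξ)) :=
          mul_le_mul (ih ξ) (hloc γ ξ) (norm_nonneg _)
            (by positivity)
        refine h1.trans ?_
        have h2 := tri η hη1 hη2 γ ξ γ'
        calc (Cc * K ^ n * Real.exp (-η * dist ξ γ')) * (G * Real.exp (-lam * dist γ ξ))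
            = (Cc * K ^ n * G) * (Real.exp (-lam * dist γ ξ) * Real.exp (-η * dist ξ γ')) := by
              ring
          _ ≤ (Cc * K ^ n * G) *
              (Real.exp (-η * dist γ γ') * Real.exp (-(lam/2) * dist γ ξ)) := by
              refine mul_le_mul_of_nonneg_left h2 (by positivity)
          _ = (Cc * K ^ n * G * Real.exp (-η * dist γ γ')) * Real.exp (-(lam/2) * dist γ ξ) := by
              ring
      have hgs : HasSum
          (fun ξ : Γ => (Cc * K ^ n * G * Real.exp (-η * dist γ γ'))
            * Real.exp (-(lam/2) * dist γ ξ))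
          ((Cc * K ^ n * G * Real.exp (-η * dist γ γ')) * sfun γ) := (hshas γ).mul_left _
      have hSb : ‖(inner ℂ (χ γ) (S φ) : ℂ)‖
          ≤ (Cc * K ^ n * G * Real.exp (-η * dist γ γ')) * m := by
        have h := tsum_of_norm_bounded hgs hbound
        rw [(hSip (χ γ) φ).tsum_eq] at h
        refine h.trans (mul_le_mul_of_nonneg_left (hsle γ) (by positivity))
      rw [hφ, hinner]
      calc ‖(inner ℂ (χ γ) φ : ℂ) - (c : ℂ) * (inner ℂ (χ γ) (S φ) : ℂ)‖
          ≤ ‖(inner ℂ (χ γ) φ : ℂ)‖ + ‖(c : ℂ)‖ * ‖(inner ℂ (χ γ) (S φ) : ℂ)‖ := by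
            refine (norm_sub_le _ _).trans ?_
            rw [norm_mul]
        _ ≤ Cc * K ^ n * Real.exp (-η * dist γ γ')
            + c * ((Cc * K ^ n * G * Real.exp (-η * dist γ γ')) * m) := by
            have hcn : ‖(c : ℂ)‖ = c := by rw [Complex.norm_real, Real.norm_eq_abs, abs_of_pos hc]
            rw [hcn]
            exact add_le_add (ih γ) (mul_le_mul_of_nonneg_left hSb hc.le)
        _ = Cc * K ^ (n + 1) * Real.exp (-η * dist γ γ') := by
            rw [hK_def]; ring
  -- interpolation constants
  set rho : ℝ := (1 + r0) / 2 with hrho_def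
  have hrho0 : 0 < rho := by rw [hrho_def]; linarith
  have hrho1 : rho < 1 := by rw [hrho_def]; linarith
  have hrho_gt : r0 < rho := by rw [hrho_def]; linarith
  have hKr : 1 < K / r0 := by
    rw [lt_div_iff₀ hr0pos]; nlinarith
  have hrhor : 1 < rho / r0 := by
    rw [lt_div_iff₀ hr0pos]; linarith
  have hlogK : 0 < Real.log (K / r0) := Real.log_pos hKr
  have hlogrho : 0 < Real.log (rho / r0) := Real.log_pos hrhor
  set θ : ℝ := min 2⁻¹ (Real.log (rho / r0) / Real.log (K / r0)) with hθ_def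
  have hθ0 : 0 < θ := lt_min (by norm_num) (div_pos hlogrho hlogK)
  have hθle1 : θ ≤ 1 := le_trans (min_le_left _ _) (by norm_num)
  have hinterp : r0 ^ (1 - θ) * K ^ θ ≤ rho := by
    have h1 : r0 ^ (1 - θ) * K ^ θ = r0 * (K / r0) ^ θ := by
      rw [Real.div_rpow hK0.le hr0pos.le, Real.rpow_sub hr0pos, Real.rpow_one]
      have : (r0 : ℝ) ^ θ ≠ 0 := (Real.rpow_pos_of_pos hr0pos θ).ne'
      field_simp
    have h2 : (K / r0) ^ θ ≤ (K / r0) ^ (Real.log (rho / r0) / Real.log (K / r0)) :=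
      Real.rpow_le_rpow_of_exponent_le hKr.le (min_le_right _ _)
    have h3 : (K / r0) ^ (Real.log (rho / r0) / Real.log (K / r0)) = rho / r0 := by
      rw [Real.rpow_def_of_pos (by positivity), mul_comm,
        div_mul_cancel₀ _ hlogK.ne', Real.exp_log (by positivity)]
    rw [h1]
    calc r0 * (K / r0) ^ θ ≤ r0 * (rho / r0) :=
          mul_le_mul_of_nonneg_left (h2.trans_eq h3) hr0pos.le
      _ = rho := by field_simp
  -- interpolation of two bounds
  have hminlem : ∀ a b x : ℝ, 0 ≤ a → 0 ≤ b → 0 ≤ x → x ≤ a → x ≤ b →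
      x ≤ a ^ (1 - θ) * b ^ θ := by
    intro a b x ha hb hx hxa hxb
    rcases eq_or_lt_of_le hx with h | h
    · rw [← h]
      positivity
    · have hxx : x = x ^ (1 - θ) * x ^ θ := by
        rw [← Real.rpow_add h, sub_add_cancel, Real.rpow_one]
      rw [hxx]
      exact mul_le_mul (Real.rpow_le_rpow hx hxa (by linarith))
        (Real.rpow_le_rpow hx hxb hθ0.le) (Real.rpow_nonneg hx θ)
        (Real.rpow_nonneg ha _)
  -- Lemma B: one application of S⁻¹
  have lemB : ∀ (ψ : H) (Cc D η : ℝ) (γ' : Γ), 0 ≤ Cc → 0 ≤ D → 0 < η → η ≤ lam / 2 →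
      ‖ψ‖ ≤ D → (∀ ξ : Γ, ‖(inner ℂ (χ ξ) ψ : ℂ)‖ ≤ Cc * Real.exp (-η * dist ξ γ')) →
      ∀ γ : Γ, ‖(inner ℂ (χ γ) (S.symm ψ) : ℂ)‖
        ≤ (c * (1 - rho)⁻¹ * (D ^ (1 - θ) * Cc ^ θ)) * Real.exp (-(θ * η) * dist γ γ') := by
    intro ψ Cc D η γ' hC hD hη1 hη2 hψD hcoef γ
    have hAterms := lemA ψ Cc η γ' hC hη1 hη2 hcoef
    have hn : ∀ n : ℕ, ‖(inner ℂ (χ γ) ((T ^ n) ψ) : ℂ)‖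
        ≤ (D ^ (1 - θ) * Cc ^ θ * Real.exp (-(θ * η) * dist γ γ')) * rho ^ n := by
      intro n
      have ha : ‖(inner ℂ (χ γ) ((T ^ n) ψ) : ℂ)‖ ≤ r0 ^ n * D := by
        calc ‖(inner ℂ (χ γ) ((T ^ n) ψ) : ℂ)‖ ≤ ‖χ γ‖ * ‖(T ^ n) ψ‖ := norm_inner_le_norm _ _
          _ = ‖(T ^ n) ψ‖ := by rw [hnorm γ, one_mul]
          _ ≤ r0 ^ n * ‖ψ‖ := hTpow n ψ
          _ ≤ r0 ^ n * D := mul_le_mul_of_nonneg_left hψD (pow_nonneg hr0pos.le n)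
      have hb := hAterms n γ
      have h := hminlem (r0 ^ n * D) (Cc * K ^ n * Real.exp (-η * dist γ γ')) _
        (by positivity) (by positivity) (norm_nonneg _) ha hb
      refine h.trans ?_
      have e1 : ((r0 : ℝ) ^ n) ^ (1 - θ) = (r0 ^ (1 - θ)) ^ n := by
        rw [← Real.rpow_natCast r0 n, ← Real.rpow_mul hr0pos.le, mul_comm,
          Real.rpow_mul hr0pos.le, Real.rpow_natCast]
      have e2 : ((K : ℝ) ^ n) ^ θ = (K ^ θ) ^ n := by
        rw [← Real.rpow_natCast K n, ← Real.rpow_mul hK0.le, mul_comm,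
          Real.rpow_mul hK0.le, Real.rpow_natCast]
      have e3 : (Real.exp (-η * dist γ γ')) ^ θ = Real.exp (-(θ * η) * dist γ γ') := by
        rw [Real.rpow_def_of_pos (Real.exp_pos _), Real.log_exp]
        ring_nf
      calc (r0 ^ n * D) ^ (1 - θ) * (Cc * K ^ n * Real.exp (-η * dist γ γ')) ^ θ
          = ((r0 ^ n) ^ (1 - θ) * D ^ (1 - θ)) *
            (Cc ^ θ * (K ^ n) ^ θ * (Real.exp (-η * dist γ γ')) ^ θ) := by
            rw [Real.mul_rpow (by positivity) hD,
              Real.mul_rpow (by positivity) (Real.exp_pos _).le,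
              Real.mul_rpow hC (by positivity)]
        _ = (D ^ (1 - θ) * Cc ^ θ * Real.exp (-(θ * η) * dist γ γ'))
            * ((r0 ^ (1 - θ)) ^ n * (K ^ θ) ^ n) := by
            rw [e1, e2, e3]; ring
        _ = (D ^ (1 - θ) * Cc ^ θ * Real.exp (-(θ * η) * dist γ γ'))
            * (r0 ^ (1 - θ) * K ^ θ) ^ n := by rw [mul_pow]
        _ ≤ (D ^ (1 - θ) * Cc ^ θ * Real.exp (-(θ * η) * dist γ γ')) * rho ^ n := by
            refine mul_le_mul_of_nonneg_left ?_ (by positivity)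
            exact pow_le_pow_left₀ (by positivity) hinterp n
    have hSsum : HasSum (fun n : ℕ => (inner ℂ (χ γ) ((T ^ n) ψ) : ℂ))
        (inner ℂ (χ γ) (u ψ) : ℂ) := by
      have := (hux ψ).mapL (innerSL ℂ (χ γ))
      simpa using this
    have hgsum : HasSum
        (fun n : ℕ => (D ^ (1 - θ) * Cc ^ θ * Real.exp (-(θ * η) * dist γ γ')) * rho ^ n)
        ((D ^ (1 - θ) * Cc ^ θ * Real.exp (-(θ * η) * dist γ γ')) * (1 - rho)⁻¹) :=
      (hasSum_geometric_of_lt_one hrho0.le hrho1).mul_left _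
    have h := tsum_of_norm_bounded hgsum hn
    rw [hSsum.tsum_eq] at h
    have hrw : (inner ℂ (χ γ) (S.symm ψ) : ℂ) = (c : ℂ) * (inner ℂ (χ γ) (u ψ) : ℂ) := by
      rw [hrep ψ, inner_smul_right]
    rw [hrw, norm_mul]
    have hcn : ‖(c : ℂ)‖ = c := by rw [Complex.norm_real, Real.norm_eq_abs, abs_of_pos hc]
    rw [hcn]
    calc c * ‖(inner ℂ (χ γ) (u ψ) : ℂ)‖
        ≤ c * ((D ^ (1 - θ) * Cc ^ θ * Real.exp (-(θ * η) * dist γ γ')) * (1 - rho)⁻¹) :=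
          mul_le_mul_of_nonneg_left h hc.le
      _ = (c * (1 - rho)⁻¹ * (D ^ (1 - θ) * Cc ^ θ)) * Real.exp (-(θ * η) * dist γ γ') := by
          ring
  -- norm bound for powers of S.symm
  have hpowb : ∀ (q : ℕ) (x : H), ‖((S.symm : H →L[ℂ] H) ^ q) x‖ ≤ (A⁻¹) ^ q * ‖x‖ := by
    intro q
    induction q with
    | zero => intro x; simp
    | succ q ih =>
      intro x
      have h1 : ((S.symm : H →L[ℂ] H) ^ (q + 1)) x
          = S.symm (((S.symm : H →L[ℂ] H) ^ q) x) := by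
        rw [pow_succ']; rfl
      rw [h1]
      calc ‖S.symm (((S.symm : H →L[ℂ] H) ^ q) x)‖
          ≤ A⁻¹ * ‖((S.symm : H →L[ℂ] H) ^ q) x‖ := hSinv _
        _ ≤ A⁻¹ * ((A⁻¹) ^ q * ‖x‖) :=
            mul_le_mul_of_nonneg_left (ih x) (by positivity)
        _ = (A⁻¹) ^ (q + 1) * ‖x‖ := by ring
  -- main induction
  have main : ∀ q : ℕ, ∃ Cq : ℝ, 0 < Cq ∧ ∀ γ γ' : Γ,
      ‖(inner ℂ (χ γ) (((S.symm : H →L[ℂ] H) ^ q) (χ γ')) : ℂ)‖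
        ≤ Cq * Real.exp (-(θ ^ q * (lam / 2)) * dist γ γ') := by
    intro q
    induction q with
    | zero =>
      refine ⟨G, by linarith, fun γ γ' => ?_⟩
      simp only [pow_zero, ContinuousLinearMap.one_apply]
      refine (hloc γ γ').trans ?_
      refine mul_le_mul_of_nonneg_left (Real.exp_le_exp.mpr ?_) (by linarith)
      have := dist_nonneg (x := γ) (y := γ')
      nlinarith
    | succ q ih =>
      obtain ⟨Cq, hCq, hb⟩ := ih
      have hθq0 : 0 < θ ^ q * (lam / 2) := by positivity
      have hθq1 : θ ^ q * (lam / 2) ≤ lam / 2 := by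
        have h1 : θ ^ q ≤ 1 := pow_le_one₀ hθ0.le hθle1
        nlinarith
      refine ⟨c * (1 - rho)⁻¹ * (((A⁻¹) ^ q) ^ (1 - θ) * Cq ^ θ), ?_, fun γ γ' => ?_⟩
      · have h1 : (0:ℝ) < ((A⁻¹ : ℝ) ^ q) ^ (1 - θ) := Real.rpow_pos_of_pos (by positivity) _
        have h2 : (0:ℝ) < Cq ^ θ := Real.rpow_pos_of_pos hCq _
        have h3 : (0:ℝ) < (1 - rho)⁻¹ := by
          rw [inv_pos]; linarith
        positivity
      · have happ : ((S.symm : H →L[ℂ] H) ^ (q + 1)) (χ γ')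
            = S.symm (((S.symm : H →L[ℂ] H) ^ q) (χ γ')) := by
          rw [pow_succ']; rfl
        rw [happ]
        have hψD : ‖((S.symm : H →L[ℂ] H) ^ q) (χ γ')‖ ≤ (A⁻¹) ^ q := by
          have := hpowb q (χ γ')
          rwa [hnorm γ', mul_one] at this
        have := lemB (((S.symm : H →L[ℂ] H) ^ q) (χ γ')) Cq ((A⁻¹) ^ q)
          (θ ^ q * (lam / 2)) γ' hCq.le (by positivity) hθq0 hθq1 hψD
          (fun ξ => hb ξ γ') γ
        refine this.trans (le_of_eq ?_)
        have : θ * (θ ^ q * (lam / 2)) = θ ^ (q + 1) * (lam / 2) := by ring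
        rw [this]
  obtain ⟨Cp, hCp, hbp⟩ := main p
  refine ⟨θ ^ p * (lam / 2), Cp, by positivity, ?_, hCp, hbp⟩
  have h1 : θ ^ p ≤ 1 := pow_le_one₀ hθ0.le hθle1
  nlinarith [pow_pos hθ0 p]
end

section
/- Let {χ_γ}_{γ∈Γ} be a localized frame in ℋ with constant G ≥ 1 and rate λ > 0 and frame operator S, and let a₂ > 0 and 0 < λ₂ < λ be constants such that |⟨χ_γ, S^{-2} χ_{γ'}⟩| ≤ a₂·exp(−λ₂·d(γ,γ')) for all γ,γ'. Let H be a self-adjoint operator on ℋ with dense domain 𝒟(H) such that (i) χ_γ ∈ 𝒟(H) and H χ_γ = E(γ)·χ_γ with E(γ) ∈ ℝ for every γ ∈ Γ, and (ii) S·𝒟(H) ⊆ 𝒟(H). Then S^{-1}χ_{γ'} ∈ 𝒟(H) for all γ', and for all γ,γ' ∈ Γ: ⟨χ_γ, S^{-1} H S^{-1} χ_{γ'}⟩ = 0 whenever E(γ) ≠ E(γ'), while |⟨χ_γ, S^{-1} H S^{-1} χ_{γ'}⟩| ≤ a₂·|E(γ)|·exp(−λ₂·d(γ,γ')) whenever E(γ)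 = E(γ'). -/
open Filter Topology
open scoped ComplexConjugate

local notation "⟪" x ", " y "⟫" => @inner ℂ _ _ x y

/-- The closed subspace of "weak eigenvectors" of `Hop` with eigenvalue `e`. -/
def weakEigen {H : Type*} [NormedAddCommGroup H] [InnerProductSpace ℂ H]
    (Hop : H →ₗ.[ℂ] H) (e : ℝ) : Submodule ℂ H where
  carrier := {x | ∀ ψ : Hop.domain, ⟪Hop ψ - (e : ℂ) • (ψ : H), x⟫ = 0}
  add_mem' := by intro a b ha hb ψ; rw [inner_add_right, ha ψ, hb ψ, add_zero]
  zero_mem' := by intro ψ; exact inner_zero_right _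
  smul_mem' := by intro c a ha ψ; rw [inner_smul_right, ha ψ, mul_zero]

lemma weakEigen_mem_iff {H : Type*} [NormedAddCommGroup H] [InnerProductSpace ℂ H]
    (Hop : H →ₗ.[ℂ] H) (e : ℝ) (x : H) :
    x ∈ weakEigen Hop e ↔ ∀ ψ : Hop.domain, ⟪Hop ψ - (e : ℂ) • (ψ : H), x⟫ = 0 :=
  Iff.rfl

lemma weakEigen_closed {H : Type*} [NormedAddCommGroup H] [InnerProductSpace ℂ H]
    (Hop : H →ₗ.[ℂ] H) (e : ℝ) : IsClosed ((weakEigen Hop e : Submodule ℂ H) : Set H) := by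
  have h0 : ((weakEigen Hop e : Submodule ℂ H) : Set H)
      = {x | ∀ ψ : Hop.domain, ⟪Hop ψ - (e : ℂ) • (ψ : H), x⟫ = 0} := rfl
  rw [h0, Set.setOf_forall]
  exact isClosed_iInter fun ψ =>
    isClosed_eq (Continuous.inner continuous_const continuous_id) continuous_const

/-- Let `{χ_γ}` be a localized frame with frame operator `S`, and assume
`|⟨χ_γ, S^{-2} χ_{γ'}⟩| ≤ a₂ exp(-λ₂ d(γ,γ'))`.  Let `H` be a self-adjoint operator with
dense domain such that each `χ_γ` is an eigenvector, `H χ_γ = E(γ) χ_γ`, and the domain is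
invariant under `S`.  Then `S^{-1}χ_{γ'}` lies in the domain, the matrix elements
`⟨χ_γ, S^{-1} H S^{-1} χ_{γ'}⟩` vanish when `E(γ) ≠ E(γ')`, and are bounded by
`a₂ |E(γ)| exp(-λ₂ d(γ,γ'))` when `E(γ) = E(γ')`. -/
theorem stmt_1
    {H : Type*} [NormedAddCommGroup H] [InnerProductSpace ℂ H] [CompleteSpace H]
    [TopologicalSpace.SeparableSpace H]
    {Γ : Type*} [Countable Γ] [MetricSpace Γ]
    (hm : ∀ ε : ℝ, 0 < ε → ∃ C : ℝ, ∀ γ : Γ,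
      ∃ s : ℝ, s ≤ C ∧ HasSum (fun ξ : Γ => Real.exp (-ε * dist γ ξ)) s)
    (χ : Γ → H) (A B : ℝ) (hA : 0 < A) (hAB : A ≤ B)
    (hframe : ∀ ψ : H, ∃ s : ℝ,
      HasSum (fun γ : Γ => ‖(inner ℂ (χ γ) ψ : ℂ)‖ ^ 2) s ∧
        A * ‖ψ‖ ^ 2 ≤ s ∧ s ≤ B * ‖ψ‖ ^ 2)
    (S : H ≃L[ℂ] H)
    (hS : ∀ ψ : H, HasSum (fun γ : Γ => (inner ℂ (χ γ) ψ : ℂ) • χ γ) (S ψ))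
    (G lam : ℝ) (hG : 1 ≤ G) (hlam : 0 < lam)
    (hnorm : ∀ γ : Γ, ‖χ γ‖ = 1)
    (hloc : ∀ γ γ' : Γ, ‖(inner ℂ (χ γ) (χ γ') : ℂ)‖ ≤ G * Real.exp (-lam * dist γ γ'))
    (a₂ lam₂ : ℝ) (ha₂ : 0 < a₂) (hlam₂ : 0 < lam₂) (hlam₂lam : lam₂ < lam)
    (hS2 : ∀ γ γ' : Γ, ‖(inner ℂ (χ γ) (((S.symm : H →L[ℂ] H) ^ 2) (χ γ')) : ℂ)‖
      ≤ a₂ * Real.exp (-lam₂ * dist γ γ'))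
    (Hop : H →ₗ.[ℂ] H) (hdense : Dense (Hop.domain : Set H))
    (hsa : IsSelfAdjoint Hop)
    (E : Γ → ℝ)
    (hmemχ : ∀ γ : Γ, χ γ ∈ Hop.domain)
    (heig : ∀ γ : Γ, Hop ⟨χ γ, hmemχ γ⟩ = (E γ : ℂ) • χ γ)
    (hSD : ∀ x : H, x ∈ Hop.domain → S x ∈ Hop.domain) :
    ∃ hdom : ∀ γ' : Γ, S.symm (χ γ') ∈ Hop.domain,
      ∀ γ γ' : Γ,
        (E γ ≠ E γ' →
          (inner ℂ (χ γ) (S.symm (Hop ⟨S.symm (χ γ'), hdom γ'⟩)) : ℂ) = 0) ∧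
        (E γ = E γ' →
          ‖(inner ℂ (χ γ) (S.symm (Hop ⟨S.symm (χ γ'), hdom γ'⟩)) : ℂ)‖
            ≤ a₂ * |E γ| * Real.exp (-lam₂ * dist γ γ')) := by
  -- transfer of the adjoint to `Hop` itself
  have hadj : Hop.adjoint = Hop := LinearPMap.isSelfAdjoint_def.mp hsa
  have happly : ∀ (z : H) (hz' : z ∈ Hop.adjoint.domain) (hz : z ∈ Hop.domain),
      Hop ⟨z, hz⟩ = Hop.adjoint ⟨z, hz'⟩ := by
    intro z hz' hz
    obtain ⟨w, hw⟩ : ∃ w, Hop.adjoint ⟨z, hz'⟩ = w := ⟨_, rfl⟩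
    rw [hw]
    have h1 : (z, w) ∈ Hop.adjoint.graph := by
      rw [← hw]; exact Hop.adjoint.mem_graph ⟨z, hz'⟩
    rw [hadj] at h1
    rw [LinearPMap.mem_graph_iff] at h1
    obtain ⟨y, hy1, hy2⟩ := h1
    have : (⟨z, hz⟩ : Hop.domain) = y := Subtype.ext hy1.symm
    rw [this, hy2]
  have hsymm : ∀ x y : Hop.domain, ⟪Hop x, (y : H)⟫ = ⟪(x : H), Hop y⟫ := by
    intro x y
    have hx' : (x : H) ∈ Hop.adjoint.domain := by rw [hadj]; exact x.2
    have := LinearPMap.adjoint_isFormalAdjoint hdense ⟨(x : H), hx'⟩ y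
    rwa [← happly (x : H) hx' x.2] at this
  have hkey : ∀ (z w : H), (∀ x : Hop.domain, ⟪w, (x : H)⟫ = ⟪z, Hop x⟫) →
      ∃ hz : z ∈ Hop.domain, Hop ⟨z, hz⟩ = w := by
    intro z w hw
    have hz' : z ∈ Hop.adjoint.domain :=
      LinearPMap.mem_adjoint_domain_of_exists z ⟨w, hw⟩
    have hval : Hop.adjoint ⟨z, hz'⟩ = w :=
      LinearPMap.adjoint_apply_eq hdense ⟨z, hz'⟩ fun x => hw x
    have hz : z ∈ Hop.domain := by rw [← hadj]; exact hz'
    exact ⟨hz, by rw [happly z hz' hz, hval]⟩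
  -- expansion of inner products against `S`
  have hinner_sum : ∀ y ψ : H, HasSum (fun γ : Γ => ⟪χ γ, ψ⟫ * ⟪y, χ γ⟫) ⟪y, S ψ⟫ := by
    intro y ψ
    have h := (innerSL ℂ y).hasSum (hS ψ)
    simpa only [innerSL_apply_apply, inner_smul_right] using h
  -- `S` is self-adjoint
  have Ssa : ∀ x y : H, ⟪S x, y⟫ = ⟪x, S y⟫ := by
    intro x y
    have h1 := hinner_sum y x
    have h2 : HasSum (fun γ : Γ => ⟪x, χ γ⟫ * ⟪χ γ, y⟫) (conj ⟪y, S x⟫) := by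
      have := Complex.hasSum_conj'.mpr h1
      simpa only [map_mul, inner_conj_symm] using this
    have h3 : HasSum (fun γ : Γ => ⟪x, χ γ⟫ * ⟪χ γ, y⟫) ⟪x, S y⟫ := by
      simpa only [mul_comm] using hinner_sum x y
    calc ⟪S x, y⟫ = conj ⟪y, S x⟫ := (inner_conj_symm _ _).symm
      _ = ⟪x, S y⟫ := h2.unique h3
  have Ssymm_sa : ∀ x y : H, ⟪S.symm x, y⟫ = ⟪x, S.symm y⟫ := by
    intro x y
    calc ⟪S.symm x, y⟫ = ⟪S.symm x, S (S.symm y)⟫ := by rw [S.apply_symm_apply]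
      _ = ⟪S (S.symm x), S.symm y⟫ := (Ssa _ _).symm
      _ = ⟪x, S.symm y⟫ := by rw [S.apply_symm_apply]
  -- coercivity
  have hcoer : ∀ x : H, ∃ s : ℝ, ⟪x, S x⟫ = (s : ℂ) ∧ A * ‖x‖ ^ 2 ≤ s := by
    intro x
    obtain ⟨s, hsum, hAs, _⟩ := hframe x
    refine ⟨s, ?_, hAs⟩
    have h1 := hinner_sum x x
    have hterm : ∀ γ : Γ, ⟪χ γ, x⟫ * ⟪x, χ γ⟫ = ((‖⟪χ γ, x⟫‖ ^ 2 : ℝ) : ℂ) := by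
      intro γ
      rw [← inner_conj_symm x (χ γ), Complex.mul_conj]
      norm_cast
      simp [Complex.normSq_eq_norm_sq]
    rw [funext hterm] at h1
    have h3 : HasSum (fun γ : Γ => ((‖⟪χ γ, x⟫‖ ^ 2 : ℝ) : ℂ)) ((s : ℝ) : ℂ) :=
      Complex.hasSum_ofReal.mpr hsum
    exact h1.unique h3
  have hlow : ∀ x : H, A * ‖x‖ ≤ ‖S x‖ := by
    intro x
    obtain ⟨s, hs, hAs⟩ := hcoer x
    have h1 : A * ‖x‖ ^ 2 ≤ ‖⟪x, S x⟫‖ := by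
      rw [hs, Complex.norm_real, Real.norm_eq_abs]
      exact le_trans hAs (le_abs_self s)
    have h2 : ‖⟪x, S x⟫‖ ≤ ‖x‖ * ‖S x‖ := norm_inner_le_norm x (S x)
    rcases eq_or_lt_of_le (norm_nonneg x) with h0 | h0
    · rw [← h0, mul_zero]; exact norm_nonneg _
    · nlinarith
  -- membership in `weakEigen` gives an actual eigenvector
  have hWmem : ∀ (e : ℝ) (x : H), x ∈ weakEigen Hop e →
      ∃ hx : x ∈ Hop.domain, Hop ⟨x, hx⟩ = (e : ℂ) • x := by
    intro e x hx
    apply hkey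
    intro ψ
    have h0 := hx ψ
    rw [inner_sub_left, sub_eq_zero] at h0
    calc ⟪(e : ℂ) • x, (ψ : H)⟫ = (e : ℂ) * ⟪x, (ψ : H)⟫ := by
          rw [inner_smul_left, Complex.conj_ofReal]
      _ = conj ((e : ℂ) * ⟪(ψ : H), x⟫) := by
          rw [map_mul, Complex.conj_ofReal, inner_conj_symm]
      _ = conj ⟪(e : ℂ) • (ψ : H), x⟫ := by rw [inner_smul_left, Complex.conj_ofReal]
      _ = conj ⟪Hop ψ, x⟫ := by rw [h0]
      _ = ⟪x, Hop ψ⟫ := inner_conj_symm _ _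
  have hmemW : ∀ (e : ℝ) (x : H) (hx : x ∈ Hop.domain),
      Hop ⟨x, hx⟩ = (e : ℂ) • x → x ∈ weakEigen Hop e := by
    intro e x hx hex
    rw [weakEigen_mem_iff]
    intro ψ
    rw [inner_sub_left, sub_eq_zero]
    calc ⟪Hop ψ, x⟫ = ⟪(ψ : H), Hop ⟨x, hx⟩⟫ := hsymm ψ ⟨x, hx⟩
      _ = (e : ℂ) * ⟪(ψ : H), x⟫ := by rw [hex, inner_smul_right]
      _ = ⟪(e : ℂ) • (ψ : H), x⟫ := by rw [inner_smul_left, Complex.conj_ofReal]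
  -- `S` preserves the weak eigenspaces
  have hSW : ∀ (e : ℝ) (x : H), x ∈ weakEigen Hop e → S x ∈ weakEigen Hop e := by
    intro e x hx
    obtain ⟨hxd, hxe⟩ := hWmem e x hx
    rw [weakEigen_mem_iff]
    intro ψ
    have hterm : ∀ γ : Γ, ⟪χ γ, x⟫ * ⟪Hop ψ - (e : ℂ) • (ψ : H), χ γ⟫ = 0 := by
      intro γ
      have hEc : ((E γ : ℝ) : ℂ) * ⟪χ γ, x⟫ = (e : ℂ) * ⟪χ γ, x⟫ := by
        calc ((E γ : ℝ) : ℂ) * ⟪χ γ, x⟫ = ⟪((E γ : ℝ) : ℂ) • χ γ, x⟫ := by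
              rw [inner_smul_left, Complex.conj_ofReal]
          _ = ⟪Hop ⟨χ γ, hmemχ γ⟩, x⟫ := by rw [heig γ]
          _ = ⟪χ γ, Hop ⟨x, hxd⟩⟫ := hsymm ⟨χ γ, hmemχ γ⟩ ⟨x, hxd⟩
          _ = (e : ℂ) * ⟪χ γ, x⟫ := by rw [hxe, inner_smul_right]
      have hHψ : ⟪Hop ψ, χ γ⟫ = ((E γ : ℝ) : ℂ) * ⟪(ψ : H), χ γ⟫ := by
        calc ⟪Hop ψ, χ γ⟫ = ⟪(ψ : H), Hop ⟨χ γ, hmemχ γ⟩⟫ := hsymm ψ ⟨χ γ, hmemχ γ⟩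
          _ = ((E γ : ℝ) : ℂ) * ⟪(ψ : H), χ γ⟫ := by rw [heig γ, inner_smul_right]
      have hv : ⟪Hop ψ - (e : ℂ) • (ψ : H), χ γ⟫
          = (((E γ : ℝ) : ℂ) - e) * ⟪(ψ : H), χ γ⟫ := by
        rw [inner_sub_left, inner_smul_left, Complex.conj_ofReal, hHψ]; ring
      have h0 : (((E γ : ℝ) : ℂ) - e) * ⟪χ γ, x⟫ = 0 := by
        rw [sub_mul, hEc, sub_self]
      rw [hv]
      calc ⟪χ γ, x⟫ * ((((E γ : ℝ) : ℂ) - e) * ⟪(ψ : H), χ γ⟫)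
          = ((((E γ : ℝ) : ℂ) - e) * ⟪χ γ, x⟫) * ⟪(ψ : H), χ γ⟫ := by ring
        _ = 0 := by rw [h0, zero_mul]
    have hsum := hinner_sum (Hop ψ - (e : ℂ) • (ψ : H)) x
    rw [funext hterm] at hsum
    exact (hsum.unique hasSum_zero)
  -- surjectivity of `S` on each weak eigenspace
  have hsurj : ∀ (e : ℝ) (y : H), y ∈ weakEigen Hop e →
      ∃ x, x ∈ weakEigen Hop e ∧ S x = y := by
    intro e y hy
    haveI : CompleteSpace (weakEigen Hop e) := (weakEigen_closed Hop e).completeSpace_coe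
    let Tlin : (weakEigen Hop e) →ₗ[ℂ] (weakEigen Hop e) :=
      { toFun := fun x => ⟨S x, hSW e x x.2⟩
        map_add' := by intro a b; apply Subtype.ext; simp
        map_smul' := by intro c a; apply Subtype.ext; simp }
    have Tcont : Continuous Tlin :=
      Continuous.subtype_mk (S.continuous.comp continuous_subtype_val) _
    let T : (weakEigen Hop e) →L[ℂ] (weakEigen Hop e) := ⟨Tlin, Tcont⟩
    have hAL : AntilipschitzWith (Real.toNNReal A⁻¹) T := by
      apply T.antilipschitz_of_bound
      intro x
      have h1 : A * ‖(x : H)‖ ≤ ‖S (x : H)‖ := hlow x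
      have h2 : ‖T x‖ = ‖S (x : H)‖ := rfl
      have h3 : ‖x‖ = ‖(x : H)‖ := rfl
      rw [h2, h3, Real.coe_toNNReal _ (le_of_lt (inv_pos.mpr hA)),
        inv_mul_eq_div, le_div_iff₀ hA]
      linarith
    have hclosed : IsClosed (Set.range T) := hAL.isClosed_range T.uniformContinuous
    have hrange : LinearMap.range (T : (weakEigen Hop e) →ₗ[ℂ] (weakEigen Hop e)) = ⊤ := by
      have hcr : IsClosed ((LinearMap.range (T : (weakEigen Hop e) →ₗ[ℂ] (weakEigen Hop e)) : Submodule ℂ (weakEigen Hop e)) :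
          Set (weakEigen Hop e)) := by
        have h4 : ((LinearMap.range (T : (weakEigen Hop e) →ₗ[ℂ] (weakEigen Hop e)) : Submodule ℂ (weakEigen Hop e)) :
            Set (weakEigen Hop e)) = Set.range T := by
          ext u; simp [LinearMap.mem_range]
        rw [h4]; exact hclosed
      haveI : CompleteSpace (LinearMap.range (T : (weakEigen Hop e) →ₗ[ℂ] (weakEigen Hop e))) := hcr.completeSpace_coe
      have horth : (LinearMap.range (T : (weakEigen Hop e) →ₗ[ℂ] (weakEigen Hop e)))ᗮ = ⊥ := by
        rw [Submodule.eq_bot_iff]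
        intro u hu
        rw [Submodule.mem_orthogonal] at hu
        have h0 := hu (T u) (LinearMap.mem_range_self _ u)
        rw [Submodule.coe_inner] at h0
        have h1 : ⟪(u : H), S (u : H)⟫ = 0 := by
          rw [← inner_conj_symm]
          have h2 : ⟪S (u : H), (u : H)⟫ = 0 := h0
          rw [h2, map_zero]
        obtain ⟨s, hs, hAs⟩ := hcoer (u : H)
        have hs0 : s = 0 := by
          have : ((s : ℝ) : ℂ) = 0 := by rw [← hs, h1]
          exact_mod_cast this
        have hn2 : ‖(u : H)‖ ^ 2 = 0 := by nlinarith [sq_nonneg ‖(u : H)‖]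
        have hn : ‖(u : H)‖ = 0 := by
          rw [pow_two] at hn2; exact mul_self_eq_zero.mp hn2
        exact Subtype.ext (norm_eq_zero.mp hn)
      have h2 := Submodule.orthogonal_orthogonal (LinearMap.range (T : (weakEigen Hop e) →ₗ[ℂ] (weakEigen Hop e)))
      rw [horth, Submodule.bot_orthogonal_eq_top] at h2
      exact h2.symm
    obtain ⟨x, hx⟩ := (LinearMap.range_eq_top.mp hrange) ⟨y, hy⟩
    exact ⟨(x : H), x.2, congrArg Subtype.val hx⟩
  -- the main eigen-facts for `S⁻¹ χ_{γ'}`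
  have hmain : ∀ γ' : Γ, ∃ h : S.symm (χ γ') ∈ Hop.domain,
      Hop ⟨S.symm (χ γ'), h⟩ = ((E γ' : ℝ) : ℂ) • S.symm (χ γ') := by
    intro γ'
    have hχW : χ γ' ∈ weakEigen Hop (E γ') := hmemW _ _ (hmemχ γ') (heig γ')
    obtain ⟨x, hxW, hxS⟩ := hsurj (E γ') (χ γ') hχW
    have hxval : S.symm (χ γ') = x := by rw [← hxS]; exact S.symm_apply_apply x
    obtain ⟨hd, he⟩ := hWmem (E γ') x hxW
    rw [hxval]
    exact ⟨hd, he⟩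
  have hdom : ∀ γ' : Γ, S.symm (χ γ') ∈ Hop.domain := fun γ' =>
    (hmain γ').elim fun h _ => h
  refine ⟨hdom, ?_⟩
  intro γ γ'
  have happ : Hop ⟨S.symm (χ γ'), hdom γ'⟩ = ((E γ' : ℝ) : ℂ) • S.symm (χ γ') := by
    obtain ⟨h, hh⟩ := hmain γ'
    exact hh
  have hval : ⟪χ γ, S.symm (Hop ⟨S.symm (χ γ'), hdom γ'⟩)⟫
      = ((E γ' : ℝ) : ℂ) * ⟪χ γ, S.symm (S.symm (χ γ'))⟫ := by
    rw [happ, map_smul, inner_smul_right]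
  constructor
  · intro hne
    have horth : ⟪S.symm (χ γ), S.symm (χ γ')⟫ = 0 := by
      obtain ⟨hdγ, heγ⟩ := hmain γ
      have h1 : ⟪Hop ⟨S.symm (χ γ), hdγ⟩, S.symm (χ γ')⟫
          = ⟪S.symm (χ γ), Hop ⟨S.symm (χ γ'), hdom γ'⟩⟫ :=
        hsymm ⟨S.symm (χ γ), hdγ⟩ ⟨S.symm (χ γ'), hdom γ'⟩
      rw [heγ, happ, inner_smul_left, inner_smul_right, Complex.conj_ofReal] at h1
      by_contra h0
      apply hne
      have := mul_right_cancel₀ h0 h1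
      exact_mod_cast this
    have hss : ⟪χ γ, S.symm (S.symm (χ γ'))⟫ = 0 := by
      rw [← Ssymm_sa (χ γ) (S.symm (χ γ'))]
      exact horth
    rw [hval, hss, mul_zero]
  · intro heq
    have hpow : ((S.symm : H →L[ℂ] H) ^ 2) (χ γ') = S.symm (S.symm (χ γ')) := by
      simp [sq, ContinuousLinearMap.mul_apply]
    have hb := hS2 γ γ'
    rw [hpow] at hb
    have h1 : ‖((E γ' : ℝ) : ℂ)‖ = |E γ| := by
      rw [← heq, Complex.norm_real, Real.norm_eq_abs]
    rw [hval, norm_mul, h1]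
    calc |E γ| * ‖⟪χ γ, S.symm (S.symm (χ γ'))⟫‖
        ≤ |E γ| * (a₂ * Real.exp (-lam₂ * dist γ γ')) :=
          mul_le_mul_of_nonneg_left hb (abs_nonneg _)
      _ = a₂ * |E γ| * Real.exp (-lam₂ * dist γ γ') := by ring
end

section
/- Let Γ be a countable set with metric d such that m_ε := sup_{γ∈Γ} Σ_{ξ∈Γ} exp(−ε·d(γ,ξ)) < ∞ for all ε > 0, and assume Γ is ν-dimensional: there are κ > 0 and ν ∈ ℕ such that |{γ' ∈ Γ : d(γ',γ) ≤ r}| ≤ κ·(1+r)^ν for all γ ∈ Γ and r ≥ 0. Let f : Γ×Γ → [0,∞) be symmetric and satisfy f(x,y) ≤ f₀·exp(−μ·d(x,y)) for some constants f₀ > 0 and μ > 0. Then for all 0 < ζ < ξ < μ: sup_{γ∈Γ} sup_{Z'} (exp(ζ·d(γ,Z')) / (1+diam(Z'))^ν) · Σ_{{x,y}⊆Γ} f(x,y)·(1+d(x,y))^ν·exp(−ζ·d(γ,{x,y}))·exp(−ξ·d({x,y},Z')) < ∞, where the second supremum runs over all nonempty finite subsets Z' ⊆ Γ, and the sum runs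 over all unordered pairs {x,y} of points of Γ. -/
open Filter Topology
open scoped ENNReal

lemma aux_poly (ν : ℕ) (ε : ℝ) (hε : 0 < ε) :
    ∃ P : ℝ, 0 < P ∧ ∀ t : ℝ, 0 ≤ t → (1 + t) ^ ν ≤ P * Real.exp (ε * t) := by
  set δ : ℝ := min 1 (ε / (ν + 1)) with hδdef
  have hδ : 0 < δ := lt_min one_pos (by positivity)
  have hδ1 : δ ≤ 1 := min_le_left _ _
  refine ⟨δ⁻¹ ^ ν, by positivity, fun t ht => ?_⟩
  have h1 : 1 + t ≤ δ⁻¹ * Real.exp (δ * t) := by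
    have h2 : 1 + δ * t ≤ Real.exp (δ * t) := by
      have := Real.add_one_le_exp (δ * t); linarith
    have h3 : δ⁻¹ * (1 + δ * t) ≤ δ⁻¹ * Real.exp (δ * t) :=
      mul_le_mul_of_nonneg_left h2 (by positivity)
    have h4 : 1 + t ≤ δ⁻¹ * (1 + δ * t) := by
      have h9 : δ⁻¹ * δ = 1 := inv_mul_cancel₀ hδ.ne'
      have : (1:ℝ) ≤ δ⁻¹ := (one_le_inv₀ hδ).mpr hδ1
      nlinarith
    linarith
  calc (1 + t) ^ ν ≤ (δ⁻¹ * Real.exp (δ * t)) ^ ν :=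
        pow_le_pow_left₀ (by linarith) h1 ν
    _ = δ⁻¹ ^ ν * Real.exp (δ * t) ^ ν := mul_pow _ _ _
    _ = δ⁻¹ ^ ν * Real.exp (ν * (δ * t)) := by rw [← Real.exp_nat_mul]
    _ ≤ δ⁻¹ ^ ν * Real.exp (ε * t) := by
        have h5 : δ ≤ ε / (ν + 1) := min_le_right _ _
        have h6 : (ν : ℝ) * δ ≤ ν * (ε / (ν + 1)) :=
          mul_le_mul_of_nonneg_left h5 (Nat.cast_nonneg _)
        have h7 : (ν : ℝ) * (ε / (ν + 1)) ≤ ε := by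
          rw [mul_div_assoc', div_le_iff₀ (by positivity : (0:ℝ) < (ν:ℝ)+1)]
          nlinarith [Nat.cast_nonneg (α := ℝ) ν]
        have hδν : (ν : ℝ) * δ ≤ ε := by linarith
        have h10 : (ν : ℝ) * (δ * t) ≤ ε * t := by
          rw [← mul_assoc]; exact mul_le_mul_of_nonneg_right hδν ht
        have h11 := Real.exp_le_exp.mpr h10
        nlinarith [pow_pos (inv_pos.mpr hδ) ν]

/-- On a `ν`-dimensional countable metric space `Γ` with `m_ε < ∞`, a
symmetric two-body coefficient `f(x,y) ≤ f₀ exp(-μ d(x,y))` satisfies, for all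
`0 < ζ < ξ < μ`, the uniform bound
`sup_γ sup_{Z'} (e^{ζ d(γ,Z')}/(1+diam Z')^ν) Σ_{{x,y}} f(x,y)(1+d(x,y))^ν
   e^{-ζ d(γ,{x,y})} e^{-ξ d({x,y},Z')} < ∞`,
the sum being over unordered pairs of points of `Γ`. -/
theorem stmt_4
    {Γ : Type*} [Countable Γ] [MetricSpace Γ]
    (hm : ∀ ε : ℝ, 0 < ε → ∃ C : ℝ, ∀ γ : Γ,
      ∃ s : ℝ, s ≤ C ∧ HasSum (fun ξ : Γ => Real.exp (-ε * dist γ ξ)) s)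
    (ν : ℕ) (κ : ℝ) (hκ : 0 < κ)
    (hdim : ∀ (γ : Γ) (r : ℝ), 0 ≤ r →
      {γ' : Γ | dist γ' γ ≤ r}.Finite ∧
        (Nat.card {γ' : Γ | dist γ' γ ≤ r} : ℝ) ≤ κ * (1 + r) ^ ν)
    (f : Γ → Γ → ℝ) (hf0 : ∀ x y : Γ, 0 ≤ f x y) (hfsymm : ∀ x y : Γ, f x y = f y x)
    (f₀ μ : ℝ) (hf₀ : 0 < f₀) (hμ : 0 < μ)
    (hfdec : ∀ x y : Γ, f x y ≤ f₀ * Real.exp (-μ * dist x y))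
    (ζ ξ : ℝ) (hζ : 0 < ζ) (hζξ : ζ < ξ) (hξμ : ξ < μ) :
    ∃ C : ℝ≥0∞, C ≠ ⊤ ∧ ∀ (γ : Γ) (Z' : Finset Γ) (hZ' : Z'.Nonempty),
      ENNReal.ofReal (Real.exp (ζ * Z'.inf' hZ' fun z => dist γ z) /
          (1 + Z'.sup' hZ' fun z => Z'.sup' hZ' fun w => dist z w) ^ ν) *
        ∑' q : Sym2 Γ, ENNReal.ofReal
          (Sym2.lift ⟨fun x y =>
              f x y * (1 + dist x y) ^ ν *
                Real.exp (-(ζ * min (dist γ x) (dist γ y))) *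
                Real.exp (-(ξ * min (Z'.inf' hZ' fun z => dist x z)
                  (Z'.inf' hZ' fun z => dist y z))),
            by
              intro x y
              dsimp only
              rw [hfsymm x y, dist_comm x y, min_comm (dist γ x) (dist γ y),
                min_comm (Z'.inf' hZ' fun z => dist x z)
                  (Z'.inf' hZ' fun z => dist y z)]⟩ q)
        ≤ C := by
  rcases isEmpty_or_nonempty Γ with hΓ | hΓ
  · exact ⟨1, ENNReal.one_ne_top, fun γ => (IsEmpty.false γ).elim⟩
  obtain ⟨γ₀⟩ := hΓ
  have hε₁ : (0:ℝ) < ξ - ζ := by linarith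
  have hε₂ : (0:ℝ) < (μ - ξ)/2 := by linarith
  obtain ⟨m₁, hm₁⟩ := hm (ξ - ζ) hε₁
  obtain ⟨m₂, hm₂⟩ := hm ((μ - ξ)/2) hε₂
  have hm₁0 : 0 ≤ m₁ := by
    obtain ⟨s, hs, hsum⟩ := hm₁ γ₀
    have h0 : 0 ≤ s := by
      rw [← hsum.tsum_eq]; exact tsum_nonneg fun _ => (Real.exp_pos _).le
    linarith
  have hm₂0 : 0 ≤ m₂ := by
    obtain ⟨s, hs, hsum⟩ := hm₂ γ₀
    have h0 : 0 ≤ s := by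
      rw [← hsum.tsum_eq]; exact tsum_nonneg fun _ => (Real.exp_pos _).le
    linarith
  obtain ⟨P, hP, hPt⟩ := aux_poly ν ((μ - ξ)/2) hε₂
  refine ⟨ENNReal.ofReal (m₂ * (f₀ * P * κ) * m₁), ENNReal.ofReal_ne_top, ?_⟩
  intro γ Z' hZ'
  set D : ℝ := Z'.inf' hZ' fun z => dist γ z with hDdef
  set R : ℝ := Z'.sup' hZ' fun z => Z'.sup' hZ' fun w => dist z w with hRdef
  have hR0 : 0 ≤ R := by
    obtain ⟨z, hz⟩ := id hZ'
    have h1 : dist z z ≤ Z'.sup' hZ' fun w => dist z w := Finset.le_sup' _ hz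
    have h2 : (Z'.sup' hZ' fun w => dist z w) ≤ R :=
      Finset.le_sup' (fun z => Z'.sup' hZ' fun w => dist z w) hz
    simp only [dist_self] at h1
    linarith
  have hRν : (0:ℝ) < (1 + R) ^ ν := by positivity
  have hD0 : 0 ≤ D := Finset.le_inf' hZ' _ fun z _ => dist_nonneg
  -- cardinality bound
  have hcard : (Z'.card : ℝ) ≤ κ * (1 + R) ^ ν := by
    obtain ⟨z₀, hz₀⟩ := id hZ'
    obtain ⟨hfin, hcbound⟩ := hdim z₀ R hR0
    have hsub : (Z' : Set Γ) ⊆ {γ' | dist γ' z₀ ≤ R} := by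
      intro w hw
      have hw' : w ∈ Z' := hw
      have h1 : dist w z₀ ≤ Z'.sup' hZ' fun w' => dist w w' := Finset.le_sup' _ hz₀
      have h2 : (Z'.sup' hZ' fun w' => dist w w') ≤ R :=
        Finset.le_sup' (fun z => Z'.sup' hZ' fun w' => dist z w') hw'
      exact le_trans h1 h2
    have hle : Z'.card ≤ Nat.card {γ' | dist γ' z₀ ≤ R} := by
      rw [Nat.card_coe_set_eq, ← Set.ncard_coe_finset Z']
      exact Set.ncard_le_ncard hsub hfin
    calc (Z'.card : ℝ) ≤ (Nat.card {γ' | dist γ' z₀ ≤ R} : ℝ) := Nat.cast_le.mpr hle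
      _ ≤ κ * (1 + R) ^ ν := hcbound
  set pref : ℝ := Real.exp (ζ * D) / (1 + R) ^ ν with hprefdef
  have hpref0 : 0 ≤ pref := by positivity
  set c : ℝ := f₀ * P / (1 + R) ^ ν with hcdef
  have hc0 : 0 ≤ c := by positivity
  -- key pointwise bound
  have key : ∀ x y : Γ,
      pref * (f x y * (1 + dist x y) ^ ν *
          Real.exp (-(ζ * min (dist γ x) (dist γ y))) *
          Real.exp (-(ξ * min (Z'.inf' hZ' fun z => dist x z)
            (Z'.inf' hZ' fun z => dist y z)))) ≤
        c * (Real.exp (-(ξ - ζ) * (Z'.inf' hZ' fun z => dist x z)) *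
          Real.exp (-((μ - ξ)/2) * dist x y)) := by
    intro x y
    set a : ℝ := dist γ x with hadef
    set b : ℝ := dist γ y with hbdef
    set d : ℝ := dist x y with hddef
    set p : ℝ := Z'.inf' hZ' fun z => dist x z with hpdef
    set q : ℝ := Z'.inf' hZ' fun z => dist y z with hqdef
    have hd0 : 0 ≤ d := dist_nonneg
    have hDle : D ≤ min a b + d + min p q := by
      rcases le_total p q with hpq | hqp
      · -- min p q = p ; use x route
        obtain ⟨z₁, hz₁, hz₁eq⟩ := Z'.exists_mem_eq_inf' hZ' (fun z => dist x z)
        have h1 : D ≤ dist γ z₁ := Finset.inf'_le _ hz₁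
        have h2 : dist γ z₁ ≤ a + dist x z₁ := dist_triangle γ x z₁
        have h3 : a ≤ b + d := by
          have := dist_triangle γ y x
          rw [hadef, hbdef, hddef, dist_comm x y]; linarith
        have h4 : min a b + d ≥ a := by
          rcases min_cases a b with ⟨he, _⟩ | ⟨he, hle⟩ <;> rw [he] <;> linarith
        have h5 : min p q = p := min_eq_left hpq
        rw [h5]
        have : p = dist x z₁ := hz₁eq
        linarith
      · obtain ⟨z₁, hz₁, hz₁eq⟩ := Z'.exists_mem_eq_inf' hZ' (fun z => dist y z)
        have h1 : D ≤ dist γ z₁ := Finset.inf'_le _ hz₁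
        have h2 : dist γ z₁ ≤ b + dist y z₁ := dist_triangle γ y z₁
        have h3 : b ≤ a + d := by
          have := dist_triangle γ x y
          rw [hadef, hbdef, hddef]; linarith
        have h4 : min a b + d ≥ b := by
          rcases min_cases a b with ⟨he, hle⟩ | ⟨he, _⟩ <;> rw [he] <;> linarith
        have h5 : min p q = q := min_eq_right hqp
        rw [h5]
        have : q = dist y z₁ := hz₁eq
        linarith
    have hpq : p ≤ q + d := by
      obtain ⟨z₁, hz₁, hz₁eq⟩ := Z'.exists_mem_eq_inf' hZ' (fun z => dist y z)
      have h1 : p ≤ dist x z₁ := Finset.inf'_le _ hz₁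
      have h2 : dist x z₁ ≤ d + dist y z₁ := dist_triangle x y z₁
      have h3 : q = dist y z₁ := hz₁eq
      linarith
    have hn : p - d ≤ min p q := le_min (by linarith) (by linarith)
    have keyexp : Real.exp (ζ * D) * Real.exp (-(ζ * min a b)) *
        Real.exp (-(ξ * min p q)) * Real.exp (-μ * d) * Real.exp ((μ - ξ)/2 * d) ≤
        Real.exp (-(ξ - ζ) * p) * Real.exp (-((μ - ξ)/2) * d) := by
      rw [← Real.exp_add, ← Real.exp_add, ← Real.exp_add, ← Real.exp_add, ← Real.exp_add]
      apply Real.exp_le_exp.mpr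
      have h1 : ζ * D ≤ ζ * (min a b + d + min p q) :=
        mul_le_mul_of_nonneg_left hDle hζ.le
      have h2 : (ξ - ζ) * (p - d) ≤ (ξ - ζ) * min p q :=
        mul_le_mul_of_nonneg_left hn (by linarith)
      nlinarith
    have hET : Real.exp (ζ * D) * (f x y * (1 + d) ^ ν *
        Real.exp (-(ζ * min a b)) * Real.exp (-(ξ * min p q))) ≤
        f₀ * P * (Real.exp (-(ξ - ζ) * p) * Real.exp (-((μ - ξ)/2) * d)) := by
      have g1 : f x y ≤ f₀ * Real.exp (-μ * d) := hfdec x y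
      have g2 : (1 + d) ^ ν ≤ P * Real.exp ((μ - ξ)/2 * d) := hPt d hd0
      calc Real.exp (ζ * D) * (f x y * (1 + d) ^ ν *
            Real.exp (-(ζ * min a b)) * Real.exp (-(ξ * min p q)))
          ≤ Real.exp (ζ * D) * ((f₀ * Real.exp (-μ * d)) * (P * Real.exp ((μ - ξ)/2 * d)) *
            Real.exp (-(ζ * min a b)) * Real.exp (-(ξ * min p q))) := by
            have hAB : f x y * (1 + d) ^ ν ≤
                (f₀ * Real.exp (-μ * d)) * (P * Real.exp ((μ - ξ)/2 * d)) :=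
              mul_le_mul g1 g2 (by positivity) (by positivity)
            have h1 : f x y * (1 + d) ^ ν * Real.exp (-(ζ * min a b)) ≤
                (f₀ * Real.exp (-μ * d)) * (P * Real.exp ((μ - ξ)/2 * d)) *
                  Real.exp (-(ζ * min a b)) :=
              mul_le_mul_of_nonneg_right hAB (Real.exp_pos _).le
            have h2 : f x y * (1 + d) ^ ν * Real.exp (-(ζ * min a b)) *
                Real.exp (-(ξ * min p q)) ≤
                (f₀ * Real.exp (-μ * d)) * (P * Real.exp ((μ - ξ)/2 * d)) *
                  Real.exp (-(ζ * min a b)) * Real.exp (-(ξ * min p q)) :=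
              mul_le_mul_of_nonneg_right h1 (Real.exp_pos _).le
            exact mul_le_mul_of_nonneg_left h2 (Real.exp_pos _).le
        _ = f₀ * P * (Real.exp (ζ * D) * Real.exp (-(ζ * min a b)) *
            Real.exp (-(ξ * min p q)) * Real.exp (-μ * d) * Real.exp ((μ - ξ)/2 * d)) := by
            ring
        _ ≤ f₀ * P * (Real.exp (-(ξ - ζ) * p) * Real.exp (-((μ - ξ)/2) * d)) :=
            mul_le_mul_of_nonneg_left keyexp (by positivity)
    have heq : pref * (f x y * (1 + d) ^ ν *
        Real.exp (-(ζ * min a b)) * Real.exp (-(ξ * min p q))) =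
        (Real.exp (ζ * D) * (f x y * (1 + d) ^ ν *
          Real.exp (-(ζ * min a b)) * Real.exp (-(ξ * min p q)))) / (1 + R) ^ ν := by
      rw [hprefdef]; ring
    rw [heq, hcdef]
    rw [div_mul_eq_mul_div]
    gcongr
  -- inner sum bound
  have hinner : ∀ x : Γ, ∑' y : Γ, ENNReal.ofReal (Real.exp (-((μ - ξ)/2) * dist x y)) ≤
      ENNReal.ofReal m₂ := by
    intro x
    obtain ⟨s, hs, hsum⟩ := hm₂ x
    calc ∑' y : Γ, ENNReal.ofReal (Real.exp (-((μ - ξ)/2) * dist x y))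
        = ENNReal.ofReal (∑' y : Γ, Real.exp (-((μ - ξ)/2) * dist x y)) :=
          (ENNReal.ofReal_tsum_of_nonneg (fun y => (Real.exp_pos _).le) hsum.summable).symm
      _ = ENNReal.ofReal s := by rw [hsum.tsum_eq]
      _ ≤ ENNReal.ofReal m₂ := ENNReal.ofReal_le_ofReal hs
  -- outer sum bound
  have houter : ∑' x : Γ, ENNReal.ofReal
      (Real.exp (-(ξ - ζ) * (Z'.inf' hZ' fun z => dist x z))) ≤
      (Z'.card : ℝ≥0∞) * ENNReal.ofReal m₁ := by
    have hsplit : ∀ x : Γ, ENNReal.ofReal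
        (Real.exp (-(ξ - ζ) * (Z'.inf' hZ' fun z => dist x z))) ≤
        ∑ z ∈ Z', ENNReal.ofReal (Real.exp (-(ξ - ζ) * dist x z)) := by
      intro x
      obtain ⟨z₁, hz₁, hz₁eq⟩ := Z'.exists_mem_eq_inf' hZ' (fun z => dist x z)
      rw [hz₁eq]
      exact Finset.single_le_sum (f := fun z => ENNReal.ofReal (Real.exp (-(ξ - ζ) * dist x z)))
        (fun z _ => zero_le) hz₁
    calc ∑' x : Γ, ENNReal.ofReal (Real.exp (-(ξ - ζ) * (Z'.inf' hZ' fun z => dist x z)))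
        ≤ ∑' x : Γ, ∑ z ∈ Z', ENNReal.ofReal (Real.exp (-(ξ - ζ) * dist x z)) :=
          ENNReal.tsum_le_tsum hsplit
      _ = ∑ z ∈ Z', ∑' x : Γ, ENNReal.ofReal (Real.exp (-(ξ - ζ) * dist x z)) :=
          Summable.tsum_finsetSum fun z _ => ENNReal.summable
      _ ≤ ∑ z ∈ Z', ENNReal.ofReal m₁ := by
          refine Finset.sum_le_sum fun z _ => ?_
          obtain ⟨s, hs, hsum⟩ := hm₁ z
          have hsum' : HasSum (fun x : Γ => Real.exp (-(ξ - ζ) * dist x z)) s := by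
            simpa [dist_comm] using hsum
          calc ∑' x : Γ, ENNReal.ofReal (Real.exp (-(ξ - ζ) * dist x z))
              = ENNReal.ofReal (∑' x : Γ, Real.exp (-(ξ - ζ) * dist x z)) :=
                (ENNReal.ofReal_tsum_of_nonneg (fun y => (Real.exp_pos _).le) hsum'.summable).symm
            _ = ENNReal.ofReal s := by rw [hsum'.tsum_eq]
            _ ≤ ENNReal.ofReal m₁ := ENNReal.ofReal_le_ofReal hs
      _ = (Z'.card : ℝ≥0∞) * ENNReal.ofReal m₁ := by
          rw [Finset.sum_const, nsmul_eq_mul]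
  -- main chain
  have main : ∑' p : Γ × Γ, ENNReal.ofReal (pref *
      (f p.1 p.2 * (1 + dist p.1 p.2) ^ ν *
        Real.exp (-(ζ * min (dist γ p.1) (dist γ p.2))) *
        Real.exp (-(ξ * min (Z'.inf' hZ' fun z => dist p.1 z)
          (Z'.inf' hZ' fun z => dist p.2 z))))) ≤
      ENNReal.ofReal (m₂ * (f₀ * P * κ) * m₁) := by
    calc ∑' p : Γ × Γ, ENNReal.ofReal (pref *
        (f p.1 p.2 * (1 + dist p.1 p.2) ^ ν *
          Real.exp (-(ζ * min (dist γ p.1) (dist γ p.2))) *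
          Real.exp (-(ξ * min (Z'.inf' hZ' fun z => dist p.1 z)
            (Z'.inf' hZ' fun z => dist p.2 z)))))
        ≤ ∑' p : Γ × Γ, ENNReal.ofReal (c *
            (Real.exp (-(ξ - ζ) * (Z'.inf' hZ' fun z => dist p.1 z)) *
              Real.exp (-((μ - ξ)/2) * dist p.1 p.2))) :=
          ENNReal.tsum_le_tsum fun p => ENNReal.ofReal_le_ofReal (key p.1 p.2)
      _ = ∑' x : Γ, ∑' y : Γ, ENNReal.ofReal (c *
            (Real.exp (-(ξ - ζ) * (Z'.inf' hZ' fun z => dist x z)) *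
              Real.exp (-((μ - ξ)/2) * dist x y))) := by rw [ENNReal.tsum_prod']
      _ = ∑' x : Γ, (ENNReal.ofReal (c * Real.exp (-(ξ - ζ) * (Z'.inf' hZ' fun z => dist x z))) *
            ∑' y : Γ, ENNReal.ofReal (Real.exp (-((μ - ξ)/2) * dist x y))) := by
          refine tsum_congr fun x => ?_
          rw [← ENNReal.tsum_mul_left]
          refine tsum_congr fun y => ?_
          rw [← ENNReal.ofReal_mul (by positivity)]
          ring_nf
      _ ≤ ∑' x : Γ, (ENNReal.ofReal (c * Real.exp (-(ξ - ζ) * (Z'.inf' hZ' fun z => dist x z))) *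
            ENNReal.ofReal m₂) :=
          ENNReal.tsum_le_tsum fun x => mul_le_mul_right (hinner x) _
      _ = (∑' x : Γ, ENNReal.ofReal (c * Real.exp (-(ξ - ζ) * (Z'.inf' hZ' fun z => dist x z)))) *
            ENNReal.ofReal m₂ := ENNReal.tsum_mul_right
      _ = ENNReal.ofReal c * (∑' x : Γ, ENNReal.ofReal
            (Real.exp (-(ξ - ζ) * (Z'.inf' hZ' fun z => dist x z)))) * ENNReal.ofReal m₂ := by
          rw [← ENNReal.tsum_mul_left]
          congr 1
          exact tsum_congr fun x => ENNReal.ofReal_mul hc0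
      _ ≤ ENNReal.ofReal c * ((Z'.card : ℝ≥0∞) * ENNReal.ofReal m₁) * ENNReal.ofReal m₂ := by
          gcongr
      _ ≤ ENNReal.ofReal (m₂ * (f₀ * P * κ) * m₁) := by
          rw [← ENNReal.ofReal_natCast Z'.card, ← ENNReal.ofReal_mul (Nat.cast_nonneg _),
            ← ENNReal.ofReal_mul hc0, ← ENNReal.ofReal_mul (by positivity)]
          apply ENNReal.ofReal_le_ofReal
          have h8 : c * (Z'.card : ℝ) ≤ f₀ * P * κ := by
            rw [hcdef, div_mul_eq_mul_div, div_le_iff₀ hRν]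
            nlinarith [mul_le_mul_of_nonneg_left hcard
              (show (0:ℝ) ≤ f₀ * P by positivity)]
          have h9 : c * ((Z'.card : ℝ) * m₁) ≤ f₀ * P * κ * m₁ := by
            have := mul_le_mul_of_nonneg_right h8 hm₁0
            nlinarith [mul_nonneg hc0 (Nat.cast_nonneg (α := ℝ) Z'.card)]
          calc c * ((Z'.card : ℝ) * m₁) * m₂ ≤ f₀ * P * κ * m₁ * m₂ :=
                mul_le_mul_of_nonneg_right h9 hm₂0
            _ = m₂ * (f₀ * P * κ) * m₁ := by ring
  refine le_trans ?_ main
  rw [← ENNReal.tsum_mul_left]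
  refine le_trans (le_of_eq (tsum_congr fun q => (ENNReal.ofReal_mul hpref0).symm)) ?_
  exact ENNReal.tsum_le_tsum_comp_of_surjective Quot.mk_surjective _
end

section
/- Let ξ > 0, let {χ_γ}_{γ∈Γ} be a localized frame in ℋ with constant G ≥ 1 and rate λ = ξ, let 𝒜 be the CAR algebra over ℋ with a_γ := a(χ_γ), and let Φ be an interaction such that C_Φ(ζ,ξ) < ∞ for a given 0 < ζ < ξ. Then for every finite subset Λ ⊆ Γ, every t ∈ ℝ, and all γ, γ' ∈ Γ: ‖τ_t^Λ(a_γ*)·a_{γ'} + a_{γ'}·τ_t^Λ(a_γ*)‖ ≤ G·exp(−ζ·(d(γ,γ') − v·|t|)), where v = 16·G·C_Φ(ζ,ξ)/ζ; and the same bound holds with a_γ* replaced by a_γ and/or a_{γ'} replaced by a_{γ'}*. -/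
open Filter Topology

section Helpers

section Lists
variable {R : Type*} [Ring R]

/-- auxiliary "pull-through" sum for anticommutators -/
def antiT (B : R) : List R → R
  | [] => 0
  | x :: r => (B * x + x * B) * r.prod - x * antiT B r

lemma antiT_spec (B : R) (l : List R) :
    B * l.prod = antiT B l + (-1 : R) ^ l.length * (l.prod * B) := by
  induction l with
  | nil => simp [antiT]
  | cons x r ih =>
    have h : B * (x :: r).prod = (B * x + x * B) * r.prod - x * (B * r.prod) := by
      simp [List.prod_cons]; noncomm_ring
    have hc : x * ((-1:R) ^ r.length * (r.prod * B)) = (-1:R)^r.length * (x * (r.prod * B)) := by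
      rw [← mul_assoc, ← ((Commute.neg_one_left x).pow_left r.length).eq, mul_assoc]
    rw [h, ih, antiT, mul_add, hc]
    simp only [List.prod_cons, List.length_cons, pow_succ]
    noncomm_ring

lemma comm_eq_antiT (B : R) (l : List R) (h : Even l.length) :
    l.prod * B - B * l.prod = - antiT B l := by
  have h2 := antiT_spec B l
  rw [h.neg_one_pow] at h2
  rw [h2]; noncomm_ring

lemma anticomm_eq_antiT (B : R) (l : List R) (h : Odd l.length) :
    l.prod * B + B * l.prod = antiT B l := by
  have h2 := antiT_spec B l
  rw [h.neg_one_pow] at h2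
  rw [h2]; noncomm_ring

lemma star_list_prod {R : Type*} [Ring R] [StarRing R] (l : List R) :
    star l.prod = (l.map star).reverse.prod := by
  induction l with
  | nil => simp
  | cons x r ih => simp [star_mul, ih]

lemma conj_list_prod (U V : R) (hUV : U * V = 1) (hVU : V * U = 1) (m : List R) :
    U * m.prod * V = (m.map fun y => U * y * V).prod := by
  induction m with
  | nil => simpa using hUV
  | cons y r ih =>
    simp only [List.prod_cons, List.map_cons]
    rw [← ih]
    have h1 : V * (U * (r.prod * V)) = r.prod * V := by rw [← mul_assoc, hVU, one_mul]
    calc U * (y * r.prod) * V = U * (y * (V * (U * (r.prod * V)))) := by rw [h1]; noncomm_ring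
      _ = U * y * V * (U * r.prod * V) := by noncomm_ring

end Lists

section NLists
variable {R : Type*} [NormedRing R]

lemma norm_list_prod_le_one (h1 : ‖(1:R)‖ ≤ 1) (l : List R) (hl : ∀ x ∈ l, ‖x‖ ≤ 1) :
    ‖l.prod‖ ≤ 1 := by
  induction l with
  | nil => simpa using h1
  | cons x r ih =>
    rw [List.prod_cons]
    calc ‖x * r.prod‖ ≤ ‖x‖ * ‖r.prod‖ := norm_mul_le _ _
    _ ≤ 1 * 1 := by
        apply mul_le_mul (hl x (by simp)) (ih fun y hy => hl y (by simp [hy])) (norm_nonneg _)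
        exact zero_le_one
    _ = 1 := by ring

lemma norm_antiT_le (h1 : ‖(1:R)‖ ≤ 1) (B : R) (l : List R) (hl : ∀ x ∈ l, ‖x‖ ≤ 1) :
    ‖antiT B l‖ ≤ (l.map fun x => ‖B * x + x * B‖).sum := by
  induction l with
  | nil => simp [antiT]
  | cons x r ih =>
    rw [antiT, List.map_cons, List.sum_cons]
    have h1' : ‖(B * x + x * B) * r.prod‖ ≤ ‖B * x + x * B‖ := by
      calc ‖(B * x + x * B) * r.prod‖ ≤ ‖B * x + x * B‖ * ‖r.prod‖ := norm_mul_le _ _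
      _ ≤ ‖B * x + x * B‖ * 1 :=
          mul_le_mul_of_nonneg_left
            (norm_list_prod_le_one h1 r fun y hy => hl y (by simp [hy])) (norm_nonneg _)
      _ = _ := mul_one _
    have h2' : ‖x * antiT B r‖ ≤ (r.map fun x => ‖B * x + x * B‖).sum := by
      calc ‖x * antiT B r‖ ≤ ‖x‖ * ‖antiT B r‖ := norm_mul_le _ _
      _ ≤ 1 * ((r.map fun x => ‖B * x + x * B‖).sum) :=
          mul_le_mul (hl x (by simp)) (ih fun y hy => hl y (by simp [hy])) (norm_nonneg _)
            zero_le_one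
      _ = _ := one_mul _
    calc ‖(B * x + x * B) * r.prod - x * antiT B r‖
        ≤ ‖(B * x + x * B) * r.prod‖ + ‖x * antiT B r‖ := norm_sub_le _ _
      _ ≤ _ := add_le_add h1' h2'

end NLists

section SLists
variable {R : Type*} [Ring R] [Algebra ℂ R]

lemma antiT_scalar (B : R) (l : List R) (cf : R → ℂ)
    (h : ∀ x ∈ l, B * x + x * B = cf x • 1) :
    antiT B l = ∑ j ∈ Finset.range l.length,
      (-1 : ℂ) ^ j • cf (l.getD j 0) • (l.eraseIdx j).prod := by
  induction l with
  | nil => simp [antiT]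
  | cons x r ih =>
    rw [antiT, h x (by simp), ih (fun y hy => h y (by simp [hy])), List.length_cons,
      Finset.sum_range_succ']
    simp only [List.getD_cons_succ, List.getD_cons_zero, List.eraseIdx_cons_succ,
      List.eraseIdx_cons_zero, pow_zero, one_smul, List.prod_cons, smul_mul_assoc, one_mul]
    rw [Finset.mul_sum]
    have key : ∀ j ∈ Finset.range r.length,
        x * ((-1:ℂ) ^ j • cf (r.getD j 0) • (r.eraseIdx j).prod)
        = -((-1:ℂ) ^ (j+1) • cf (r.getD j 0) • (x * (r.eraseIdx j).prod)) := by
      intro j _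
      rw [mul_smul_comm, mul_smul_comm, pow_succ, mul_neg_one, neg_smul, neg_neg]
    rw [Finset.sum_congr rfl key, Finset.sum_neg_distrib, sub_neg_eq_add, add_comm]

end SLists

section CStar
open NormedSpace
variable {𝒜 : Type*} [NormedRing 𝒜] [StarRing 𝒜] [CStarRing 𝒜] [NormedAlgebra ℂ 𝒜]
    [StarModule ℂ 𝒜] [CompleteSpace 𝒜]

set_option linter.unusedSectionVars false

lemma norm_one_le' : ‖(1:𝒜)‖ ≤ 1 := by
  have h : ‖(1:𝒜)‖ * ‖(1:𝒜)‖ = ‖(1:𝒜)‖ := by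
    rw [← CStarRing.norm_star_mul_self (x := (1:𝒜))]; simp
  nlinarith [norm_nonneg (1:𝒜)]

lemma norm_car_le {H : Type*} [NormedAddCommGroup H] [InnerProductSpace ℂ H]
    (a : H → 𝒜) (hCAR1 : ∀ ψ φ : H, a ψ * star (a φ) + star (a φ) * a ψ = (inner ℂ ψ φ : ℂ) • 1)
    (hCAR2 : ∀ ψ φ : H, a ψ * a φ + a φ * a ψ = 0) (ψ : H) : ‖a ψ‖ ≤ ‖ψ‖ := by
  have hsq : a ψ * a ψ = 0 := by
    have h0 := hCAR2 ψ ψ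
    have h2 : (2:ℝ) • (a ψ * a ψ) = 0 := by rw [two_smul]; exact_mod_cast h0
    simpa using (smul_eq_zero.mp h2).resolve_left (by norm_num)
  have h1 := hCAR1 ψ ψ
  set x : 𝒜 := star (a ψ) * a ψ with hx
  have hxx : x * x = (inner ℂ ψ ψ : ℂ) • x := by
    have h' : a ψ * star (a ψ) = (inner ℂ ψ ψ : ℂ) • 1 - x := by rw [hx, eq_sub_iff_add_eq, h1]
    calc x * x = star (a ψ) * (a ψ * star (a ψ)) * a ψ := by rw [hx]; noncomm_ring
    _ = star (a ψ) * ((inner ℂ ψ ψ : ℂ) • 1 - x) * a ψ := by rw [h']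
    _ = (inner ℂ ψ ψ : ℂ) • x - star (a ψ) * x * a ψ := by rw [hx]; simp [mul_sub, sub_mul,
        mul_smul_comm, smul_mul_assoc]
    _ = (inner ℂ ψ ψ : ℂ) • x := by
        have h3 : star (a ψ) * x * a ψ = (star (a ψ) * star (a ψ)) * (a ψ * a ψ) := by
          rw [hx]; noncomm_ring
        rw [h3, hsq, mul_zero, sub_zero]
  have hxsa : star x = x := by rw [hx]; simp [star_mul]
  have hnx : ‖x‖ * ‖x‖ ≤ ‖ψ‖^2 * ‖x‖ := by
    have h3 : ‖x‖ * ‖x‖ = ‖x * x‖ := by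
      rw [← CStarRing.norm_star_mul_self (x := x), hxsa]
    rw [h3, hxx]
    calc ‖(inner ℂ ψ ψ : ℂ) • x‖ ≤ ‖(inner ℂ ψ ψ : ℂ)‖ * ‖x‖ := by rw [norm_smul]
    _ ≤ ‖ψ‖^2 * ‖x‖ := by
        gcongr
        rw [@inner_self_eq_norm_sq_to_K ℂ]
        simp [pow_two]
  have hxn : ‖x‖ ≤ ‖ψ‖^2 := by
    rcases eq_or_lt_of_le (norm_nonneg x) with h | h
    · rw [← h]; positivity
    · exact le_of_mul_le_mul_right (by linarith [hnx]) h
  have hfin : ‖a ψ‖ * ‖a ψ‖ ≤ ‖ψ‖^2 := by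
    rw [← CStarRing.norm_star_mul_self (x := a ψ)]; exact hxn
  nlinarith [norm_nonneg (a ψ), norm_nonneg ψ]

lemma exp_mul_exp_neg (X : 𝒜) : exp X * exp (-X) = 1 := by
  letI : NormedAlgebra ℚ 𝒜 := NormedAlgebra.restrictScalars ℚ ℂ 𝒜
  rw [← exp_add_of_commute (Commute.refl X).neg_right, add_neg_cancel, exp_zero]

lemma exp_neg_mul_exp (X : 𝒜) : exp (-X) * exp X = 1 := by
  letI : NormedAlgebra ℚ 𝒜 := NormedAlgebra.restrictScalars ℚ ℂ 𝒜
  rw [← exp_add_of_commute (Commute.refl X).neg_left, neg_add_cancel, exp_zero]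

lemma smul_rw (b : 𝒜) (s : ℝ) : (Complex.I * (s:ℂ)) • b = s • (Complex.I • b) := by
  rw [mul_comm, ← smul_eq_mul, smul_assoc]
  norm_num

lemma star_exp_smul (b : 𝒜) (hb : star b = b) (t : ℝ) :
    star (exp ((Complex.I * (t:ℂ)) • b)) = exp (-((Complex.I * (t:ℂ)) • b)) := by
  rw [star_exp]
  congr 1
  rw [star_smul, hb, show star (Complex.I * (t:ℂ)) = -(Complex.I * (t:ℂ)) by
    simp [Complex.ext_iff], neg_smul]

lemma norm_exp_smul_le (b : 𝒜) (hb : star b = b) (t : ℝ) :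
    ‖exp ((Complex.I * (t:ℂ)) • b)‖ ≤ 1 := by
  set U := exp ((Complex.I * (t:ℂ)) • b)
  have h : ‖U‖ * ‖U‖ = ‖(1:𝒜)‖ := by
    rw [← CStarRing.norm_star_mul_self (x := U), star_exp_smul b hb t, exp_neg_mul_exp]
  nlinarith [norm_nonneg U, norm_one_le' (𝒜 := 𝒜)]

lemma norm_exp_smul_le' (b : 𝒜) (hb : star b = b) (t : ℝ) :
    ‖exp (-((Complex.I * (t:ℂ)) • b))‖ ≤ 1 := by
  have h := norm_exp_smul_le b hb (-t)
  have h2 : (Complex.I * ((-t : ℝ):ℂ)) • b = -((Complex.I * (t:ℂ)) • b) := by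
    push_cast; rw [← neg_smul]; ring_nf
  rwa [h2] at h

lemma hasDerivAt_conj (b A₀ : 𝒜) (t : ℝ) :
    HasDerivAt (fun s : ℝ => exp ((Complex.I * (s:ℂ)) • b) * A₀ *
        exp (-((Complex.I * (s:ℂ)) • b)))
      (exp ((Complex.I * (t:ℂ)) • b) *
        ((Complex.I • b) * A₀ - A₀ * (Complex.I • b)) *
        exp (-((Complex.I * (t:ℂ)) • b))) t := by
  set x : 𝒜 := Complex.I • b with hxdef
  have hrw : ∀ s : ℝ, (Complex.I * (s:ℂ)) • b = s • x := fun s => smul_rw b s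
  have hrw' : ∀ s : ℝ, -((Complex.I * (s:ℂ)) • b) = s • (-x) := by
    intro s; rw [hrw, smul_neg]
  have hU : HasDerivAt (fun s : ℝ => exp ((Complex.I * (s:ℂ)) • b))
      (exp (t • x) * x) t := by
    simp only [hrw]
    exact hasDerivAt_exp_smul_const x t
  have hV : HasDerivAt (fun s : ℝ => exp (-((Complex.I * (s:ℂ)) • b)))
      (exp (t • (-x)) * (-x)) t := by
    simp only [hrw']
    exact hasDerivAt_exp_smul_const (-x) t
  have hcomm : x * exp (t • (-x)) = exp (t • (-x)) * x :=
    (((Commute.refl x).neg_right.smul_right t).exp_right).eq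
  have h := ((hU.mul_const A₀).mul hV)
  convert h using 1
  · rfl
  simp only [hrw, hrw', smul_neg]
  rw [smul_neg] at hcomm
  have h2 : exp (t•x) * A₀ * (exp (-(t•x)) * -x)
      = -(exp (t•x) * (A₀ * x) * exp (-(t•x))) := by
    calc exp (t•x) * A₀ * (exp (-(t•x)) * -x)
        = -(exp (t•x) * A₀ * (x * exp (-(t•x)))) := by rw [hcomm]; noncomm_ring
      _ = -(exp (t•x) * (A₀ * x) * exp (-(t•x))) := by noncomm_ring
  rw [h2]
  noncomm_ring

/-- the fundamental linear map `X ↦ conj(X) Y + Y conj(X)` -/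
def thetaMap (U V Y : 𝒜) : 𝒜 →ₗ[ℂ] 𝒜 where
  toFun X := U * X * V * Y + Y * (U * X * V)
  map_add' X Y' := by noncomm_ring
  map_smul' r X := by
    simp only [RingHom.id_apply, smul_add, mul_smul_comm, smul_mul_assoc]

lemma thetaMap_apply (U V Y X : 𝒜) :
    thetaMap U V Y X = U * X * V * Y + Y * (U * X * V) := rfl

end CStar

end Helpers
/-- Distance from a point to a finite set (`0` for the empty set). -/
noncomputable def distPtSet {Γ : Type*} [MetricSpace Γ] (γ : Γ) (Z : Finset Γ) : ℝ :=
  if h : Z.Nonempty then Z.inf' h fun z => dist γ z else 0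

/-- Distance between two finite sets (`0` if either is empty). -/
noncomputable def distSetSet {Γ : Type*} [MetricSpace Γ] (Z Z' : Finset Γ) : ℝ :=
  if h : Z.Nonempty ∧ Z'.Nonempty then Z.inf' h.1 fun z => Z'.inf' h.2 fun z' => dist z z'
  else 0

/-- Diameter of a finite set (`0` for the empty set). -/
noncomputable def diamSet {Γ : Type*} [MetricSpace Γ] (Z : Finset Γ) : ℝ :=
  if h : Z.Nonempty then Z.sup' h fun z => Z.sup' h fun w => dist z w else 0

section MetricHelpers
variable {Γ : Type*} [MetricSpace Γ]

lemma distPtSet_nonneg (γ : Γ) (Z : Finset Γ) : 0 ≤ distPtSet γ Z := by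
  unfold distPtSet
  split
  · exact Finset.le_inf' _ _ fun z _ => dist_nonneg
  · exact le_refl 0

lemma distPtSet_le (γ : Γ) {Z : Finset Γ} {z : Γ} (hz : z ∈ Z) : distPtSet γ Z ≤ dist γ z := by
  unfold distPtSet
  rw [dif_pos ⟨z, hz⟩]
  exact Finset.inf'_le _ hz

lemma distPtSet_singleton (γ γ' : Γ) : distPtSet γ {γ'} = dist γ γ' := by
  unfold distPtSet
  rw [dif_pos (Finset.singleton_nonempty γ')]
  simp

lemma diamSet_nonneg (Z : Finset Γ) : 0 ≤ diamSet Z := by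
  unfold diamSet
  split
  · rename_i h
    obtain ⟨z, hz⟩ := h
    refine le_trans ?_ (Finset.le_sup' _ hz)
    refine le_trans ?_ (Finset.le_sup' _ hz)
    simp
  · exact le_refl 0

lemma diamSet_singleton (γ : Γ) : diamSet ({γ} : Finset Γ) = 0 := by
  unfold diamSet
  rw [dif_pos (Finset.singleton_nonempty γ)]
  simp

lemma distSetSet_singleton_right {Z : Finset Γ} (h : Z.Nonempty) (γ : Γ) :
    distSetSet Z {γ} = distPtSet γ Z := by
  unfold distSetSet distPtSet
  rw [dif_pos ⟨h, Finset.singleton_nonempty γ⟩, dif_pos h]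
  exact Finset.inf'_congr h rfl fun z _ => by simp [dist_comm]

end MetricHelpers
set_option maxHeartbeats 2000000 in
/-- **Lieb–Robinson bound.**  For a localized frame `{χ_γ}` with constant
`G` and rate `ξ`, and an interaction `Φ(Z) = Σ_k f_k(Z)(M_k(Z) + M_k(Z)^*)` on the CAR
algebra with `C_Φ(ζ,ξ) < ∞`, the finite-volume dynamics
`τ_t^Λ(A) = e^{itH_Λ} A e^{-itH_Λ}`, `H_Λ = Σ_{Z ⊆ Λ} Φ(Z)`, satisfies
`‖{τ_t^Λ(a_γ^♯), a_{γ'}^♯}‖ ≤ G e^{-ζ(d(γ,γ') - v|t|)}` with `v = 16 G C_Φ(ζ,ξ)/ζ`. -/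
theorem stmt_6
    {H : Type*} [NormedAddCommGroup H] [InnerProductSpace ℂ H] [CompleteSpace H]
    {Γ : Type*} [Countable Γ] [MetricSpace Γ]
    (hm : ∀ ε : ℝ, 0 < ε → ∃ C : ℝ, ∀ γ : Γ,
      ∃ s : ℝ, s ≤ C ∧ HasSum (fun ξ' : Γ => Real.exp (-ε * dist γ ξ')) s)
    (ξ : ℝ) (hξ : 0 < ξ)
    (χ : Γ → H) (A B : ℝ) (hA : 0 < A) (hAB : A ≤ B)
    (hframe : ∀ ψ : H, ∃ s : ℝ,
      HasSum (fun γ : Γ => ‖(inner ℂ (χ γ) ψ : ℂ)‖ ^ 2) s ∧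
        A * ‖ψ‖ ^ 2 ≤ s ∧ s ≤ B * ‖ψ‖ ^ 2)
    (G : ℝ) (hG : 1 ≤ G)
    (hnorm : ∀ γ : Γ, ‖χ γ‖ = 1)
    (hloc : ∀ γ γ' : Γ, ‖(inner ℂ (χ γ) (χ γ') : ℂ)‖ ≤ G * Real.exp (-ξ * dist γ γ'))
    {𝒜 : Type*} [NormedRing 𝒜] [StarRing 𝒜] [CStarRing 𝒜] [NormedAlgebra ℂ 𝒜]
    [StarModule ℂ 𝒜] [CompleteSpace 𝒜]
    (a : H → 𝒜)
    (hadd : ∀ ψ φ : H, a (ψ + φ) = a ψ + a φ)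
    (hsmul : ∀ (c : ℂ) (ψ : H), a (c • ψ) = (starRingEnd ℂ c) • a ψ)
    (hCAR1 : ∀ ψ φ : H, a ψ * star (a φ) + star (a φ) * a ψ = (inner ℂ ψ φ : ℂ) • 1)
    (hCAR2 : ∀ ψ φ : H, a ψ * a φ + a φ * a ψ = 0)
    (ν : ℕ)
    (f : Finset Γ → ℕ → ℝ) (hf0 : ∀ (Z : Finset Γ) (k : ℕ), 0 ≤ f Z k)
    (M : Finset Γ → ℕ → 𝒜)
    (hM : ∀ (Z : Finset Γ) (k : ℕ), 1 ≤ k → k ≤ Z.card → ∃ l : List 𝒜,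
      l.length = 2 * k ∧ (∀ x ∈ l, ∃ z ∈ Z, x = a (χ z) ∨ x = star (a (χ z))) ∧
        M Z k = l.prod)
    (ζ CΦ : ℝ) (hζ : 0 < ζ) (hζξ : ζ < ξ)
    (hC : ∀ (γ : Γ) (Z' : Finset Γ), Z'.Nonempty → ∃ s : ℝ,
      HasSum (fun Z : Finset Γ => ∑ k ∈ Finset.Icc 1 Z.card,
        (k : ℝ) ^ 2 * f Z k * (1 + diamSet Z) ^ ν *
          Real.exp (-(ζ * distPtSet γ Z)) * Real.exp (-(ξ * distSetSet Z Z'))) s ∧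
      Real.exp (ζ * distPtSet γ Z') / (1 + diamSet Z') ^ ν * s ≤ CΦ) :
    ∀ (Λ : Finset Γ) (t : ℝ) (γ γ' : Γ) (A₀ A₁ : 𝒜),
      (A₀ = a (χ γ) ∨ A₀ = star (a (χ γ))) →
      (A₁ = a (χ γ') ∨ A₁ = star (a (χ γ'))) →
      ∀ HΛ : 𝒜,
        HΛ = ∑ Z ∈ Λ.powerset, ∑ k ∈ Finset.Icc 1 Z.card,
          ((f Z k : ℝ) : ℂ) • (M Z k + star (M Z k)) →
        ‖NormedSpace.exp ((Complex.I * t) • HΛ) * A₀ *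
            NormedSpace.exp (-((Complex.I * t) • HΛ)) * A₁ +
          A₁ * (NormedSpace.exp ((Complex.I * t) • HΛ) * A₀ *
            NormedSpace.exp (-((Complex.I * t) • HΛ)))‖
          ≤ G * Real.exp (-ζ * (dist γ γ' - 16 * G * CΦ / ζ * |t|)) := by
  intro Λ t γ γ' A₀ A₁ h₀ h₁ HΛ hHΛ
  have hG0 : (0:ℝ) < G := lt_of_lt_of_le one_pos hG
  -- trivial algebra
  rcases subsingleton_or_nontrivial 𝒜 with hss | hnt
  · have hz : (NormedSpace.exp ((Complex.I * t) • HΛ) * A₀ *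
            NormedSpace.exp (-((Complex.I * t) • HΛ)) * A₁ +
          A₁ * (NormedSpace.exp ((Complex.I * t) • HΛ) * A₀ *
            NormedSpace.exp (-((Complex.I * t) • HΛ)))) = 0 := Subsingleton.elim _ _
    rw [hz, norm_zero]
    positivity
  -- basic facts
  have hone : ‖(1:𝒜)‖ = 1 := CStarRing.norm_one
  have hCΦ0 : 0 ≤ CΦ := by
    obtain ⟨s0, hs0, hb0⟩ := hC γ {γ} (Finset.singleton_nonempty γ)
    have hs0n : 0 ≤ s0 := hs0.nonneg fun Z => Finset.sum_nonneg fun k _ => by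
      have := hf0 Z k
      have := diamSet_nonneg Z
      positivity
    rw [distPtSet_singleton, diamSet_singleton, dist_self] at hb0
    simpa using le_trans hs0n (by simpa using hb0)
  set cv : ℝ := 8 * G * CΦ with hcv
  set Rv : ℝ := ∑ Z ∈ Λ.powerset, ∑ k ∈ Finset.Icc 1 Z.card, 8 * (k:ℝ)^2 * f Z k * G with hRv
  have hcv0 : 0 ≤ cv := by positivity
  have hRv0 : 0 ≤ Rv := by
    apply Finset.sum_nonneg; intro Z _
    apply Finset.sum_nonneg; intro k _
    have := hf0 Z k; positivity
  have hsH : star HΛ = HΛ := by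
    rw [hHΛ, star_sum]
    refine Finset.sum_congr rfl fun Z _ => ?_
    rw [star_sum]
    refine Finset.sum_congr rfl fun k _ => ?_
    rw [star_smul, star_add, star_star, add_comm]
    congr 1
    simp [Complex.star_def, Complex.conj_ofReal]
  -- CAR pairing
  have normA : ∀ (γ₀ : Γ) (X : 𝒜), (X = a (χ γ₀) ∨ X = star (a (χ γ₀))) → ‖X‖ ≤ 1 := by
    intro γ₀ X hX
    rcases hX with rfl | rfl
    · calc ‖a (χ γ₀)‖ ≤ ‖χ γ₀‖ := norm_car_le a hCAR1 hCAR2 (χ γ₀)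
      _ = 1 := hnorm γ₀
    · rw [norm_star]
      calc ‖a (χ γ₀)‖ ≤ ‖χ γ₀‖ := norm_car_le a hCAR1 hCAR2 (χ γ₀)
      _ = 1 := hnorm γ₀
  have pair : ∀ (γ₀ γ₁ : Γ) (X Y : 𝒜), (X = a (χ γ₀) ∨ X = star (a (χ γ₀))) →
      (Y = a (χ γ₁) ∨ Y = star (a (χ γ₁))) →
      ∃ cc : ℂ, X * Y + Y * X = cc • 1 ∧ ‖cc‖ ≤ G * Real.exp (-ξ * dist γ₀ γ₁) := by
    intro γ₀ γ₁ X Y hX hY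
    rcases hX with rfl | rfl <;> rcases hY with rfl | rfl
    · exact ⟨0, by rw [hCAR2, zero_smul], by rw [norm_zero]; positivity⟩
    · exact ⟨inner ℂ (χ γ₀) (χ γ₁), hCAR1 (χ γ₀) (χ γ₁), hloc γ₀ γ₁⟩
    · refine ⟨inner ℂ (χ γ₁) (χ γ₀), ?_, by rw [dist_comm]; exact hloc γ₁ γ₀⟩
      rw [add_comm]; exact hCAR1 (χ γ₁) (χ γ₀)
    · refine ⟨0, ?_, by rw [norm_zero]; positivity⟩
      have h0 := congrArg star (hCAR2 (χ γ₁) (χ γ₀))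
      rw [star_add, star_mul, star_mul, star_zero] at h0
      rw [h0, zero_smul]
  have smul_one_inj : ∀ (u v : ℂ), u • (1:𝒜) = v • 1 → u = v := by
    intro u v huv
    have h2 : (u - v) • (1:𝒜) = 0 := by rw [sub_smul, huv, sub_self]
    have h3 : ‖u - v‖ * ‖(1:𝒜)‖ = 0 := by rw [← norm_smul, h2, norm_zero]
    rw [hone, mul_one, norm_eq_zero] at h3
    exact sub_eq_zero.mp h3
  -- the key summation estimate
  have keyL : ∀ γ₀ γ₁ : Γ,
      ∑ Z ∈ Λ.powerset, ∑ k ∈ Finset.Icc 1 Z.card,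
        8 * (k:ℝ)^2 * f Z k * G * Real.exp (-ξ * distPtSet γ₀ Z) *
          (G * Real.exp (-ζ * distPtSet γ₁ Z))
        ≤ G * cv * Real.exp (-ζ * dist γ₀ γ₁) := by
    intro γ₀ γ₁
    obtain ⟨s0, hs0, hb0⟩ := hC γ₁ {γ₀} (Finset.singleton_nonempty γ₀)
    have hs0le : s0 ≤ CΦ * Real.exp (-ζ * dist γ₀ γ₁) := by
      rw [distPtSet_singleton, diamSet_singleton] at hb0
      simp only [add_zero, one_pow, div_one] at hb0
      have h2 : s0 = Real.exp (-(ζ * dist γ₁ γ₀)) * (Real.exp (ζ * dist γ₁ γ₀) * s0) := by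
        rw [← mul_assoc, ← Real.exp_add]; simp
      rw [h2, dist_comm γ₀ γ₁]
      calc Real.exp (-(ζ * dist γ₁ γ₀)) * (Real.exp (ζ * dist γ₁ γ₀) * s0)
          ≤ Real.exp (-(ζ * dist γ₁ γ₀)) * CΦ :=
            mul_le_mul_of_nonneg_left hb0 (Real.exp_nonneg _)
        _ = CΦ * Real.exp (-ζ * dist γ₁ γ₀) := by rw [mul_comm, neg_mul]
    have hterm : ∀ Z ∈ Λ.powerset,
        ∑ k ∈ Finset.Icc 1 Z.card,
          8 * (k:ℝ)^2 * f Z k * G * Real.exp (-ξ * distPtSet γ₀ Z) *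
            (G * Real.exp (-ζ * distPtSet γ₁ Z))
        ≤ 8 * G^2 * (∑ k ∈ Finset.Icc 1 Z.card,
            (k:ℝ)^2 * f Z k * (1 + diamSet Z)^ν * Real.exp (-(ζ * distPtSet γ₁ Z)) *
              Real.exp (-(ξ * distSetSet Z {γ₀}))) := by
      intro Z _
      rcases Z.eq_empty_or_nonempty with rfl | hZne
      · simp
      rw [Finset.mul_sum]
      refine Finset.sum_le_sum fun k _ => ?_
      rw [distSetSet_singleton_right hZne γ₀]
      have hD1 : (1:ℝ) ≤ (1 + diamSet Z)^ν :=
        one_le_pow₀ (by linarith [diamSet_nonneg Z])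
      have hf := hf0 Z k
      have e1 : (0:ℝ) < Real.exp (-ξ * distPtSet γ₀ Z) := Real.exp_pos _
      have e2 : (0:ℝ) < Real.exp (-ζ * distPtSet γ₁ Z) := Real.exp_pos _
      calc 8 * (k:ℝ)^2 * f Z k * G * Real.exp (-ξ * distPtSet γ₀ Z) *
            (G * Real.exp (-ζ * distPtSet γ₁ Z))
          = 8 * G^2 * ((k:ℝ)^2 * f Z k * 1 * Real.exp (-(ζ * distPtSet γ₁ Z)) *
              Real.exp (-(ξ * distPtSet γ₀ Z))) := by rw [neg_mul, neg_mul]; ring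
        _ ≤ 8 * G^2 * ((k:ℝ)^2 * f Z k * (1 + diamSet Z)^ν * Real.exp (-(ζ * distPtSet γ₁ Z)) *
              Real.exp (-(ξ * distPtSet γ₀ Z))) := by
            have h8 : (0:ℝ) ≤ 8 * G^2 := by positivity
            refine mul_le_mul_of_nonneg_left ?_ h8
            refine mul_le_mul_of_nonneg_right ?_ (Real.exp_nonneg _)
            refine mul_le_mul_of_nonneg_right ?_ (Real.exp_nonneg _)
            nlinarith [sq_nonneg (k:ℝ), hD1, mul_nonneg (sq_nonneg (k:ℝ)) hf]
    have hsum : ∑ Z ∈ Λ.powerset, ∑ k ∈ Finset.Icc 1 Z.card,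
          (k:ℝ)^2 * f Z k * (1 + diamSet Z)^ν * Real.exp (-(ζ * distPtSet γ₁ Z)) *
            Real.exp (-(ξ * distSetSet Z {γ₀})) ≤ s0 := by
      refine sum_le_hasSum _ (fun Z _ => Finset.sum_nonneg fun k _ => ?_) hs0
      have hf := hf0 Z k
      have hD := diamSet_nonneg Z
      positivity
    calc ∑ Z ∈ Λ.powerset, ∑ k ∈ Finset.Icc 1 Z.card,
          8 * (k:ℝ)^2 * f Z k * G * Real.exp (-ξ * distPtSet γ₀ Z) *
            (G * Real.exp (-ζ * distPtSet γ₁ Z))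
        ≤ ∑ Z ∈ Λ.powerset, 8 * G^2 * (∑ k ∈ Finset.Icc 1 Z.card,
            (k:ℝ)^2 * f Z k * (1 + diamSet Z)^ν * Real.exp (-(ζ * distPtSet γ₁ Z)) *
              Real.exp (-(ξ * distSetSet Z {γ₀}))) := Finset.sum_le_sum hterm
      _ = 8 * G^2 * ∑ Z ∈ Λ.powerset, ∑ k ∈ Finset.Icc 1 Z.card,
            (k:ℝ)^2 * f Z k * (1 + diamSet Z)^ν * Real.exp (-(ζ * distPtSet γ₁ Z)) *
              Real.exp (-(ξ * distSetSet Z {γ₀})) := by rw [Finset.mul_sum]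
      _ ≤ 8 * G^2 * s0 := by
          refine mul_le_mul_of_nonneg_left hsum (by positivity)
      _ ≤ 8 * G^2 * (CΦ * Real.exp (-ζ * dist γ₀ γ₁)) := by
          refine mul_le_mul_of_nonneg_left hs0le (by positivity)
      _ = G * cv * Real.exp (-ζ * dist γ₀ γ₁) := by rw [hcv]; ring
  -- main induction
  have main : ∀ n : ℕ, ∀ (γ₀ γ₁ : Γ) (X Y : 𝒜),
      (X = a (χ γ₀) ∨ X = star (a (χ γ₀))) → (Y = a (χ γ₁) ∨ Y = star (a (χ γ₁))) →
      ∀ s : ℝ, 0 ≤ s →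
      ‖NormedSpace.exp ((Complex.I * s) • HΛ) * X *
          NormedSpace.exp (-((Complex.I * s) • HΛ)) * Y +
        Y * (NormedSpace.exp ((Complex.I * s) • HΛ) * X *
          NormedSpace.exp (-((Complex.I * s) • HΛ)))‖
        ≤ G * Real.exp (-ζ * dist γ₀ γ₁) *
            (∑ j ∈ Finset.range n, (cv * s)^j / (j.factorial : ℝ))
          + 2 * (Rv * s)^n / (n.factorial : ℝ) := by
    intro n
    induction n with
    | zero =>
      intro γ₀ γ₁ X Y hX hY s hs
      have hEs := norm_exp_smul_le HΛ hsH s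
      have hEs' := norm_exp_smul_le' HΛ hsH s
      have hX1 := normA γ₀ X hX
      have hY1 := normA γ₁ Y hY
      have hmul : ‖NormedSpace.exp ((Complex.I * s) • HΛ) * X *
          NormedSpace.exp (-((Complex.I * s) • HΛ))‖ ≤ 1 := by
        calc ‖NormedSpace.exp ((Complex.I * s) • HΛ) * X *
            NormedSpace.exp (-((Complex.I * s) • HΛ))‖
            ≤ ‖NormedSpace.exp ((Complex.I * s) • HΛ) * X‖ *
              ‖NormedSpace.exp (-((Complex.I * s) • HΛ))‖ := norm_mul_le _ _
          _ ≤ (‖NormedSpace.exp ((Complex.I * s) • HΛ)‖ * ‖X‖) *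
              ‖NormedSpace.exp (-((Complex.I * s) • HΛ))‖ :=
            mul_le_mul_of_nonneg_right (norm_mul_le _ _) (norm_nonneg _)
          _ ≤ (1 * 1) * 1 := by
            refine mul_le_mul (mul_le_mul hEs hX1 (norm_nonneg _) zero_le_one) hEs'
              (norm_nonneg _) (by norm_num)
          _ = 1 := by ring
      simp only [Finset.range_zero, Finset.sum_empty, mul_zero, zero_add, pow_zero,
        Nat.factorial_zero, Nat.cast_one]
      calc ‖NormedSpace.exp ((Complex.I * s) • HΛ) * X *
          NormedSpace.exp (-((Complex.I * s) • HΛ)) * Y +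
        Y * (NormedSpace.exp ((Complex.I * s) • HΛ) * X *
          NormedSpace.exp (-((Complex.I * s) • HΛ)))‖
          ≤ ‖NormedSpace.exp ((Complex.I * s) • HΛ) * X *
              NormedSpace.exp (-((Complex.I * s) • HΛ)) * Y‖ +
            ‖Y * (NormedSpace.exp ((Complex.I * s) • HΛ) * X *
              NormedSpace.exp (-((Complex.I * s) • HΛ)))‖ := norm_add_le _ _
        _ ≤ 1 * 1 + 1 * 1 := by
            refine add_le_add (le_trans (norm_mul_le _ _) ?_) (le_trans (norm_mul_le _ _) ?_)
            · exact mul_le_mul hmul hY1 (norm_nonneg _) zero_le_one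
            · exact mul_le_mul hY1 hmul (norm_nonneg _) zero_le_one
        _ ≤ 2 * 1 / 1 := by norm_num
    | succ n IH =>
      intro γ₀ γ₁ X Y hX hY τ hτ
      set Kc : ℝ := G * Real.exp (-ζ * dist γ₀ γ₁) * cv with hKc
      set Qc : ℝ := 2 * Rv^(n+1) / (n.factorial : ℝ) with hQc
      set φ : ℝ → ℝ := fun u =>
        (∑ j ∈ Finset.range n, Kc * cv^j / (j.factorial : ℝ) * u^j) + Qc * u^n with hφ
      set CC : 𝒜 := (Complex.I • HΛ) * X - X * (Complex.I • HΛ) with hCCdef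
      set g : ℝ → 𝒜 := fun u =>
        NormedSpace.exp ((Complex.I * u) • HΛ) * X *
          NormedSpace.exp (-((Complex.I * u) • HΛ)) * Y +
        Y * (NormedSpace.exp ((Complex.I * u) • HΛ) * X *
          NormedSpace.exp (-((Complex.I * u) • HΛ))) with hgdef
      set gd : ℝ → 𝒜 := fun u =>
        NormedSpace.exp ((Complex.I * u) • HΛ) * CC *
          NormedSpace.exp (-((Complex.I * u) • HΛ)) * Y +
        Y * (NormedSpace.exp ((Complex.I * u) • HΛ) * CC *
          NormedSpace.exp (-((Complex.I * u) • HΛ))) with hgddef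
      have hderiv : ∀ u : ℝ, HasDerivAt g (gd u) u := fun u =>
        ((hasDerivAt_conj HΛ X u).mul_const Y).add ((hasDerivAt_conj HΛ X u).const_mul Y)
      have cU : Continuous (fun u : ℝ => NormedSpace.exp ((Complex.I * u) • HΛ)) :=
        letI : NormedAlgebra ℚ 𝒜 := NormedAlgebra.restrictScalars ℚ ℂ 𝒜
        NormedSpace.exp_continuous.comp
          ((continuous_const.mul Complex.continuous_ofReal).smul continuous_const)
      have cV : Continuous (fun u : ℝ => NormedSpace.exp (-((Complex.I * u) • HΛ))) :=
        letI : NormedAlgebra ℚ 𝒜 := NormedAlgebra.restrictScalars ℚ ℂ 𝒜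
        NormedSpace.exp_continuous.comp
          (((continuous_const.mul Complex.continuous_ofReal).smul continuous_const).neg)
      have cgd : Continuous gd :=
        (((cU.mul continuous_const).mul cV).mul continuous_const).add
          (continuous_const.mul ((cU.mul continuous_const).mul cV))
      have cφ : Continuous φ := by
        apply Continuous.add
        · exact continuous_finset_sum _ fun j _ => continuous_const.mul (continuous_pow j)
        · exact continuous_const.mul (continuous_pow n)
      -- pointwise derivative bound
      have hptws : ∀ u : ℝ, 0 ≤ u → ‖gd u‖ ≤ φ u := by
        intro u hu0
        classical
        set Eu : 𝒜 := NormedSpace.exp ((Complex.I * (u:ℂ)) • HΛ) with hEu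
        set Eu' : 𝒜 := NormedSpace.exp (-((Complex.I * (u:ℂ)) • HΛ)) with hEu'
        have hUV : Eu * Eu' = 1 := exp_mul_exp_neg _
        have hVU : Eu' * Eu = 1 := exp_neg_mul_exp _
        have hEun : ‖Eu‖ ≤ 1 := norm_exp_smul_le HΛ hsH u
        have hEun' : ‖Eu'‖ ≤ 1 := norm_exp_smul_le' HΛ hsH u
        set Θ : 𝒜 →ₗ[ℂ] 𝒜 := thetaMap Eu Eu' Y with hΘ
        set SS : ℝ := ∑ j ∈ Finset.range n, (cv*u)^j / (j.factorial : ℝ) with hSS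
        set REM : ℝ := 2*(Rv*u)^n / (n.factorial : ℝ) with hREM
        have hSS0 : 0 ≤ SS := by
          rw [hSS]
          refine Finset.sum_nonneg fun j _ => ?_
          positivity
        have hREM0 : 0 ≤ REM := by rw [hREM]; positivity
        have IH' : ∀ (Z : Finset Γ) (z : Γ), z ∈ Z →
            ∀ y : 𝒜, (y = a (χ z) ∨ y = star (a (χ z))) →
            ‖Eu * y * Eu' * Y + Y * (Eu * y * Eu')‖
              ≤ G * Real.exp (-ζ * distPtSet γ₁ Z) * SS + REM := by
          intro Z z hz y hy
          refine le_trans (IH z γ₁ y Y hy hY u hu0) ?_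
          refine add_le_add_left (mul_le_mul_of_nonneg_right
            (mul_le_mul_of_nonneg_left (Real.exp_le_exp.mpr ?_) hG0.le) hSS0) _
          have hd : distPtSet γ₁ Z ≤ dist z γ₁ := by
            rw [dist_comm]; exact distPtSet_le γ₁ hz
          nlinarith [mul_le_mul_of_nonneg_left hd hζ.le]
        set cf : 𝒜 → ℂ := fun x => if h : ∃ cc : ℂ, X * x + x * X = cc • 1
          then h.choose else 0 with hcfdef
        have hcf : ∀ (z : Γ) (x : 𝒜), (x = a (χ z) ∨ x = star (a (χ z))) →
            (X * x + x * X = cf x • 1 ∧ ‖cf x‖ ≤ G * Real.exp (-ξ * dist γ₀ z)) := by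
          intro z x hxz
          obtain ⟨cc, hcc, hccb⟩ := pair γ₀ z X x hX hxz
          have hex : ∃ cc : ℂ, X * x + x * X = cc • 1 := ⟨cc, hcc⟩
          have h1 : X * x + x * X = cf x • 1 := by
            rw [hcfdef]
            simp only
            rw [dif_pos hex]
            exact hex.choose_spec
          have h2 : cf x = cc := smul_one_inj _ _ (h1.symm.trans hcc)
          exact ⟨h1, h2 ▸ hccb⟩
        have mono : ∀ (Z : Finset Γ) (k : ℕ), 1 ≤ k → ∀ (m : List 𝒜), m.length = 2*k →
            (∀ x ∈ m, ∃ z ∈ Z, x = a (χ z) ∨ x = star (a (χ z))) →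
            ‖Θ (antiT X m)‖ ≤ (2*(k:ℝ)) * (G * Real.exp (-ξ * distPtSet γ₀ Z)) *
              ((2*(k:ℝ)-1) * (G * Real.exp (-ζ * distPtSet γ₁ Z) * SS + REM)) := by
          intro Z k hk1 m hmlen hmmem
          have hpar : ∀ x ∈ m, X * x + x * X = cf x • 1 := by
            intro x hx
            obtain ⟨z, hz, hform⟩ := hmmem x hx
            exact (hcf z x hform).1
          rw [antiT_scalar X m cf hpar, map_sum]
          refine le_trans (norm_sum_le _ _) ?_
          have hterm : ∀ j ∈ Finset.range m.length,
              ‖Θ ((-1:ℂ)^j • cf (m.getD j 0) • (m.eraseIdx j).prod)‖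
              ≤ (G * Real.exp (-ξ * distPtSet γ₀ Z)) *
                ((2*(k:ℝ)-1) * (G * Real.exp (-ζ * distPtSet γ₁ Z) * SS + REM)) := by
            intro j hj
            rw [Finset.mem_range] at hj
            rw [map_smul, map_smul, norm_smul, norm_smul, norm_pow, norm_neg, norm_one,
              one_pow, one_mul]
            have hxmem : m.getD j 0 ∈ m := by
              rw [List.getD_eq_getElem m 0 hj]
              exact List.getElem_mem _
            obtain ⟨z, hz, hform⟩ := hmmem _ hxmem
            have hb1 : ‖cf (m.getD j 0)‖ ≤ G * Real.exp (-ξ * distPtSet γ₀ Z) := by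
              refine le_trans (hcf z _ hform).2 ?_
              refine mul_le_mul_of_nonneg_left (Real.exp_le_exp.mpr ?_) hG0.le
              have hd := distPtSet_le γ₀ hz
              nlinarith [mul_le_mul_of_nonneg_left hd hξ.le]
            have hb2 : ‖Θ (m.eraseIdx j).prod‖
                ≤ (2*(k:ℝ)-1) * (G * Real.exp (-ζ * distPtSet γ₁ Z) * SS + REM) := by
              set m' := m.eraseIdx j with hm'
              have hm'sub : ∀ x ∈ m', x ∈ m := fun x hx => List.eraseIdx_subset hx
              have hm'len : m'.length = 2*k - 1 := by
                rw [hm', List.length_eraseIdx, if_pos hj, hmlen]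
              set ml := m'.map (fun y => Eu * y * Eu') with hml
              have hprod : Eu * m'.prod * Eu' = ml.prod := conj_list_prod Eu Eu' hUV hVU m'
              have hΘval : Θ m'.prod = ml.prod * Y + Y * ml.prod := by
                rw [hΘ, thetaMap_apply, hprod]
              rw [hΘval]
              have hodd : Odd ml.length := by
                rw [hml, List.length_map, hm'len]
                exact ⟨k-1, by omega⟩
              rw [anticomm_eq_antiT Y ml hodd]
              refine le_trans (norm_antiT_le norm_one_le' Y ml ?_) ?_
              · intro y' hy'
                rw [hml, List.mem_map] at hy'
                obtain ⟨y, hy, rfl⟩ := hy'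
                obtain ⟨z', hz', hform'⟩ := hmmem y (hm'sub y hy)
                calc ‖Eu * y * Eu'‖ ≤ ‖Eu * y‖ * ‖Eu'‖ := norm_mul_le _ _
                _ ≤ ‖Eu‖*‖y‖*‖Eu'‖ :=
                    mul_le_mul_of_nonneg_right (norm_mul_le _ _) (norm_nonneg _)
                _ ≤ 1*1*1 := by
                    refine mul_le_mul (mul_le_mul hEun (normA z' y hform') (norm_nonneg _)
                      zero_le_one) hEun' (norm_nonneg _) (by norm_num)
                _ = 1 := by ring
              · have hlsb : ∀ w ∈ ml.map (fun x => ‖Y * x + x * Y‖),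
                    w ≤ G * Real.exp (-ζ * distPtSet γ₁ Z) * SS + REM := by
                  intro w hw
                  rw [List.mem_map] at hw
                  obtain ⟨y', hy', rfl⟩ := hw
                  rw [hml, List.mem_map] at hy'
                  obtain ⟨y, hy, rfl⟩ := hy'
                  obtain ⟨z', hz', hform'⟩ := hmmem y (hm'sub y hy)
                  calc ‖Y * (Eu * y * Eu') + (Eu * y * Eu') * Y‖
                      = ‖Eu * y * Eu' * Y + Y * (Eu * y * Eu')‖ := by rw [add_comm]
                  _ ≤ _ := IH' Z z' hz' y hform'
                refine le_trans (List.sum_le_card_nsmul _ _ hlsb) ?_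
                rw [List.length_map, hml, List.length_map, hm'len, nsmul_eq_mul]
                have hcast : ((2*k-1:ℕ):ℝ) = 2*(k:ℝ)-1 := by
                  rw [Nat.cast_sub (by omega : 1 ≤ 2*k)]
                  push_cast
                  ring
                rw [hcast]
            exact mul_le_mul hb1 hb2 (norm_nonneg _) (by positivity)
          refine le_trans (Finset.sum_le_sum hterm) ?_
          rw [Finset.sum_const, Finset.card_range, hmlen, nsmul_eq_mul]
          refine le_of_eq ?_
          push_cast
          ring
        have hW : ∀ Z ∈ Λ.powerset, ∀ k ∈ Finset.Icc 1 Z.card,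
            ‖Θ ((M Z k + star (M Z k)) * X - X * (M Z k + star (M Z k)))‖
            ≤ 8*(k:ℝ)^2 * G * Real.exp (-ξ * distPtSet γ₀ Z) *
                (G * Real.exp (-ζ * distPtSet γ₁ Z) * SS + REM) := by
          intro Z hZ k hk
          rw [Finset.mem_Icc] at hk
          obtain ⟨l, hlen, hmem, hMeq⟩ := hM Z k hk.1 hk.2
          set lst := (l.map star).reverse with hlst
          have hlstlen : lst.length = 2*k := by
            rw [hlst, List.length_reverse, List.length_map, hlen]
          have hlstmem : ∀ x ∈ lst, ∃ z ∈ Z, x = a (χ z) ∨ x = star (a (χ z)) := by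
            intro x hx
            rw [hlst, List.mem_reverse, List.mem_map] at hx
            obtain ⟨y, hy, rfl⟩ := hx
            obtain ⟨z, hz, hform⟩ := hmem y hy
            refine ⟨z, hz, ?_⟩
            rcases hform with rfl | rfl
            · right; rfl
            · left; rw [star_star]
          have hstar : star (M Z k) = lst.prod := by rw [hMeq, star_list_prod]
          have hsplit : (M Z k + star (M Z k)) * X - X * (M Z k + star (M Z k))
              = -(antiT X l) + -(antiT X lst) := by
            rw [hstar, hMeq, ← comm_eq_antiT X l (by rw [hlen]; exact even_two_mul k),
              ← comm_eq_antiT X lst (by rw [hlstlen]; exact even_two_mul k)]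
            noncomm_ring
          rw [hsplit, map_add, map_neg, map_neg]
          have hb1 := mono Z k hk.1 l hlen hmem
          have hb2 := mono Z k hk.1 lst hlstlen hlstmem
          have hp0 : (0:ℝ) ≤ G * Real.exp (-ξ * distPtSet γ₀ Z) := by positivity
          have hq0 : (0:ℝ) ≤ G * Real.exp (-ζ * distPtSet γ₁ Z) * SS + REM := by positivity
          have hk1R : (1:ℝ) ≤ (k:ℝ) := by exact_mod_cast hk.1
          calc ‖-(Θ (antiT X l)) + -(Θ (antiT X lst))‖
              ≤ ‖Θ (antiT X l)‖ + ‖Θ (antiT X lst)‖ := by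
                refine le_trans (norm_add_le _ _) ?_
                rw [norm_neg, norm_neg]
            _ ≤ 2 * ((2*(k:ℝ)) * (G * Real.exp (-ξ * distPtSet γ₀ Z)) *
                ((2*(k:ℝ)-1) * (G * Real.exp (-ζ * distPtSet γ₁ Z) * SS + REM))) := by
                linarith
            _ ≤ 8*(k:ℝ)^2 * G * Real.exp (-ξ * distPtSet γ₀ Z) *
                (G * Real.exp (-ζ * distPtSet γ₁ Z) * SS + REM) := by
                nlinarith [mul_nonneg hp0 hq0]
        have hgdΘ : gd u = Θ CC := by
          simp only [hgddef, hΘ, hEu, hEu', hCCdef, thetaMap_apply]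
        have hCCsum : CC = ∑ Z ∈ Λ.powerset, ∑ k ∈ Finset.Icc 1 Z.card,
            (Complex.I * ((f Z k : ℝ):ℂ)) •
              ((M Z k + star (M Z k)) * X - X * (M Z k + star (M Z k))) := by
          rw [hCCdef, hHΛ]
          simp only [Finset.smul_sum, Finset.sum_mul, Finset.mul_sum, smul_mul_assoc,
            mul_smul_comm, smul_smul, ← Finset.sum_sub_distrib, ← smul_sub]
        have step1 : ‖gd u‖ ≤ ∑ Z ∈ Λ.powerset, ∑ k ∈ Finset.Icc 1 Z.card,
            f Z k * (8*(k:ℝ)^2 * G * Real.exp (-ξ * distPtSet γ₀ Z) *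
              (G * Real.exp (-ζ * distPtSet γ₁ Z) * SS + REM)) := by
          rw [hgdΘ, hCCsum, map_sum]
          refine le_trans (norm_sum_le _ _) ?_
          refine Finset.sum_le_sum fun Z hZ => ?_
          rw [map_sum]
          refine le_trans (norm_sum_le _ _) ?_
          refine Finset.sum_le_sum fun k hk => ?_
          rw [map_smul, norm_smul]
          have hnf : ‖Complex.I * ((f Z k : ℝ):ℂ)‖ = f Z k := by
            rw [norm_mul, Complex.norm_I, one_mul, Complex.norm_real]
            exact abs_of_nonneg (hf0 Z k)
          rw [hnf]
          exact mul_le_mul_of_nonneg_left (hW Z hZ k hk) (hf0 Z k)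
        have step2 : ∑ Z ∈ Λ.powerset, ∑ k ∈ Finset.Icc 1 Z.card,
            f Z k * (8*(k:ℝ)^2 * G * Real.exp (-ξ * distPtSet γ₀ Z) *
              (G * Real.exp (-ζ * distPtSet γ₁ Z) * SS + REM))
            = (∑ Z ∈ Λ.powerset, ∑ k ∈ Finset.Icc 1 Z.card,
                8*(k:ℝ)^2 * f Z k * G * Real.exp (-ξ * distPtSet γ₀ Z) *
                  (G * Real.exp (-ζ * distPtSet γ₁ Z))) * SS
              + (∑ Z ∈ Λ.powerset, ∑ k ∈ Finset.Icc 1 Z.card,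
                  8*(k:ℝ)^2 * f Z k * G * Real.exp (-ξ * distPtSet γ₀ Z)) * REM := by
          rw [Finset.sum_mul, Finset.sum_mul, ← Finset.sum_add_distrib]
          refine Finset.sum_congr rfl fun Z _ => ?_
          rw [Finset.sum_mul, Finset.sum_mul, ← Finset.sum_add_distrib]
          refine Finset.sum_congr rfl fun k _ => ?_
          ring
        have hRvbd : (∑ Z ∈ Λ.powerset, ∑ k ∈ Finset.Icc 1 Z.card,
            8*(k:ℝ)^2 * f Z k * G * Real.exp (-ξ * distPtSet γ₀ Z)) ≤ Rv := by
          rw [hRv]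
          refine Finset.sum_le_sum fun Z _ => Finset.sum_le_sum fun k _ => ?_
          have he1 : Real.exp (-ξ * distPtSet γ₀ Z) ≤ 1 := by
            rw [Real.exp_le_one_iff]
            have := distPtSet_nonneg γ₀ Z
            nlinarith [hξ.le]
          have hf := hf0 Z k
          nlinarith [mul_nonneg (mul_nonneg (by positivity : (0:ℝ) ≤ 8*(k:ℝ)^2) hf) hG0.le]
        have step3 : ‖gd u‖ ≤ Kc * SS + Rv * REM := by
          rw [hKc]
          calc ‖gd u‖ ≤ _ := step1
          _ = _ := step2
          _ ≤ (G * cv * Real.exp (-ζ * dist γ₀ γ₁)) * SS + Rv * REM := by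
              refine add_le_add (mul_le_mul_of_nonneg_right (keyL γ₀ γ₁) hSS0)
                (mul_le_mul_of_nonneg_right hRvbd hREM0)
          _ = G * Real.exp (-ζ * dist γ₀ γ₁) * cv * SS + Rv * REM := by ring
        refine le_trans step3 (le_of_eq ?_)
        rw [hφ]
        simp only
        rw [hSS, hREM, hQc, Finset.mul_sum]
        congr 1
        · refine Finset.sum_congr rfl fun j _ => ?_
          rw [mul_pow]
          ring
        · rw [mul_pow]
          have hn0 : ((n.factorial : ℝ)) ≠ 0 := by positivity
          field_simp
          ring

      -- FTC and conclusion
      have hFTC : (∫ u in (0:ℝ)..τ, gd u) = g τ - g 0 :=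
        intervalIntegral.integral_eq_sub_of_hasDerivAt (fun u _ => hderiv u)
          (cgd.intervalIntegrable 0 τ)
      have hg0 : ‖g 0‖ ≤ G * Real.exp (-ζ * dist γ₀ γ₁) := by
        have h00 : (Complex.I * ((0:ℝ):ℂ)) • HΛ = 0 := by push_cast; rw [mul_zero, zero_smul]
        obtain ⟨cc, hcc, hccb⟩ := pair γ₀ γ₁ X Y hX hY
        have hg0eq : g 0 = cc • 1 := by
          rw [hgdef]
          simp only [h00, neg_zero, NormedSpace.exp_zero, one_mul, mul_one]
          exact hcc
        rw [hg0eq]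
        calc ‖cc • (1:𝒜)‖ = ‖cc‖ * ‖(1:𝒜)‖ := norm_smul _ _
        _ ≤ ‖cc‖ := by rw [hone, mul_one]
        _ ≤ G * Real.exp (-ξ * dist γ₀ γ₁) := hccb
        _ ≤ G * Real.exp (-ζ * dist γ₀ γ₁) := by
            refine mul_le_mul_of_nonneg_left (Real.exp_le_exp.mpr ?_) hG0.le
            nlinarith [dist_nonneg (x := γ₀) (y := γ₁)]
      have hintbd : ‖∫ u in (0:ℝ)..τ, gd u‖ ≤ |∫ u in (0:ℝ)..τ, φ u| := by
        refine le_trans (intervalIntegral.norm_integral_le_of_norm_le hτ ?_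
          (cφ.intervalIntegrable 0 τ)) (le_abs_self _)
        refine Filter.Eventually.of_forall fun u hu => ?_
        exact hptws u hu.1.le
      have hφint : (∫ u in (0:ℝ)..τ, φ u)
          = (∑ j ∈ Finset.range n, Kc * cv^j / (j.factorial : ℝ) * (τ^(j+1)/((j:ℝ)+1)))
            + Qc * (τ^(n+1)/((n:ℝ)+1)) := by
        rw [hφ]
        beta_reduce
        rw [intervalIntegral.integral_add
          (f := fun u => ∑ j ∈ Finset.range n, Kc * cv^j / (j.factorial : ℝ) * u^j)
          (g := fun u => Qc * u^n)
          ((continuous_finset_sum _ fun j _ =>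
            continuous_const.mul (continuous_pow j)).intervalIntegrable 0 τ)
          ((continuous_const.mul (continuous_pow n)).intervalIntegrable 0 τ)]
        congr 1
        · rw [intervalIntegral.integral_finset_sum
            (f := fun j u => Kc * cv^j / (j.factorial : ℝ) * u^j) (fun j _ =>
            (continuous_const.mul (continuous_pow j)).intervalIntegrable 0 τ)]
          refine Finset.sum_congr rfl fun j _ => ?_
          rw [intervalIntegral.integral_const_mul, integral_pow]
          norm_num
        · rw [intervalIntegral.integral_const_mul, integral_pow]
          norm_num
      have hφnn : (0:ℝ) ≤ ∫ u in (0:ℝ)..τ, φ u := by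
        rw [hφint]
        have h1 : (0:ℝ) ≤ ∑ j ∈ Finset.range n,
            Kc * cv^j / (j.factorial : ℝ) * (τ^(j+1)/((j:ℝ)+1)) := by
          refine Finset.sum_nonneg fun j _ => ?_
          have hKc0 : 0 ≤ Kc := by rw [hKc]; positivity
          have : (0:ℝ) < (j.factorial : ℝ) := by positivity
          positivity
        have h2 : (0:ℝ) ≤ Qc * (τ^(n+1)/((n:ℝ)+1)) := by
          have hQc0 : 0 ≤ Qc := by rw [hQc]; positivity
          positivity
        linarith
      have hgle : ‖g τ‖ ≤ ‖g 0‖ + |∫ u in (0:ℝ)..τ, φ u| := by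
        calc ‖g τ‖ = ‖g 0 + (g τ - g 0)‖ := by rw [add_sub_cancel]
        _ ≤ ‖g 0‖ + ‖g τ - g 0‖ := norm_add_le _ _
        _ ≤ ‖g 0‖ + |∫ u in (0:ℝ)..τ, φ u| := by
            rw [← hFTC]; exact add_le_add_right hintbd _
      rw [abs_of_nonneg hφnn, hφint] at hgle
      refine le_trans hgle ?_
      refine le_trans (add_le_add_left hg0 _) ?_
      -- final arithmetic (in fact an identity)
      have harr : G * Real.exp (-ζ * dist γ₀ γ₁)
          + ((∑ j ∈ Finset.range n, Kc * cv^j / (j.factorial : ℝ) * (τ^(j+1)/((j:ℝ)+1)))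
            + Qc * (τ^(n+1)/((n:ℝ)+1)))
          = G * Real.exp (-ζ * dist γ₀ γ₁) *
              (∑ j ∈ Finset.range (n+1), (cv * τ)^j / (j.factorial : ℝ))
            + 2 * (Rv * τ)^(n+1) / ((n+1).factorial : ℝ) := by
        rw [Finset.sum_range_succ']
        have hterm : ∀ j : ℕ, Kc * cv^j / (j.factorial : ℝ) * (τ^(j+1)/((j:ℝ)+1))
            = G * Real.exp (-ζ * dist γ₀ γ₁) * ((cv * τ)^(j+1) / ((j+1).factorial : ℝ)) := by
          intro j
          rw [hKc, Nat.factorial_succ, mul_pow]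
          have hj : ((j.factorial : ℝ)) ≠ 0 := by positivity
          have hj1 : ((j:ℝ)+1) ≠ 0 := by positivity
          push_cast
          field_simp
          ring
        have hterm2 : Qc * (τ^(n+1)/((n:ℝ)+1))
            = 2 * (Rv * τ)^(n+1) / ((n+1).factorial : ℝ) := by
          rw [hQc, Nat.factorial_succ, mul_pow]
          have hn : ((n.factorial : ℝ)) ≠ 0 := by positivity
          have hn1 : ((n:ℝ)+1) ≠ 0 := by positivity
          push_cast
          field_simp
        rw [hterm2, mul_add, Finset.mul_sum]
        simp only [pow_zero, Nat.factorial_zero, Nat.cast_one, div_one, mul_one]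
        rw [Finset.sum_congr rfl fun j _ => hterm j]
        ring
      rw [harr]
  -- take the limit in n
  have concl : ∀ (γ₀ γ₁ : Γ) (X Y : 𝒜),
      (X = a (χ γ₀) ∨ X = star (a (χ γ₀))) → (Y = a (χ γ₁) ∨ Y = star (a (χ γ₁))) →
      ∀ s : ℝ, 0 ≤ s →
      ‖NormedSpace.exp ((Complex.I * s) • HΛ) * X *
          NormedSpace.exp (-((Complex.I * s) • HΛ)) * Y +
        Y * (NormedSpace.exp ((Complex.I * s) • HΛ) * X *
          NormedSpace.exp (-((Complex.I * s) • HΛ)))‖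
        ≤ G * Real.exp (-ζ * (dist γ₀ γ₁ - 16 * G * CΦ / ζ * s)) := by
    intro γ₀ γ₁ X Y hX hY s hs
    have hlim : Tendsto (fun n : ℕ => G * Real.exp (-ζ * dist γ₀ γ₁) * Real.exp (cv * s)
        + 2 * (Rv * s)^n / (n.factorial : ℝ)) atTop
        (𝓝 (G * Real.exp (-ζ * dist γ₀ γ₁) * Real.exp (cv * s) + 2 * 0)) := by
      apply Tendsto.add tendsto_const_nhds
      have h2 := FloorSemiring.tendsto_pow_div_factorial_atTop (Rv * s)
      have h3 := h2.const_mul (2:ℝ)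
      simpa [mul_div_assoc] using h3
    rw [mul_zero, add_zero] at hlim
    have hbd : ‖NormedSpace.exp ((Complex.I * s) • HΛ) * X *
          NormedSpace.exp (-((Complex.I * s) • HΛ)) * Y +
        Y * (NormedSpace.exp ((Complex.I * s) • HΛ) * X *
          NormedSpace.exp (-((Complex.I * s) • HΛ)))‖
        ≤ G * Real.exp (-ζ * dist γ₀ γ₁) * Real.exp (cv * s) := by
      refine ge_of_tendsto hlim (Filter.Eventually.of_forall fun n => ?_)
      calc ‖_‖ ≤ G * Real.exp (-ζ * dist γ₀ γ₁) *
            (∑ j ∈ Finset.range n, (cv * s)^j / (j.factorial : ℝ))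
          + 2 * (Rv * s)^n / (n.factorial : ℝ) := main n γ₀ γ₁ X Y hX hY s hs
      _ ≤ G * Real.exp (-ζ * dist γ₀ γ₁) * Real.exp (cv * s)
          + 2 * (Rv * s)^n / (n.factorial : ℝ) :=
          add_le_add_left (mul_le_mul_of_nonneg_left
            (Real.sum_le_exp_of_nonneg (by positivity) n) (by positivity)) _
    refine le_trans hbd ?_
    rw [show -ζ * (dist γ₀ γ₁ - 16 * G * CΦ / ζ * s)
        = -ζ * dist γ₀ γ₁ + ζ * (16 * G * CΦ / ζ * s) by ring,
      Real.exp_add, ← mul_assoc]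
    refine mul_le_mul_of_nonneg_left (Real.exp_le_exp.mpr ?_) (by positivity)
    have hv : ζ * (16 * G * CΦ / ζ * s) = 16 * G * CΦ * s := by
      field_simp
    rw [hv, hcv]
    nlinarith [mul_nonneg (mul_nonneg hG0.le hCΦ0) hs]
  -- conclude, splitting on the sign of t
  rcases le_or_gt 0 t with ht | ht
  · rw [abs_of_nonneg ht]
    exact concl γ γ' A₀ A₁ h₀ h₁ t ht
  · rw [abs_of_neg ht]
    set U := NormedSpace.exp ((Complex.I * (t:ℂ)) • HΛ) with hU
    set V := NormedSpace.exp (-((Complex.I * (t:ℂ)) • HΛ)) with hV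
    have hUV : U * V = 1 := exp_mul_exp_neg _
    have hVU : V * U = 1 := exp_neg_mul_exp _
    have hVexp : V = NormedSpace.exp ((Complex.I * ((-t : ℝ):ℂ)) • HΛ) := by
      rw [hV]; congr 1; push_cast; rw [mul_neg, neg_smul]
    have hUexp : U = NormedSpace.exp (-((Complex.I * ((-t : ℝ):ℂ)) • HΛ)) := by
      rw [hU]; congr 1; push_cast; rw [mul_neg, neg_smul, neg_neg]
    set X := U * A₀ * V * A₁ + A₁ * (U * A₀ * V) with hXdef
    have hX2 : V * X * U = V * A₁ * U * A₀ + A₀ * (V * A₁ * U) := by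
      rw [hXdef]
      calc V * (U * A₀ * V * A₁ + A₁ * (U * A₀ * V)) * U
          = (V * U) * A₀ * (V * A₁ * U) + (V * A₁ * U) * A₀ * (V * U) := by noncomm_ring
        _ = A₀ * (V * A₁ * U) + (V * A₁ * U) * A₀ := by rw [hVU]; noncomm_ring
        _ = _ := by rw [add_comm]
    have hXeq : X = U * (V * X * U) * V := by
      calc X = (U * V) * X * (U * V) := by rw [hUV]; noncomm_ring
      _ = U * (V * X * U) * V := by noncomm_ring
    have conj_norm_le : ∀ W : 𝒜, ‖U * W * V‖ ≤ ‖W‖ := by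
      intro W
      calc ‖U * W * V‖ ≤ ‖U * W‖ * ‖V‖ := norm_mul_le _ _
      _ ≤ ‖U‖ * ‖W‖ * ‖V‖ := by
          refine mul_le_mul_of_nonneg_right (norm_mul_le _ _) (norm_nonneg _)
      _ ≤ 1 * ‖W‖ * 1 := by
          refine mul_le_mul (mul_le_mul_of_nonneg_right ?_ (norm_nonneg _)) ?_
            (norm_nonneg _) (by positivity)
          · exact norm_exp_smul_le HΛ hsH t
          · exact norm_exp_smul_le' HΛ hsH t
      _ = ‖W‖ := by ring
    have hnorm1 : ‖X‖ ≤ ‖V * X * U‖ := by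
      calc ‖X‖ = ‖U * (V * X * U) * V‖ := by rw [← hXeq]
      _ ≤ ‖V * X * U‖ := conj_norm_le _
    have hmain := concl γ' γ A₁ A₀ h₁ h₀ (-t) (by linarith)
    rw [← hVexp, ← hUexp] at hmain
    calc ‖X‖ ≤ ‖V * X * U‖ := hnorm1
    _ = ‖V * A₁ * U * A₀ + A₀ * (V * A₁ * U)‖ := by rw [hX2]
    _ ≤ G * Real.exp (-ζ * (dist γ' γ - 16 * G * CΦ / ζ * (-t))) := hmain
    _ = G * Real.exp (-ζ * (dist γ γ' - 16 * G * CΦ / ζ * (-t))) := by rw [dist_comm]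
end

section
/- Let ω > 0, let W : ℝ²×ℝ² → ℝ and v : ℝ² → ℂ be measurable, and assume: (i) W(x,y) depends only on |x−y| and |W(x,y)| ≤ C₁·exp(−σ₁·|x−y|) for all x,y, and (ii) |v(x)| ≤ C₂·exp(−σ₂·|x|) for all x, with constants C₁, C₂, σ₁, σ₂ > 0. For γ₁,γ₂,γ₃,γ₄ ∈ ℝ² define w(γ₁,γ₂,γ₃,γ₄) := (π/(2ω²))² ∫_{ℝ²×ℝ²} exp(−2iω²·((γ₃−γ₄)∧x))·exp(−2iω²·((γ₁−γ₂)∧y))·W(x,y)·conj(v(x−γ₄))·v(x−γ₃)·conj(v(y−γ₂))·v(y−γ₁) dx dy (the integrand is absolutely integrable). Then |w(γ₁,γ₂,γ₃,γ₄)| ≤ K_σ·exp(−σ·diam{γ₁,γ₂,γ₃,γ₄}), where σ = min{σ₁/2, σ₂/6}, K_σ = π⁴·C₁·C₂⁴/(4·ω⁴·σ⁴), and diam{γ₁,γ₂,γ₃,γ₄} is the maximal pairwise Euclidean distance among γ₁,γ₂,γ₃,γ₄. -/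
open MeasureTheory

local notation "E2" => EuclideanSpace ℝ (Fin 2)

section Aux

lemma aux_integrable {a : ℝ} (ha : 0 < a) :
    Integrable (fun x : E2 => Real.exp (-a * ‖x‖)) := by
  set K : ℝ := max 1 (3 / a) with hK
  have hK1 : (1:ℝ) ≤ K := le_max_left _ _
  have hK2 : 3 / a ≤ K := le_max_right _ _
  have hK0 : 0 < K := lt_of_lt_of_le one_pos hK1
  have hdim : ((Module.finrank ℝ E2 : ℝ)) < 3 := by
    simp [finrank_euclideanSpace_fin]; norm_num
  refine ((integrable_one_add_norm (μ := (volume : Measure E2)) hdim).const_mul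
      (K ^ 3)).mono' ?_ ?_
  · exact (Real.continuous_exp.comp (continuous_const.mul continuous_norm)).aestronglyMeasurable
  · refine Filter.Eventually.of_forall fun x => ?_
    set r := ‖x‖ with hr
    have hr0 : 0 ≤ r := norm_nonneg _
    have h1 : 1 + r ≤ K * Real.exp (a / 3 * r) := by
      have h2 : 1 + a / 3 * r ≤ Real.exp (a / 3 * r) := Real.add_one_le_exp _ |>.trans_eq' (by ring_nf)
      have h3 : 1 + r ≤ K * (1 + a / 3 * r) := by
        have h4 := mul_le_mul_of_nonneg_right hK2 (by positivity : (0:ℝ) ≤ a/3)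
        have h5 : 3 / a * (a / 3) = 1 := by field_simp
        nlinarith
      nlinarith [Real.exp_pos (a / 3 * r)]
    have hpow : (1 + r) ^ 3 ≤ K ^ 3 * Real.exp (a * r) := by
      have := pow_le_pow_left₀ (by linarith) h1 3
      calc (1 + r) ^ 3 ≤ (K * Real.exp (a / 3 * r)) ^ 3 := this
        _ = K ^ 3 * Real.exp (a / 3 * r) ^ 3 := by ring
        _ = K ^ 3 * Real.exp (a * r) := by
            rw [← Real.exp_nat_mul]; ring_nf
    have hcast : ((1:ℝ) + r) ^ (-(3:ℝ)) = ((1 + r) ^ (3:ℕ))⁻¹ := by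
      rw [Real.rpow_neg (by linarith), ← Real.rpow_natCast (1 + r) 3]
      norm_num
    rw [Real.norm_eq_abs, abs_of_pos (Real.exp_pos _), hcast]
    rw [← div_eq_mul_inv, le_div_iff₀ (by positivity)]
    calc Real.exp (-a * r) * (1 + r) ^ 3 = (1 + r) ^ 3 * Real.exp (-a * r) := by ring
      _ ≤ (K ^ 3 * Real.exp (a * r)) * Real.exp (-a * r) := by
          exact mul_le_mul_of_nonneg_right hpow (Real.exp_pos _).le
      _ = K ^ 3 := by rw [mul_assoc, ← Real.exp_add]; ring_nf; simp

lemma aux_integral {a : ℝ} (ha : 0 < a) :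
    ∫ x : E2, Real.exp (-a * ‖x‖) = 2 * Real.pi / a ^ 2 := by
  have h := MeasureTheory.integral_fun_norm_addHaar (volume : Measure E2)
      (fun r => Real.exp (-a * r))
  simp only [finrank_euclideanSpace_fin] at h
  rw [h]
  have hball : ((volume : Measure E2) (Metric.ball 0 1)).toReal = Real.pi := by
    rw [EuclideanSpace.volume_ball]
    simp
    rw [ENNReal.toReal_ofReal (by positivity)]
    rw [Real.sq_sqrt Real.pi_pos.le]
    norm_num [Real.Gamma_two]
  have hint : ∫ y in Set.Ioi (0:ℝ), y ^ (2 - 1) • Real.exp (-a * y) = (a ^ 2)⁻¹ := by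
    have h6 := integral_rpow_mul_exp_neg_mul_rpow (p := 1) (q := 1) one_pos (by norm_num) ha
    simp only [Real.rpow_one] at h6
    norm_num [Real.Gamma_two] at h6
    simp only [smul_eq_mul]
    norm_num
    rw [h6]
  rw [measureReal_def, hball, hint]
  simp [smul_eq_mul]
  ring

end Aux

set_option maxHeartbeats 1000000 in
/-- Exponential decay of the interaction kernel
`w(γ₁,γ₂,γ₃,γ₄)` obtained from an exponentially decaying radial pair potential `W` and an
exponentially localized profile `v`:
`|w(γ₁,γ₂,γ₃,γ₄)| ≤ K_σ e^{-σ diam{γ₁,γ₂,γ₃,γ₄}}` with `σ = min{σ₁/2, σ₂/6}` and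
`K_σ = π⁴C₁C₂⁴/(4ω⁴σ⁴)`. -/
theorem stmt_8
    (ω C₁ C₂ σ₁ σ₂ : ℝ) (hω : 0 < ω) (hC₁ : 0 < C₁) (hC₂ : 0 < C₂)
    (hσ₁ : 0 < σ₁) (hσ₂ : 0 < σ₂)
    (W : EuclideanSpace ℝ (Fin 2) × EuclideanSpace ℝ (Fin 2) → ℝ) (hWmeas : Measurable W)
    (v : EuclideanSpace ℝ (Fin 2) → ℂ) (hvmeas : Measurable v)
    (hWrad : ∀ x y x' y' : EuclideanSpace ℝ (Fin 2),
      ‖x - y‖ = ‖x' - y'‖ → W (x, y) = W (x', y'))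
    (hWdec : ∀ x y : EuclideanSpace ℝ (Fin 2), |W (x, y)| ≤ C₁ * Real.exp (-σ₁ * ‖x - y‖))
    (hvdec : ∀ x : EuclideanSpace ℝ (Fin 2), ‖v x‖ ≤ C₂ * Real.exp (-σ₂ * ‖x‖))
    (γ₁ γ₂ γ₃ γ₄ : EuclideanSpace ℝ (Fin 2)) :
    ‖(((Real.pi / (2 * ω ^ 2)) ^ 2 : ℝ) : ℂ) *
        ∫ p : EuclideanSpace ℝ (Fin 2) × EuclideanSpace ℝ (Fin 2),
          Complex.exp (Complex.I *
            ((-2 * ω ^ 2 * ((γ₃ - γ₄) 0 * p.1 1 - (γ₃ - γ₄) 1 * p.1 0) : ℝ) : ℂ)) *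
          Complex.exp (Complex.I *
            ((-2 * ω ^ 2 * ((γ₁ - γ₂) 0 * p.2 1 - (γ₁ - γ₂) 1 * p.2 0) : ℝ) : ℂ)) *
          ((W (p.1, p.2) : ℝ) : ℂ) *
          (starRingEnd ℂ) (v (p.1 - γ₄)) * v (p.1 - γ₃) *
          (starRingEnd ℂ) (v (p.2 - γ₂)) * v (p.2 - γ₁)‖
      ≤ Real.pi ^ 4 * C₁ * C₂ ^ 4 / (4 * ω ^ 4 * min (σ₁ / 2) (σ₂ / 6) ^ 4) *
          Real.exp (-(min (σ₁ / 2) (σ₂ / 6)) *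
            max ‖γ₁ - γ₂‖ (max ‖γ₁ - γ₃‖ (max ‖γ₁ - γ₄‖
              (max ‖γ₂ - γ₃‖ (max ‖γ₂ - γ₄‖ ‖γ₃ - γ₄‖))))) := by
  set σ : ℝ := min (σ₁ / 2) (σ₂ / 6) with hσdef
  set D : ℝ := max ‖γ₁ - γ₂‖ (max ‖γ₁ - γ₃‖ (max ‖γ₁ - γ₄‖
      (max ‖γ₂ - γ₃‖ (max ‖γ₂ - γ₄‖ ‖γ₃ - γ₄‖)))) with hDdef
  have hσ0 : 0 < σ := lt_min (by positivity) (by positivity)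
  have ha : (0:ℝ) < σ₂ / 2 := by positivity
  set F : E2 × E2 → ℂ := fun p =>
      Complex.exp (Complex.I *
        ((-2 * ω ^ 2 * ((γ₃ - γ₄) 0 * p.1 1 - (γ₃ - γ₄) 1 * p.1 0) : ℝ) : ℂ)) *
      Complex.exp (Complex.I *
        ((-2 * ω ^ 2 * ((γ₁ - γ₂) 0 * p.2 1 - (γ₁ - γ₂) 1 * p.2 0) : ℝ) : ℂ)) *
      ((W (p.1, p.2) : ℝ) : ℂ) *
      (starRingEnd ℂ) (v (p.1 - γ₄)) * v (p.1 - γ₃) *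
      (starRingEnd ℂ) (v (p.2 - γ₂)) * v (p.2 - γ₁) with hFdef
  set g : E2 × E2 → ℝ := fun p =>
      (C₁ * C₂ ^ 4 * Real.exp (-σ * D)) *
        (Real.exp (-(σ₂/2) * ‖p.1 - γ₃‖) * Real.exp (-(σ₂/2) * ‖p.2 - γ₁‖)) with hgdef
  -- pointwise bound
  have hpt : ∀ p : E2 × E2, ‖F p‖ ≤ g p := by
    rintro ⟨x, y⟩
    have hre : ∀ r : ℝ, ‖Complex.exp (Complex.I * (r:ℂ))‖ = 1 := fun r => by
      rw [Complex.norm_exp]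
      simp [Complex.mul_re]
    have hnorm : ‖F (x, y)‖ = |W (x, y)| * ‖v (x - γ₄)‖ * ‖v (x - γ₃)‖ *
        ‖v (y - γ₂)‖ * ‖v (y - γ₁)‖ := by
      simp only [hFdef, norm_mul, hre, one_mul, Complex.norm_real, Real.norm_eq_abs,
        Complex.norm_conj]
    rw [hnorm]
    set d := ‖x - y‖ with hd
    set A₃ := ‖x - γ₃‖; set A₄ := ‖x - γ₄‖; set B₁ := ‖y - γ₁‖; set B₂ := ‖y - γ₂‖
    have hd0 : 0 ≤ d := norm_nonneg _
    have hA₃0 : 0 ≤ A₃ := norm_nonneg _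
    have hA₄0 : 0 ≤ A₄ := norm_nonneg _
    have hB₁0 : 0 ≤ B₁ := norm_nonneg _
    have hB₂0 : 0 ≤ B₂ := norm_nonneg _
    have tri : ∀ u w z : E2, ‖u - z‖ ≤ ‖u - w‖ + ‖w - z‖ := fun u w z => by
      simpa [dist_eq_norm] using dist_triangle u w z
    have t12 : ‖γ₁ - γ₂‖ ≤ B₁ + B₂ := by
      have := tri γ₁ y γ₂; rwa [norm_sub_rev γ₁ y] at this
    have t34 : ‖γ₃ - γ₄‖ ≤ A₃ + A₄ := by
      have := tri γ₃ x γ₄; rwa [norm_sub_rev γ₃ x] at this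
    have t13 : ‖γ₁ - γ₃‖ ≤ B₁ + (d + A₃) := by
      have h1 := tri γ₁ y γ₃
      have h2 := tri y x γ₃
      rw [norm_sub_rev γ₁ y] at h1
      rw [norm_sub_rev y x] at h2
      linarith
    have t14 : ‖γ₁ - γ₄‖ ≤ B₁ + (d + A₄) := by
      have h1 := tri γ₁ y γ₄
      have h2 := tri y x γ₄
      rw [norm_sub_rev γ₁ y] at h1
      rw [norm_sub_rev y x] at h2
      linarith
    have t23 : ‖γ₂ - γ₃‖ ≤ B₂ + (d + A₃) := by
      have h1 := tri γ₂ y γ₃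
      have h2 := tri y x γ₃
      rw [norm_sub_rev γ₂ y] at h1
      rw [norm_sub_rev y x] at h2
      linarith
    have t24 : ‖γ₂ - γ₄‖ ≤ B₂ + (d + A₄) := by
      have h1 := tri γ₂ y γ₄
      have h2 := tri y x γ₄
      rw [norm_sub_rev γ₂ y] at h1
      rw [norm_sub_rev y x] at h2
      linarith
    have hD : D ≤ 2 * d + (A₃ + A₄ + B₁ + B₂) := by
      rw [hDdef]
      refine max_le (by linarith) (max_le (by linarith) (max_le (by linarith)
        (max_le (by linarith) (max_le (by linarith) (by linarith)))))
    have hσ1 : σ ≤ σ₁ / 2 := min_le_left _ _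
    have hσ2 : σ ≤ σ₂ / 6 := min_le_right _ _
    have hlin : -σ₁ * d + -σ₂ * A₄ + -σ₂ * A₃ + -σ₂ * B₂ + -σ₂ * B₁ ≤
        -σ * D + (-(σ₂/2) * A₃ + -(σ₂/2) * B₁) := by
      nlinarith [mul_le_mul_of_nonneg_left hD hσ0.le,
        mul_nonneg (sub_nonneg.2 hσ1) hd0,
        mul_nonneg (sub_nonneg.2 hσ2) (by linarith : (0:ℝ) ≤ A₃ + A₄ + B₁ + B₂),
        mul_nonneg hσ₂.le hA₄0, mul_nonneg hσ₂.le hB₂0,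
        mul_nonneg hσ₂.le hA₃0, mul_nonneg hσ₂.le hB₁0]
    calc |W (x, y)| * ‖v (x - γ₄)‖ * ‖v (x - γ₃)‖ * ‖v (y - γ₂)‖ * ‖v (y - γ₁)‖
        ≤ (C₁ * Real.exp (-σ₁ * d)) * (C₂ * Real.exp (-σ₂ * A₄)) *
          (C₂ * Real.exp (-σ₂ * A₃)) * (C₂ * Real.exp (-σ₂ * B₂)) *
          (C₂ * Real.exp (-σ₂ * B₁)) := by
          gcongr <;>
            first
            | exact abs_nonneg _
            | exact norm_nonneg _
            | exact hWdec x y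
            | exact hvdec _
            | positivity
      _ = C₁ * C₂ ^ 4 * Real.exp (-σ₁ * d + -σ₂ * A₄ + -σ₂ * A₃ + -σ₂ * B₂ + -σ₂ * B₁) := by
          rw [Real.exp_add, Real.exp_add, Real.exp_add, Real.exp_add]; ring
      _ ≤ C₁ * C₂ ^ 4 * Real.exp (-σ * D + (-(σ₂/2) * A₃ + -(σ₂/2) * B₁)) := by
          exact mul_le_mul_of_nonneg_left (Real.exp_le_exp.mpr hlin) (by positivity)
      _ = g (x, y) := by
          rw [hgdef]
          simp only [Real.exp_add]
          ring
  -- integrability of the dominating function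
  have h1 : Integrable (fun z : E2 => Real.exp (-(σ₂/2) * ‖z - γ₃‖)) :=
    (aux_integrable ha).comp_sub_right γ₃
  have h2 : Integrable (fun z : E2 => Real.exp (-(σ₂/2) * ‖z - γ₁‖)) :=
    (aux_integrable ha).comp_sub_right γ₁
  have hgint : Integrable g := by
    rw [hgdef]
    exact (h1.mul_prod h2).const_mul _
  have hgval : ∫ p : E2 × E2, g p =
      (C₁ * C₂ ^ 4 * Real.exp (-σ * D)) *
        ((2 * Real.pi / (σ₂/2) ^ 2) * (2 * Real.pi / (σ₂/2) ^ 2)) := by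
    simp only [hgdef]
    rw [MeasureTheory.integral_const_mul]
    rw [MeasureTheory.Measure.volume_eq_prod,
      MeasureTheory.integral_prod_mul (fun z : E2 => Real.exp (-(σ₂/2) * ‖z - γ₃‖))
        (fun z : E2 => Real.exp (-(σ₂/2) * ‖z - γ₁‖))]
    congr 1
    rw [MeasureTheory.integral_sub_right_eq_self (fun z : E2 => Real.exp (-(σ₂/2) * ‖z‖)) γ₃,
      MeasureTheory.integral_sub_right_eq_self (fun z : E2 => Real.exp (-(σ₂/2) * ‖z‖)) γ₁,
      aux_integral ha]
  have key : ‖∫ p : E2 × E2, F p‖ ≤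
      (C₁ * C₂ ^ 4 * Real.exp (-σ * D)) *
        ((2 * Real.pi / (σ₂/2) ^ 2) * (2 * Real.pi / (σ₂/2) ^ 2)) := by
    refine le_trans (norm_integral_le_integral_norm _) ?_
    rw [← hgval]
    exact integral_mono_of_nonneg (Filter.Eventually.of_forall fun p => norm_nonneg _)
      hgint (Filter.Eventually.of_forall hpt)
  have hc0 : (0:ℝ) ≤ (Real.pi / (2 * ω ^ 2)) ^ 2 := by positivity
  rw [norm_mul, Complex.norm_real, Real.norm_eq_abs, abs_of_nonneg hc0]
  have := mul_le_mul_of_nonneg_left key hc0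
  refine this.trans ?_
  -- final constants comparison
  have h64 : 64 * σ ^ 4 ≤ σ₂ ^ 4 := by
    have := pow_le_pow_left₀ hσ0.le (min_le_right (σ₁/2) (σ₂/6)) 4
    nlinarith [this, pow_nonneg hσ₂.le 4]
  have hrw : (Real.pi / (2 * ω ^ 2)) ^ 2 *
      ((C₁ * C₂ ^ 4 * Real.exp (-σ * D)) *
        ((2 * Real.pi / (σ₂/2) ^ 2) * (2 * Real.pi / (σ₂/2) ^ 2))) =
      (16 * Real.pi ^ 4 * C₁ * C₂ ^ 4 / (ω ^ 4 * σ₂ ^ 4)) * Real.exp (-σ * D) := by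
    field_simp
    ring
  rw [hrw]
  refine mul_le_mul_of_nonneg_right ?_ (Real.exp_pos _).le
  rw [div_le_div_iff₀ (by positivity) (by positivity)]
  nlinarith [mul_le_mul_of_nonneg_left h64
      (by positivity : (0:ℝ) ≤ Real.pi ^ 4 * C₁ * C₂ ^ 4 * ω ^ 4)]
end

section
/- For every γ = (γ₁,γ₂) ∈ ℝ², the series e^{−|γ|²/(4ℓ²)} · Σ_{m=0}^{∞} (1/√(m!)) · ((γ₁ + i·γ₂)/(ℓ·√2))^m · ψ_m converges in L²(ℝ²) and its sum equals χ_γ. -/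
open MeasureTheory Filter Topology
open scoped ENNReal NNReal

/-- The normalized lowest-Landau-level wave function `ψ_m` (angular momentum `m`),
`ψ_m(x) = (1/(ℓ√(2π m!))) ((x₁ - i x₂)/(ℓ√2))^m e^{-|x|²/(4ℓ²)}`. -/
noncomputable def psiF (ℓ : ℝ) (m : ℕ) (x : EuclideanSpace ℝ (Fin 2)) : ℂ :=
  ((1 / (ℓ * Real.sqrt (2 * Real.pi * m.factorial)) : ℝ) : ℂ) *
    (((x 0 : ℂ) - Complex.I * (x 1 : ℂ)) / ((ℓ : ℂ) * ((Real.sqrt 2 : ℝ) : ℂ))) ^ m *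
    ((Real.exp (-‖x‖ ^ 2 / (4 * ℓ ^ 2)) : ℝ) : ℂ)

/-- The magnetic coherent state `χ_γ` centred at `γ`,
`χ_γ(x) = (1/(ℓ√(2π))) e^{-i(γ∧x)/(2ℓ²)} e^{-|x-γ|²/(4ℓ²)}`. -/
noncomputable def chiF (ℓ : ℝ) (γ x : EuclideanSpace ℝ (Fin 2)) : ℂ :=
  ((1 / (ℓ * Real.sqrt (2 * Real.pi)) : ℝ) : ℂ) *
    Complex.exp (-Complex.I * ((γ 0 * x 1 - γ 1 * x 0 : ℝ) : ℂ) / (2 * (ℓ : ℂ) ^ 2)) *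
    ((Real.exp (-‖x - γ‖ ^ 2 / (4 * ℓ ^ 2)) : ℝ) : ℂ)

private lemma sqnorm_eq (x : EuclideanSpace ℝ (Fin 2)) : ‖x‖ ^ 2 = x 0 ^ 2 + x 1 ^ 2 := by
  rw [EuclideanSpace.norm_eq, Real.sq_sqrt (by positivity)]
  simp [Fin.sum_univ_two]


private lemma memLp_gauss (ℓ b : ℝ) (hℓ : 0 < ℓ) :
    MemLp (fun x : EuclideanSpace ℝ (Fin 2) => Real.exp (b * ‖x‖ - ‖x‖ ^ 2 / (4 * ℓ ^ 2)))
      2 (volume : Measure (EuclideanSpace ℝ (Fin 2))) := by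
  have hcont : Continuous (fun x : EuclideanSpace ℝ (Fin 2) =>
      Real.exp (b * ‖x‖ - ‖x‖ ^ 2 / (4 * ℓ ^ 2))) := by
    fun_prop
  refine (memLp_two_iff_integrable_sq hcont.aestronglyMeasurable).2 ?_
  have hint : Integrable (fun x : EuclideanSpace ℝ (Fin 2) =>
      Real.exp (-(1 / (4 * ℓ ^ 2)) * ‖x‖ ^ 2)) volume := by
    have h := (GaussianFourier.integrable_cexp_neg_mul_sq_norm_add
      (V := EuclideanSpace ℝ (Fin 2)) (b := ((1 / (4 * ℓ ^ 2) : ℝ) : ℂ))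
      (by rw [Complex.ofReal_re]; positivity) 0 0).norm
    refine h.congr (Filter.Eventually.of_forall fun v => ?_)
    have : (-((1 / (4 * ℓ ^ 2) : ℝ) : ℂ) * (‖v‖ : ℂ) ^ 2 + 0 * ((inner ℝ (0 : EuclideanSpace ℝ (Fin 2)) v : ℝ) : ℂ))
        = ((-(1 / (4 * ℓ ^ 2)) * ‖v‖ ^ 2 : ℝ) : ℂ) := by push_cast; ring
    simp only [this, ← Complex.ofReal_exp, Complex.norm_real, Real.norm_eq_abs,
      abs_of_pos (Real.exp_pos _)]
  refine (hint.const_mul (Real.exp (4 * b ^ 2 * ℓ ^ 2))).mono' ((hcont.pow 2).aestronglyMeasurable) ?_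
  refine Filter.Eventually.of_forall fun x => ?_
  have h1 : Real.exp (b * ‖x‖ - ‖x‖ ^ 2 / (4 * ℓ ^ 2)) ^ 2
      = Real.exp (2 * (b * ‖x‖ - ‖x‖ ^ 2 / (4 * ℓ ^ 2))) := by
    rw [← Real.exp_nat_mul]; norm_num
  rw [Real.norm_eq_abs, abs_of_nonneg (by positivity), h1, ← Real.exp_add]
  refine Real.exp_le_exp.2 ?_
  have hℓ2 : (0:ℝ) < ℓ ^ 2 := by positivity
  rw [div_eq_mul_inv, one_div]
  have key : ‖x‖ ^ 2 * (4 * ℓ ^ 2)⁻¹ + 4 * b ^ 2 * ℓ ^ 2 - 2 * b * ‖x‖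
      = 4 * ℓ ^ 2 * (‖x‖ * (4 * ℓ ^ 2)⁻¹ - b) ^ 2 := by
    field_simp
    ring
  have h3 : 0 ≤ 4 * ℓ ^ 2 * (‖x‖ * (4 * ℓ ^ 2)⁻¹ - b) ^ 2 := by positivity
  linarith

private lemma key_hasSum (ℓ : ℝ) (hℓ : 0 < ℓ) (γ x : EuclideanSpace ℝ (Fin 2)) :
    HasSum (fun m : ℕ =>
      (((Real.exp (-‖γ‖ ^ 2 / (4 * ℓ ^ 2)) : ℝ) : ℂ) *
        ((1 / Real.sqrt m.factorial : ℝ) : ℂ) *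
        (((γ 0 : ℂ) + Complex.I * (γ 1 : ℂ)) / ((ℓ : ℂ) * ((Real.sqrt 2 : ℝ) : ℂ))) ^ m)
        * psiF ℓ m x)
      (chiF ℓ γ x) := by
  set α : ℂ := ((γ 0 : ℂ) + Complex.I * (γ 1 : ℂ)) / ((ℓ : ℂ) * ((Real.sqrt 2 : ℝ) : ℂ)) with hα
  set ζ : ℂ := ((x 0 : ℂ) - Complex.I * (x 1 : ℂ)) / ((ℓ : ℂ) * ((Real.sqrt 2 : ℝ) : ℂ)) with hζ
  set K : ℂ := ((Real.exp (-‖γ‖ ^ 2 / (4 * ℓ ^ 2)) : ℝ) : ℂ) *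
      ((1 / (ℓ * Real.sqrt (2 * Real.pi)) : ℝ) : ℂ) *
      ((Real.exp (-‖x‖ ^ 2 / (4 * ℓ ^ 2)) : ℝ) : ℂ) with hK
  have hℓ0 : (ℓ : ℂ) ≠ 0 := by exact_mod_cast hℓ.ne'
  have hterm : ∀ m : ℕ,
      (((Real.exp (-‖γ‖ ^ 2 / (4 * ℓ ^ 2)) : ℝ) : ℂ) *
        ((1 / Real.sqrt m.factorial : ℝ) : ℂ) * α ^ m) * psiF ℓ m x
      = K * ((α * ζ) ^ m / (m.factorial : ℂ)) := by
    intro m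
    have hsm : (0:ℝ) < Real.sqrt m.factorial := Real.sqrt_pos.2 (by positivity)
    have h2π : (0:ℝ) < Real.sqrt (2 * Real.pi) := Real.sqrt_pos.2 (by positivity)
    have h1 : Real.sqrt (2 * Real.pi * m.factorial)
        = Real.sqrt (2 * Real.pi) * Real.sqrt m.factorial := by
      rw [Real.sqrt_mul (by positivity)]
    have h2 : (Real.sqrt m.factorial : ℝ) * Real.sqrt m.factorial = m.factorial :=
      Real.mul_self_sqrt (by positivity)
    have hfac : ((m.factorial : ℝ) : ℂ) ≠ 0 := by exact_mod_cast (Nat.factorial_pos m).ne'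
    have hreal : (1 / Real.sqrt m.factorial) * (1 / (ℓ * (Real.sqrt (2 * Real.pi) * Real.sqrt m.factorial)))
        = (1 / (ℓ * Real.sqrt (2 * Real.pi))) * (1 / (m.factorial : ℝ)) := by
      rw [div_mul_div_comm, div_mul_div_comm, one_mul]
      congr 1
      linear_combination (ℓ * Real.sqrt (2 * Real.pi)) * h2
    have hC : ((1 / Real.sqrt m.factorial : ℝ) : ℂ) *
        ((1 / (ℓ * (Real.sqrt (2 * Real.pi) * Real.sqrt m.factorial)) : ℝ) : ℂ)
        = ((1 / (ℓ * Real.sqrt (2 * Real.pi)) : ℝ) : ℂ) * (1 / (m.factorial : ℂ)) := by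
      rw [← Complex.ofReal_mul, hreal]
      push_cast
      ring
    rw [psiF, hK, ← hζ, h1, mul_pow]
    linear_combination (((Real.exp (-‖γ‖ ^ 2 / (4 * ℓ ^ 2)) : ℝ) : ℂ) *
      ((Real.exp (-‖x‖ ^ 2 / (4 * ℓ ^ 2)) : ℝ) : ℂ) * α ^ m * ζ ^ m) * hC
  rw [funext hterm]
  have hsum : HasSum (fun m : ℕ => K * ((α * ζ) ^ m / (m.factorial : ℂ)))
      (K * NormedSpace.exp (α * ζ)) :=
    (NormedSpace.expSeries_div_hasSum_exp (α * ζ)).mul_left K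
  convert hsum using 1
  rw [← Complex.exp_eq_exp_ℂ]
  -- now show chiF ℓ γ x = K * Complex.exp (α * ζ)
  have hs2 : ((Real.sqrt 2 : ℝ) : ℂ) ^ 2 = 2 := by
    norm_cast
    exact Real.sq_sqrt (by norm_num)
  have hxg : ‖x - γ‖ ^ 2 = (x 0 - γ 0) ^ 2 + (x 1 - γ 1) ^ 2 := by
    rw [sqnorm_eq (x - γ)]
    simp [PiLp.sub_apply]
  have hexpand : (-‖x - γ‖ ^ 2 / (4 * ℓ ^ 2) : ℝ)
      = -‖γ‖ ^ 2 / (4 * ℓ ^ 2) + -‖x‖ ^ 2 / (4 * ℓ ^ 2)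
        + (γ 0 * x 0 + γ 1 * x 1) / (2 * ℓ ^ 2) := by
    rw [hxg, sqnorm_eq x, sqnorm_eq γ]
    field_simp
    ring
  rw [chiF, hK]
  rw [hexpand]
  rw [Complex.ofReal_exp, Complex.ofReal_add, Complex.ofReal_add, Complex.exp_add,
    Complex.exp_add]
  have harg : α * ζ = -Complex.I * ((γ 0 * x 1 - γ 1 * x 0 : ℝ) : ℂ) / (2 * (ℓ : ℂ) ^ 2)
      + ((((γ 0 * x 0 + γ 1 * x 1) / (2 * ℓ ^ 2) : ℝ)) : ℂ) := by
    rw [hα, hζ]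
    push_cast
    rw [div_mul_div_comm]
    have hden : ((ℓ : ℂ) * ((Real.sqrt 2 : ℝ) : ℂ)) * ((ℓ : ℂ) * ((Real.sqrt 2 : ℝ) : ℂ))
        = 2 * (ℓ : ℂ) ^ 2 := by
      linear_combination ((ℓ : ℂ) ^ 2) * hs2
    rw [hden, ← add_div]
    congr 1
    linear_combination (-(((γ 1 : ℝ) : ℂ) * ((x 1 : ℝ) : ℂ))) * Complex.I_sq
  rw [harg, Complex.exp_add]
  push_cast
  ring

set_option maxHeartbeats 1000000 in
/-- For every `γ ∈ ℝ²` the expansion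
`χ_γ = e^{-|γ|²/(4ℓ²)} Σ_m (1/√m!) ((γ₁+iγ₂)/(ℓ√2))^m ψ_m`
holds, the series converging in `L²(ℝ²)`. -/
theorem stmt_9 (ℓ : ℝ) (hℓ : 0 < ℓ)
    (Ψ : ℕ → Lp ℂ 2 (volume : Measure (EuclideanSpace ℝ (Fin 2))))
    (hΨ : ∀ m : ℕ, ⇑(Ψ m) =ᵐ[volume] psiF ℓ m)
    (X : EuclideanSpace ℝ (Fin 2) → Lp ℂ 2 (volume : Measure (EuclideanSpace ℝ (Fin 2))))
    (hX : ∀ γ : EuclideanSpace ℝ (Fin 2), ⇑(X γ) =ᵐ[volume] chiF ℓ γ)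
    (γ : EuclideanSpace ℝ (Fin 2)) :
    HasSum (fun m : ℕ =>
      (((Real.exp (-‖γ‖ ^ 2 / (4 * ℓ ^ 2)) : ℝ) : ℂ) *
        ((1 / Real.sqrt m.factorial : ℝ) : ℂ) *
        (((γ 0 : ℂ) + Complex.I * (γ 1 : ℂ)) / ((ℓ : ℂ) * ((Real.sqrt 2 : ℝ) : ℂ))) ^ m) •
          Ψ m)
      (X γ) := by
  classical
  set α : ℂ := ((γ 0 : ℂ) + Complex.I * (γ 1 : ℂ)) / ((ℓ : ℂ) * ((Real.sqrt 2 : ℝ) : ℂ)) with hα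
  set c : ℕ → ℂ := fun m => ((Real.exp (-‖γ‖ ^ 2 / (4 * ℓ ^ 2)) : ℝ) : ℂ) *
      ((1 / Real.sqrt m.factorial : ℝ) : ℂ) * α ^ m with hc
  set a : ℝ := ‖α‖ + 1 with ha
  have ha0 : 0 < a := by positivity
  have haα : ‖α‖ < a := by rw [ha]; linarith
  have hs2 : (0:ℝ) < Real.sqrt 2 := Real.sqrt_pos.2 (by norm_num)
  have hsℓ : (0:ℝ) < ℓ * Real.sqrt 2 := by positivity
  have h2π : (0:ℝ) < Real.sqrt (2 * Real.pi) := Real.sqrt_pos.2 (by positivity)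
  set b : ℝ := a / (ℓ * Real.sqrt 2) + ‖γ‖ / (2 * ℓ ^ 2) with hb
  have hb0 : 0 ≤ b := by positivity
  set D : EuclideanSpace ℝ (Fin 2) → ℝ :=
    fun x => Real.exp (b * ‖x‖ - ‖x‖ ^ 2 / (4 * ℓ ^ 2)) with hD
  have hD0 : ∀ x, 0 ≤ D x := fun x => (Real.exp_pos _).le
  have hDmem : MemLp D 2 volume := memLp_gauss ℓ b hℓ
  set E : ℝ := Real.exp (-‖γ‖ ^ 2 / (4 * ℓ ^ 2)) with hE
  have hE0 : 0 < E := Real.exp_pos _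
  -- norm of the complex number x0 - i x1
  have hzabs : ∀ x : EuclideanSpace ℝ (Fin 2),
      ‖((x 0 : ℂ) - Complex.I * (x 1 : ℂ))‖ = ‖x‖ := by
    intro x
    rw [Complex.norm_def, Complex.normSq_apply]
    have h0 : ((x 0 : ℂ) - Complex.I * (x 1 : ℂ)).re = x 0 := by simp
    have h1 : ((x 0 : ℂ) - Complex.I * (x 1 : ℂ)).im = -(x 1) := by simp
    rw [h0, h1, EuclideanSpace.norm_eq]
    simp [Fin.sum_univ_two]
    ring_nf
  -- norm of psiF
  have hpsiabs : ∀ (m : ℕ) x, ‖psiF ℓ m x‖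
      = (1 / (ℓ * Real.sqrt (2 * Real.pi * m.factorial)))
        * (‖x‖ / (ℓ * Real.sqrt 2)) ^ m * Real.exp (-‖x‖ ^ 2 / (4 * ℓ ^ 2)) := by
    intro m x
    rw [psiF, norm_mul, norm_mul, norm_pow, norm_div, hzabs]
    rw [Complex.norm_real, Complex.norm_real]
    rw [Real.norm_eq_abs, Real.norm_eq_abs, abs_of_pos (by positivity),
      abs_of_pos (Real.exp_pos _)]
    congr 2
    rw [norm_mul, Complex.norm_real, Complex.norm_real, Real.norm_eq_abs, Real.norm_eq_abs,
      abs_of_pos hℓ, abs_of_pos hs2]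
  -- norm of the coefficient
  have hcnorm : ∀ m : ℕ, ‖c m‖ = E * (1 / Real.sqrt m.factorial) * ‖α‖ ^ m := by
    intro m
    rw [hc]
    simp only [norm_mul, norm_pow, Complex.norm_real, Real.norm_eq_abs]
    rw [abs_of_pos hE0, abs_of_pos (by positivity : (0:ℝ) < 1 / Real.sqrt m.factorial)]
  -- factorial bound : t ^ m ≤ m! * a⁻¹ ^ m * exp (a * t)
  have hpow : ∀ (t : ℝ), 0 ≤ t → ∀ m : ℕ,
      t ^ m ≤ (m.factorial : ℝ) * a⁻¹ ^ m * Real.exp (a * t) := by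
    intro t ht m
    have hat : 0 ≤ a * t := mul_nonneg ha0.le ht
    have h1 : (a * t) ^ m / (m.factorial : ℝ) ≤ Real.exp (a * t) := by
      refine le_trans ?_ (Real.sum_le_exp_of_nonneg hat (m + 1))
      exact Finset.single_le_sum (f := fun i => (a * t) ^ i / (i.factorial : ℝ))
        (fun i _ => by positivity) (Finset.self_mem_range_succ m)
    have h2 : (a * t) ^ m ≤ (m.factorial : ℝ) * Real.exp (a * t) := by
      rw [div_le_iff₀ (by positivity)] at h1
      linarith [h1]
    have h3 : t ^ m = (a * t) ^ m * a⁻¹ ^ m := by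
      rw [← mul_pow]
      congr 1
      field_simp
    rw [h3]
    calc (a * t) ^ m * a⁻¹ ^ m ≤ ((m.factorial : ℝ) * Real.exp (a * t)) * a⁻¹ ^ m := by
          exact mul_le_mul_of_nonneg_right h2 (by positivity)
      _ = (m.factorial : ℝ) * a⁻¹ ^ m * Real.exp (a * t) := by ring
  have hsplit : ∀ m : ℕ, Real.sqrt (2 * Real.pi * m.factorial)
      = Real.sqrt (2 * Real.pi) * Real.sqrt m.factorial := fun m =>
    Real.sqrt_mul (by positivity) _
  have hmulself : ∀ m : ℕ, Real.sqrt m.factorial * Real.sqrt m.factorial = (m.factorial : ℝ) :=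
    fun m => Real.mul_self_sqrt (by positivity)
  have hsqpos : ∀ m : ℕ, (0:ℝ) < Real.sqrt m.factorial :=
    fun m => Real.sqrt_pos.2 (by exact_mod_cast Nat.factorial_pos m)
  -- exp(a * (‖x‖/(ℓ√2))) * exp(-‖x‖²/4ℓ²) ≤ D x
  have hexpD : ∀ x : EuclideanSpace ℝ (Fin 2),
      Real.exp (a * (‖x‖ / (ℓ * Real.sqrt 2))) * Real.exp (-‖x‖ ^ 2 / (4 * ℓ ^ 2)) ≤ D x := by
    intro x
    rw [← Real.exp_add, hD]
    refine Real.exp_le_exp.2 ?_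
    have : a * (‖x‖ / (ℓ * Real.sqrt 2)) = (a / (ℓ * Real.sqrt 2)) * ‖x‖ := by ring
    rw [this]
    have h1 : (a / (ℓ * Real.sqrt 2)) * ‖x‖ ≤ b * ‖x‖ := by
      refine mul_le_mul_of_nonneg_right ?_ (norm_nonneg x)
      rw [hb]
      have : (0:ℝ) ≤ ‖γ‖ / (2 * ℓ ^ 2) := by positivity
      linarith
    have h2 : -‖x‖ ^ 2 / (4 * ℓ ^ 2) = -(‖x‖ ^ 2 / (4 * ℓ ^ 2)) := by ring
    rw [h2]
    linarith
  -- pointwise bound for psiF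
  have hbound : ∀ (m : ℕ) x, ‖psiF ℓ m x‖
      ≤ (Real.sqrt m.factorial / (ℓ * Real.sqrt (2 * Real.pi)) * a⁻¹ ^ m) * D x := by
    intro m x
    rw [hpsiabs m x]
    have ht : (0:ℝ) ≤ ‖x‖ / (ℓ * Real.sqrt 2) := by positivity
    have h1 := hpow _ ht m
    calc (1 / (ℓ * Real.sqrt (2 * Real.pi * m.factorial)))
          * (‖x‖ / (ℓ * Real.sqrt 2)) ^ m * Real.exp (-‖x‖ ^ 2 / (4 * ℓ ^ 2))
        ≤ (1 / (ℓ * Real.sqrt (2 * Real.pi * m.factorial)))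
          * ((m.factorial : ℝ) * a⁻¹ ^ m * Real.exp (a * (‖x‖ / (ℓ * Real.sqrt 2))))
          * Real.exp (-‖x‖ ^ 2 / (4 * ℓ ^ 2)) := by
          have hpos1 : (0:ℝ) ≤ 1 / (ℓ * Real.sqrt (2 * Real.pi * m.factorial)) := by positivity
          have hpos2 : (0:ℝ) ≤ Real.exp (-‖x‖ ^ 2 / (4 * ℓ ^ 2)) := (Real.exp_pos _).le
          exact mul_le_mul_of_nonneg_right (mul_le_mul_of_nonneg_left h1 hpos1) hpos2
      _ = (Real.sqrt m.factorial / (ℓ * Real.sqrt (2 * Real.pi)) * a⁻¹ ^ m)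
          * (Real.exp (a * (‖x‖ / (ℓ * Real.sqrt 2))) * Real.exp (-‖x‖ ^ 2 / (4 * ℓ ^ 2))) := by
          rw [hsplit m]
          have hkey : (1 / (ℓ * (Real.sqrt (2 * Real.pi) * Real.sqrt m.factorial)))
              * (m.factorial : ℝ) = Real.sqrt m.factorial / (ℓ * Real.sqrt (2 * Real.pi)) := by
            have hne1 : Real.sqrt (2 * Real.pi) ≠ 0 := h2π.ne'
            have hne2 : Real.sqrt (m.factorial : ℝ) ≠ 0 := (hsqpos m).ne'
            have hne3 : ℓ ≠ 0 := hℓ.ne'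
            rw [div_mul_eq_mul_div, one_mul, div_eq_div_iff (mul_ne_zero hne3 (mul_ne_zero hne1 hne2))
              (mul_ne_zero hne3 hne1)]
            linear_combination (-(ℓ * Real.sqrt (2 * Real.pi))) * hmulself m
          linear_combination (a⁻¹ ^ m * Real.exp (a * (‖x‖ / (ℓ * Real.sqrt 2)))
            * Real.exp (-‖x‖ ^ 2 / (4 * ℓ ^ 2))) * hkey
      _ ≤ _ := by
          refine mul_le_mul_of_nonneg_left (hexpD x) ?_
          positivity
  -- eLpNorm facts for D
  have hDfin : eLpNorm D 2 volume ≠ ⊤ := hDmem.2.ne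
  set KD : ℝ := (eLpNorm D 2 volume).toReal with hKD
  have hKD0 : 0 ≤ KD := ENNReal.toReal_nonneg
  -- norm bound for Ψ m
  have hΨle : ∀ m : ℕ, ‖Ψ m‖
      ≤ (Real.sqrt m.factorial / (ℓ * Real.sqrt (2 * Real.pi)) * a⁻¹ ^ m) * KD := by
    intro m
    set Cm : ℝ := Real.sqrt m.factorial / (ℓ * Real.sqrt (2 * Real.pi)) * a⁻¹ ^ m with hCm
    have hCm0 : 0 ≤ Cm := by positivity
    rw [Lp.norm_def, eLpNorm_congr_ae (hΨ m)]
    have h1 : eLpNorm (psiF ℓ m) 2 volume ≤ eLpNorm (Cm • D) 2 volume := by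
      refine eLpNorm_mono fun x => ?_
      refine (hbound m x).trans ?_
      rw [Pi.smul_apply, smul_eq_mul, Real.norm_eq_abs]
      exact le_abs_self _
    rw [eLpNorm_const_smul] at h1
    have h3 : (‖Cm‖₊ : ℝ≥0∞) * eLpNorm D 2 volume ≠ ⊤ :=
      ENNReal.mul_ne_top ENNReal.coe_ne_top hDfin
    calc (eLpNorm (psiF ℓ m) 2 volume).toReal
        ≤ ((‖Cm‖₊ : ℝ≥0∞) * eLpNorm D 2 volume).toReal := ENNReal.toReal_mono h3 h1
      _ = Cm * KD := by
          rw [ENNReal.toReal_mul, ENNReal.coe_toReal, coe_nnnorm, Real.norm_eq_abs,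
            abs_of_nonneg hCm0]
  -- summability of the norms
  have hsm : Summable fun m : ℕ => ‖c m • Ψ m‖ := by
    set r : ℝ := ‖α‖ * a⁻¹ with hr
    have hr1 : r < 1 := by
      rw [hr, ← div_eq_mul_inv]
      exact (div_lt_one ha0).2 haα
    have hr0 : 0 ≤ r := by positivity
    refine Summable.of_nonneg_of_le (fun m => norm_nonneg _) (fun m => ?_)
      ((summable_geometric_of_lt_one hr0 hr1).mul_left
        (E * (1 / (ℓ * Real.sqrt (2 * Real.pi))) * KD))
    rw [norm_smul, hcnorm m]
    have hcancel : (1 / Real.sqrt m.factorial)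
        * (Real.sqrt m.factorial / (ℓ * Real.sqrt (2 * Real.pi)))
        = 1 / (ℓ * Real.sqrt (2 * Real.pi)) := by
      have hne2 : Real.sqrt ((m.factorial : ℕ) : ℝ) ≠ 0 := (hsqpos m).ne'
      have hne1 : Real.sqrt (2 * Real.pi) ≠ 0 := h2π.ne'
      have hne3 : ℓ ≠ 0 := hℓ.ne'
      field_simp
    calc E * (1 / Real.sqrt m.factorial) * ‖α‖ ^ m * ‖Ψ m‖
        ≤ E * (1 / Real.sqrt m.factorial) * ‖α‖ ^ m
          * ((Real.sqrt m.factorial / (ℓ * Real.sqrt (2 * Real.pi)) * a⁻¹ ^ m) * KD) :=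
          mul_le_mul_of_nonneg_left (hΨle m) (by positivity)
      _ = E * (1 / (ℓ * Real.sqrt (2 * Real.pi))) * KD * r ^ m := by
          rw [hr, mul_pow]
          linear_combination (E * ‖α‖ ^ m * a⁻¹ ^ m * KD) * hcancel
  -- a.e. identification of partial sums
  have hS : ∀ n : ℕ, (⇑(∑ m ∈ Finset.range n, c m • Ψ m) : EuclideanSpace ℝ (Fin 2) → ℂ)
      =ᵐ[volume] fun x => ∑ m ∈ Finset.range n, c m * psiF ℓ m x := by
    intro n
    induction n with
    | zero =>
      simp only [Finset.range_zero, Finset.sum_empty]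
      filter_upwards [Lp.coeFn_zero (E := ℂ) (p := 2) (μ := volume)] with x hx
      simpa using hx
    | succ n ih =>
      rw [Finset.sum_range_succ]
      filter_upwards [Lp.coeFn_add (∑ m ∈ Finset.range n, c m • Ψ m) (c n • Ψ n),
        Lp.coeFn_smul (c n) (Ψ n), ih, hΨ n] with x hx1 hx2 hx3 hx4
      simp only [hx1, Pi.add_apply, hx3, hx2, Pi.smul_apply, hx4, smul_eq_mul,
        Finset.sum_range_succ]
  set F : ℕ → EuclideanSpace ℝ (Fin 2) → ℂ :=
    fun n x => (∑ m ∈ Finset.range n, c m * psiF ℓ m x) - chiF ℓ γ x with hF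
  have hFae : ∀ n, (⇑((∑ m ∈ Finset.range n, c m • Ψ m) - X γ)
      : EuclideanSpace ℝ (Fin 2) → ℂ) =ᵐ[volume] F n := by
    intro n
    filter_upwards [Lp.coeFn_sub (∑ m ∈ Finset.range n, c m • Ψ m) (X γ), hS n, hX γ]
      with x h1 h2 h3
    simp only [h1, Pi.sub_apply, h2, h3, hF]
  have hnorm_eq : ∀ n, ‖(∑ m ∈ Finset.range n, c m • Ψ m) - X γ‖
      = (eLpNorm (F n) 2 volume).toReal := fun n => by
    rw [Lp.norm_def, eLpNorm_congr_ae (hFae n)]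
  -- pointwise bound for each term of the series
  have hterm2 : ∀ (m : ℕ) x, ‖c m * psiF ℓ m x‖
      = E * (1 / (ℓ * Real.sqrt (2 * Real.pi)))
        * ((‖α‖ * (‖x‖ / (ℓ * Real.sqrt 2))) ^ m / (m.factorial : ℝ))
        * Real.exp (-‖x‖ ^ 2 / (4 * ℓ ^ 2)) := by
    intro m x
    rw [norm_mul, hcnorm m, hpsiabs m x, hsplit m, mul_pow ‖α‖]
    have hCreal : (1 / Real.sqrt m.factorial)
        * (1 / (ℓ * (Real.sqrt (2 * Real.pi) * Real.sqrt m.factorial)))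
        = 1 / (ℓ * Real.sqrt (2 * Real.pi)) * (1 / (m.factorial : ℝ)) := by
      rw [div_mul_div_comm, div_mul_div_comm, one_mul]
      congr 1
      linear_combination (ℓ * Real.sqrt (2 * Real.pi)) * hmulself m
    linear_combination (E * ‖α‖ ^ m * (‖x‖ / (ℓ * Real.sqrt 2)) ^ m
      * Real.exp (-‖x‖ ^ 2 / (4 * ℓ ^ 2))) * hCreal
  -- bound for partial sums
  have hsum_le : ∀ (n : ℕ) x, ‖∑ m ∈ Finset.range n, c m * psiF ℓ m x‖
      ≤ E * (1 / (ℓ * Real.sqrt (2 * Real.pi))) * D x := by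
    intro n x
    refine (norm_sum_le _ _).trans ?_
    have heq : ∑ m ∈ Finset.range n, ‖c m * psiF ℓ m x‖
        = E * (1 / (ℓ * Real.sqrt (2 * Real.pi))) * Real.exp (-‖x‖ ^ 2 / (4 * ℓ ^ 2))
          * ∑ m ∈ Finset.range n,
            ((‖α‖ * (‖x‖ / (ℓ * Real.sqrt 2))) ^ m / (m.factorial : ℝ)) := by
      rw [Finset.mul_sum]
      refine Finset.sum_congr rfl fun m _ => ?_
      rw [hterm2 m x]
      ring
    rw [heq]
    have hs : ∑ m ∈ Finset.range n, ((‖α‖ * (‖x‖ / (ℓ * Real.sqrt 2))) ^ m / (m.factorial : ℝ))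
        ≤ Real.exp (‖α‖ * (‖x‖ / (ℓ * Real.sqrt 2))) :=
      Real.sum_le_exp_of_nonneg (by positivity) n
    have h5 : Real.exp (‖α‖ * (‖x‖ / (ℓ * Real.sqrt 2)))
        ≤ Real.exp (a * (‖x‖ / (ℓ * Real.sqrt 2))) :=
      Real.exp_le_exp.2 (mul_le_mul_of_nonneg_right haα.le (by positivity))
    calc E * (1 / (ℓ * Real.sqrt (2 * Real.pi))) * Real.exp (-‖x‖ ^ 2 / (4 * ℓ ^ 2))
          * ∑ m ∈ Finset.range n, ((‖α‖ * (‖x‖ / (ℓ * Real.sqrt 2))) ^ m / (m.factorial : ℝ))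
        ≤ E * (1 / (ℓ * Real.sqrt (2 * Real.pi))) * Real.exp (-‖x‖ ^ 2 / (4 * ℓ ^ 2))
          * Real.exp (a * (‖x‖ / (ℓ * Real.sqrt 2))) :=
          mul_le_mul_of_nonneg_left (hs.trans h5) (by positivity)
      _ = E * (1 / (ℓ * Real.sqrt (2 * Real.pi)))
          * (Real.exp (a * (‖x‖ / (ℓ * Real.sqrt 2))) * Real.exp (-‖x‖ ^ 2 / (4 * ℓ ^ 2))) := by
          ring
      _ ≤ E * (1 / (ℓ * Real.sqrt (2 * Real.pi))) * D x :=
          mul_le_mul_of_nonneg_left (hexpD x) (by positivity)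
  -- bound for chi
  have hchi_le : ∀ x, ‖chiF ℓ γ x‖ ≤ (1 / (ℓ * Real.sqrt (2 * Real.pi))) * D x := by
    intro x
    rw [chiF, norm_mul, norm_mul]
    have h1 : ‖Complex.exp (-Complex.I * ((γ 0 * x 1 - γ 1 * x 0 : ℝ) : ℂ)
        / (2 * (ℓ : ℂ) ^ 2))‖ = 1 := by
      have harg : -Complex.I * ((γ 0 * x 1 - γ 1 * x 0 : ℝ) : ℂ) / (2 * (ℓ : ℂ) ^ 2)
          = (((-(γ 0 * x 1 - γ 1 * x 0) / (2 * ℓ ^ 2)) : ℝ) : ℂ) * Complex.I := by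
        have hl2 : ((ℓ : ℂ)) ^ 2 ≠ 0 := by
          exact pow_ne_zero 2 (by exact_mod_cast hℓ.ne')
        push_cast
        ring
      rw [harg, Complex.norm_exp_ofReal_mul_I]
    rw [h1, mul_one, Complex.norm_real, Complex.norm_real, Real.norm_eq_abs, Real.norm_eq_abs,
      abs_of_pos (by positivity), abs_of_pos (Real.exp_pos _)]
    refine mul_le_mul_of_nonneg_left ?_ (by positivity)
    refine Real.exp_le_exp.2 ?_
    have h3 : (‖x‖ - ‖γ‖) ^ 2 ≤ ‖x - γ‖ ^ 2 := by
      have h2 := abs_norm_sub_norm_le x γ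
      nlinarith [abs_nonneg (‖x‖ - ‖γ‖), sq_abs (‖x‖ - ‖γ‖), norm_nonneg (x - γ)]
    have hb2 : ‖γ‖ / (2 * ℓ ^ 2) ≤ b := by
      rw [hb]
      have : (0:ℝ) ≤ a / (ℓ * Real.sqrt 2) := by positivity
      linarith
    have h5 : -‖x - γ‖ ^ 2 ≤ -‖x‖ ^ 2 + 2 * ‖γ‖ * ‖x‖ := by nlinarith [h3]
    have key : -‖x - γ‖ ^ 2 / (4 * ℓ ^ 2)
        ≤ -‖x‖ ^ 2 / (4 * ℓ ^ 2) + (‖γ‖ / (2 * ℓ ^ 2)) * ‖x‖ := by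
      calc -‖x - γ‖ ^ 2 / (4 * ℓ ^ 2) ≤ (-‖x‖ ^ 2 + 2 * ‖γ‖ * ‖x‖) / (4 * ℓ ^ 2) := by
            gcongr
        _ = -‖x‖ ^ 2 / (4 * ℓ ^ 2) + (‖γ‖ / (2 * ℓ ^ 2)) * ‖x‖ := by ring
    have h6 : -‖x‖ ^ 2 / (4 * ℓ ^ 2) + ‖γ‖ / (2 * ℓ ^ 2) * ‖x‖
        ≤ -‖x‖ ^ 2 / (4 * ℓ ^ 2) + b * ‖x‖ :=
      add_le_add le_rfl (mul_le_mul_of_nonneg_right hb2 (norm_nonneg x))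
    refine key.trans (h6.trans (le_of_eq (by ring)))
  -- global pointwise bound
  set C2 : ℝ := E * (1 / (ℓ * Real.sqrt (2 * Real.pi))) + 1 / (ℓ * Real.sqrt (2 * Real.pi))
    with hC2
  have hC20 : 0 ≤ C2 := by positivity
  have hFle : ∀ (n : ℕ) x, ‖F n x‖ ≤ C2 * D x := by
    intro n x
    refine (norm_sub_le _ _).trans ?_
    calc ‖∑ m ∈ Finset.range n, c m * psiF ℓ m x‖ + ‖chiF ℓ γ x‖
        ≤ E * (1 / (ℓ * Real.sqrt (2 * Real.pi))) * D x
          + (1 / (ℓ * Real.sqrt (2 * Real.pi))) * D x := add_le_add (hsum_le n x) (hchi_le x)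
      _ = C2 * D x := by rw [hC2]; ring
  -- integrability of the square of the bound
  have hC2D : MemLp (fun x => C2 * D x) 2 volume := hDmem.const_mul C2
  have hint2 : Integrable (fun x => (C2 * D x) ^ 2) volume := hC2D.integrable_sq
  have hbound_fin : ∫⁻ x, ENNReal.ofReal ((C2 * D x) ^ 2) ∂volume ≠ ⊤ :=
    hint2.lintegral_lt_top.ne
  have hFmeas : ∀ n, AEStronglyMeasurable (F n) volume :=
    fun n => (Lp.aestronglyMeasurable _).congr (hFae n)
  -- pointwise convergence
  have hlim : ∀ x, Tendsto (fun n => ((‖F n x‖₊ : ℝ≥0∞)) ^ (2:ℝ)) atTop (𝓝 0) := by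
    intro x
    have h0 : Tendsto (fun n => F n x) atTop (𝓝 0) := by
      have h1 := (key_hasSum ℓ hℓ γ x).tendsto_sum_nat
      have h2 := h1.sub (tendsto_const_nhds (x := chiF ℓ γ x))
      rw [sub_self] at h2
      exact h2
    have h3 : Tendsto (fun n => ((‖F n x‖₊ : ℝ≥0∞))) atTop (𝓝 0) := by
      have h4 : Tendsto (fun n => ‖F n x‖) atTop (𝓝 0) := by
        simpa using h0.norm
      have h5 := (ENNReal.continuous_ofReal.tendsto 0).comp h4
      simp only [ENNReal.ofReal_zero] at h5
      refine h5.congr fun n => ?_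
      rw [Function.comp_apply, ofReal_norm, enorm_eq_nnnorm]
    have h6 := ((ENNReal.continuous_rpow_const (y := (2:ℝ))).tendsto 0).comp h3
    simp only [Function.comp_def] at h6
    simpa [ENNReal.zero_rpow_of_pos] using h6
  -- dominated convergence
  have hL : Tendsto (fun n => ∫⁻ x, ((‖F n x‖₊ : ℝ≥0∞)) ^ (2:ℝ) ∂volume) atTop (𝓝 0) := by
    have hdct := tendsto_lintegral_of_dominated_convergence' (μ := volume)
      (F := fun n x => ((‖F n x‖₊ : ℝ≥0∞)) ^ (2:ℝ)) (f := fun _ => 0)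
      (bound := fun x => ENNReal.ofReal ((C2 * D x) ^ 2))
      (fun n => (ENNReal.continuous_rpow_const.measurable.comp_aemeasurable
        (hFmeas n).enorm))
      (fun n => Filter.Eventually.of_forall fun x => ?_)
      hbound_fin
      (Filter.Eventually.of_forall hlim)
    · simpa using hdct
    · show ((‖F n x‖₊ : ℝ≥0∞)) ^ (2:ℝ) ≤ ENNReal.ofReal ((C2 * D x) ^ 2)
      rw [← enorm_eq_nnnorm, ← ofReal_norm,
        ENNReal.ofReal_rpow_of_nonneg (norm_nonneg _) (by norm_num), Real.rpow_two]
      refine ENNReal.ofReal_le_ofReal ?_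
      have := hFle n x
      have h7 : (0:ℝ) ≤ ‖F n x‖ := norm_nonneg _
      nlinarith [hD0 x, hC20]
  -- convergence of eLpNorms
  have heLp : Tendsto (fun n => eLpNorm (F n) 2 volume) atTop (𝓝 0) := by
    have heq : (fun n => eLpNorm (F n) 2 volume)
        = fun n => (∫⁻ x, ((‖F n x‖₊ : ℝ≥0∞)) ^ (2:ℝ) ∂volume) ^ (1/(2:ℝ)) := by
      funext n
      rw [eLpNorm_eq_lintegral_rpow_enorm_toReal (by norm_num) (by norm_num)]
      norm_num
      simp only [enorm_eq_nnnorm]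
    rw [heq]
    have hcont : Tendsto (fun y : ℝ≥0∞ => y ^ (1/(2:ℝ))) (𝓝 0) (𝓝 0) := by
      have h8 := (ENNReal.continuous_rpow_const (y := 1/(2:ℝ))).tendsto 0
      simpa [ENNReal.zero_rpow_of_pos] using h8
    exact hcont.comp hL
  -- conclusion
  refine (hasSum_iff_tendsto_nat_of_summable_norm hsm).2 ?_
  rw [tendsto_iff_norm_sub_tendsto_zero]
  have hfun : (fun n => ‖(∑ m ∈ Finset.range n, c m • Ψ m) - X γ‖)
      = fun n => (eLpNorm (F n) 2 volume).toReal := funext hnorm_eq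
  rw [hfun]
  have h9 := (ENNReal.tendsto_toReal (a := 0) (by simp)).comp heLp
  simpa [Function.comp_def] using h9
end
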